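/- arXiv:2309.08445 — 6 statements merged into one kernel-verified Lean document; each statement's English description precedes it below -/
import Mathlib

section
/- Let 0 ≤ μ < 1/2 and x > 0. Then M(1/2+μ, 1+2μ, x) ≥ e^{x/2} and M_{0,μ}(x) > x^{1/2+μ}; moreover the function x ↦ M_{0,μ}(x) is monotone increasing on (0,∞). -/
open Complex

/-- The Kummer confluent hypergeometric series `M(a,b,ζ) = ∑ (a)_s/((b)_s s!) ζ^s`. -/
noncomputable def kummerM (a b ζ : ℂ) : ℂ :=
  ∑' s : ℕ, ((ascPochhammer ℂ s).eval a / ((ascPochhammer ℂ s).eval b * (s.factorial : ℂ))) * ζ ^ s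

/-- The Whittaker function `M_{0,γ}(ζ) = e^{-ζ/2} ζ^{1/2+γ} M(1/2+γ, 1+2γ, ζ)`,
with the principal branch of the complex power. -/
noncomputable def whittakerM (γ ζ : ℂ) : ℂ :=
  Complex.exp (-ζ / 2) * ζ ^ ((1 : ℂ) / 2 + γ) * kummerM (1 / 2 + γ) (1 + 2 * γ) ζ

open Polynomial

namespace WhitAux

noncomputable def cc (ν : ℝ) (s : ℕ) : ℝ :=
  (ascPochhammer ℝ s).eval ν / ((ascPochhammer ℝ s).eval (2 * ν) * (s.factorial : ℝ))

lemma poch_pos {ν : ℝ} (hν : 0 < ν) (s : ℕ) : 0 < (ascPochhammer ℝ s).eval ν := by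
  induction s with
  | zero => simp
  | succ n ih =>
    rw [ascPochhammer_succ_eval]
    exact mul_pos ih (by positivity)

lemma poch_le {ν : ℝ} (hν : 0 < ν) (s : ℕ) :
    (ascPochhammer ℝ s).eval ν ≤ (ascPochhammer ℝ s).eval (2 * ν) := by
  induction s with
  | zero => simp
  | succ n ih =>
    rw [ascPochhammer_succ_eval, ascPochhammer_succ_eval]
    have h1 := poch_pos hν n
    have h2 : (0:ℝ) ≤ ν + n := by positivity
    have h3 : ν + n ≤ 2 * ν + n := by linarith
    exact mul_le_mul ih h3 h2 (poch_pos (by linarith : (0:ℝ) < 2*ν) n).le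

lemma cc_pos {ν : ℝ} (hν : 0 < ν) (s : ℕ) : 0 < cc ν s := by
  have := poch_pos hν s
  have h2 : 0 < (ascPochhammer ℝ s).eval (2 * ν) := poch_pos (by linarith) s
  have h3 : (0:ℝ) < s.factorial := by positivity
  exact div_pos this (by positivity)

lemma cc_zero (ν : ℝ) : cc ν 0 = 1 := by simp [cc]

lemma cc_succ {ν : ℝ} (hν : 0 < ν) (s : ℕ) :
    cc ν (s + 1) = cc ν s * ((ν + s) / ((2 * ν + s) * (s + 1))) := by
  have h1 := (poch_pos hν s).ne'
  have h2 := (poch_pos (show (0:ℝ) < 2 * ν by linarith) s).ne'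
  have h3 : ((s.factorial : ℝ)) ≠ 0 := by positivity
  have h4 : ((s:ℝ) + 1) ≠ 0 := by positivity
  rw [cc, cc, ascPochhammer_succ_eval, ascPochhammer_succ_eval, Nat.factorial_succ]
  push_cast
  field_simp

lemma cc_le {ν : ℝ} (hν : 0 < ν) (s : ℕ) : cc ν s ≤ 1 / s.factorial := by
  have h2 : 0 < (ascPochhammer ℝ s).eval (2 * ν) := poch_pos (by linarith) s
  have h3 : (0:ℝ) < s.factorial := by positivity
  rw [cc, div_le_div_iff₀ (by positivity) h3]
  have := poch_le hν s
  calc (ascPochhammer ℝ s).eval ν * (s.factorial:ℝ)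
      ≤ (ascPochhammer ℝ s).eval (2*ν) * (s.factorial:ℝ) := by
        exact mul_le_mul_of_nonneg_right this h3.le
    _ = 1 * ((ascPochhammer ℝ s).eval (2*ν) * (s.factorial:ℝ)) := by ring

lemma cc_half_le {ν : ℝ} (hν : 0 < ν) (s : ℕ) : (1/2)^s / s.factorial ≤ cc ν s := by
  induction s with
  | zero => simp [cc_zero]
  | succ n ih =>
    rw [cc_succ hν]
    have hkey : (1/2 : ℝ) / (n+1) ≤ (ν + n) / ((2 * ν + n) * (n + 1)) := by
      rw [div_le_div_iff₀ (by positivity) (by positivity)]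
      nlinarith [hν, (Nat.cast_nonneg n : (0:ℝ) ≤ n)]
    have hfp : (0:ℝ) < (1/2)^n / n.factorial := by positivity
    calc (1/2:ℝ)^(n+1) / (n+1).factorial
        = ((1/2)^n / n.factorial) * ((1/2) / (n+1)) := by
          rw [Nat.factorial_succ, pow_succ]
          have : ((n.factorial : ℝ)) ≠ 0 := by positivity
          push_cast
          field_simp
      _ ≤ cc ν n * ((ν + n) / ((2 * ν + n) * (n + 1))) := by
          apply mul_le_mul ih hkey (by positivity) (cc_pos hν n).le

lemma cc_two_lt {ν : ℝ} (hν : 0 < ν) : (1/2:ℝ)^2 / (Nat.factorial 2) < cc ν 2 := by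
  have h1 : cc ν 2 = (ν * (ν+1)) / ((2*ν * (2*ν+1)) * 2) := by
    rw [show (2:ℕ) = 0 + 1 + 1 from rfl, cc_succ hν, cc_succ hν, cc_zero]
    have h0 := hν.ne'
    push_cast
    field_simp
    ring
  rw [h1]
  have : (0:ℝ) < 2*ν * (2*ν+1) * 2 := by positivity
  rw [div_lt_div_iff₀ (by norm_num) this]
  norm_num [Nat.factorial]
  nlinarith

lemma cc_key {ν : ℝ} (hν : 0 < ν) (s : ℕ) :
    cc ν s / 2 ≤ cc ν (s + 1) * (ν + s + 1) := by
  rw [cc_succ hν]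
  have hcp := (cc_pos hν s)
  have hkey : (1/2 : ℝ) ≤ (ν + s) / ((2 * ν + s) * (s + 1)) * (ν + s + 1) := by
    rw [div_mul_eq_mul_div, le_div_iff₀ (by positivity)]
    nlinarith [(Nat.cast_nonneg s : (0:ℝ) ≤ s)]
  calc cc ν s / 2 = cc ν s * (1/2) := by ring
    _ ≤ cc ν s * ((ν + s) / ((2 * ν + s) * (s + 1)) * (ν + s + 1)) :=
        mul_le_mul_of_nonneg_left hkey hcp.le
    _ = cc ν s * ((ν + s) / ((2 * ν + s) * (s + 1))) * (ν + s + 1) := by ring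


noncomputable def SS (ν x : ℝ) : ℝ := ∑' s : ℕ, cc ν s * x ^ s
noncomputable def TT (ν x : ℝ) : ℝ := ∑' s : ℕ, cc ν s * (s * x ^ (s - 1))

lemma cc_abs_bound {ν : ℝ} (hν : 0 < ν) (x : ℝ) (s : ℕ) :
    ‖cc ν s * x ^ s‖ ≤ |x| ^ s / s.factorial := by
  rw [norm_mul, norm_pow, Real.norm_eq_abs, Real.norm_eq_abs,
    abs_of_pos (cc_pos hν s)]
  calc cc ν s * |x| ^ s ≤ (1 / s.factorial) * |x| ^ s :=
        mul_le_mul_of_nonneg_right (cc_le hν s) (by positivity)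
    _ = |x| ^ s / s.factorial := by ring

lemma summable_A {ν : ℝ} (hν : 0 < ν) (x : ℝ) :
    Summable (fun s : ℕ => cc ν s * x ^ s) :=
  Summable.of_norm_bounded (Real.summable_pow_div_factorial |x|) (cc_abs_bound hν x)

lemma nat_le_two_pow (s : ℕ) : (s : ℝ) ≤ 2 ^ s := by
  exact_mod_cast (Nat.lt_two_pow_self (n := s)).le

lemma summable_C {ν : ℝ} (hν : 0 < ν) (x : ℝ) :
    Summable (fun s : ℕ => cc ν s * (ν + s) * x ^ s) := by
  have hb : Summable (fun s : ℕ => (ν + 1) * ((2 * |x|) ^ s / s.factorial)) :=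
    (Real.summable_pow_div_factorial (2 * |x|)).mul_left (ν + 1)
  refine Summable.of_norm_bounded hb fun s => ?_
  rw [norm_mul, norm_mul, Real.norm_eq_abs, Real.norm_eq_abs, Real.norm_eq_abs,
    abs_of_pos (cc_pos hν s), _root_.abs_pow]
  have h1 : |(ν + s : ℝ)| ≤ (ν + 1) * 2 ^ s := by
    rw [abs_of_pos (by positivity)]
    have := nat_le_two_pow s
    have h2 : (1:ℝ) ≤ 2 ^ s := one_le_pow₀ (by norm_num)
    nlinarith [hν]
  calc cc ν s * |ν + (s:ℝ)| * |x| ^ s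
      ≤ (1 / s.factorial) * ((ν + 1) * 2 ^ s) * |x| ^ s := by
        apply mul_le_mul_of_nonneg_right _ (by positivity)
        exact mul_le_mul (cc_le hν s) h1 (abs_nonneg _) (by positivity)
    _ = (ν + 1) * ((2 * |x|) ^ s / s.factorial) := by
        rw [mul_pow]; ring

lemma hasDerivAt_SS {ν : ℝ} (hν : 0 < ν) {x : ℝ} (hx : 0 < x) :
    HasDerivAt (SS ν) (TT ν x) x := by
  set R := x + 1 with hR
  have hR1 : (1:ℝ) ≤ R := by simp [hR]; linarith
  have hu : Summable (fun s : ℕ => (2 * R) ^ s / s.factorial) :=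
    Real.summable_pow_div_factorial (2 * R)
  apply hasDerivAt_of_tendstoUniformlyOn (l := Filter.atTop) (s := Set.Ioo 0 R) isOpen_Ioo
    (f := fun (N : ℕ) (t : ℝ) => ∑ s ∈ Finset.range N, cc ν s * t ^ s)
    (f' := fun (N : ℕ) (t : ℝ) => ∑ s ∈ Finset.range N, cc ν s * (s * t ^ (s - 1)))
  · apply tendstoUniformlyOn_tsum_nat hu
    intro s t ht
    obtain ⟨ht0, htR⟩ := ht
    rw [norm_mul, Real.norm_eq_abs, Real.norm_eq_abs, abs_of_pos (cc_pos hν s)]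
    have h1 : |(s : ℝ) * t ^ (s - 1)| ≤ 2 ^ s * R ^ s := by
      rw [abs_mul, _root_.abs_of_nonneg (Nat.cast_nonneg s : (0:ℝ) ≤ s), _root_.abs_pow,
        abs_of_pos ht0]
      have h2 : t ^ (s-1) ≤ R ^ (s-1) := pow_le_pow_left₀ ht0.le htR.le _
      have h3 : R ^ (s-1) ≤ R ^ s := pow_le_pow_right₀ hR1 (Nat.sub_le s 1)
      have := nat_le_two_pow s
      have h4 : (0:ℝ) ≤ t ^ (s-1) := by positivity
      nlinarith
    calc cc ν s * |(s:ℝ) * t ^ (s-1)| ≤ (1 / s.factorial) * (2 ^ s * R ^ s) :=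
          mul_le_mul (cc_le hν s) h1 (abs_nonneg _) (by positivity)
      _ = (2 * R) ^ s / s.factorial := by rw [mul_pow]; ring
  · filter_upwards with N t _
    apply HasDerivAt.fun_sum
    intro s _
    exact (hasDerivAt_pow s t).const_mul (cc ν s)
  · intro t _
    exact (summable_A hν t).hasSum.tendsto_sum_nat
  · exact ⟨hx, by simp [hR]⟩

lemma G_pos {ν : ℝ} (hν : 0 < ν) {x : ℝ} (hx : 0 < x) :
    0 < ν * SS ν x + x * TT ν x - x / 2 * SS ν x := by
  have hA := summable_A hν x
  have hC := summable_C hν x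
  have hterm : ∀ s : ℕ, ν * (cc ν s * x ^ s) + x * (cc ν s * (s * x ^ (s-1)))
      = cc ν s * (ν + s) * x ^ s := by
    intro s
    cases s with
    | zero => simp [mul_comm]
    | succ n =>
      simp only [Nat.add_sub_cancel]
      rw [pow_succ]
      push_cast
      ring
  have hxT : Summable (fun s : ℕ => x * (cc ν s * (s * x ^ (s-1)))) := by
    apply (hC.sub (hA.mul_left ν)).congr
    intro s
    rw [← hterm s]; ring
  have hU : ν * SS ν x + x * TT ν x = ∑' s : ℕ, cc ν s * (ν + s) * x ^ s := by
    rw [SS, TT, ← tsum_mul_left, ← tsum_mul_left, ← Summable.tsum_add (hA.mul_left ν) hxT]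
    exact tsum_congr hterm
  have hShift : (∑' s : ℕ, cc ν s * (ν + s) * x ^ s)
      = ν + ∑' s : ℕ, cc ν (s+1) * (ν + s + 1) * x ^ (s+1) := by
    rw [Summable.tsum_eq_zero_add hC]
    congr 1
    · simp [cc_zero]
    · apply tsum_congr; intro s; push_cast; ring
  have hHalfS : x / 2 * SS ν x = ∑' s : ℕ, cc ν s / 2 * x ^ (s+1) := by
    rw [SS, ← tsum_mul_left]
    apply tsum_congr; intro s; rw [pow_succ]; ring
  have hle : (∑' s : ℕ, cc ν s / 2 * x ^ (s+1))
      ≤ ∑' s : ℕ, cc ν (s+1) * (ν + s + 1) * x ^ (s+1) := by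
    apply Summable.tsum_le_tsum _ _ _
    · intro s
      exact mul_le_mul_of_nonneg_right (cc_key hν s) (by positivity)
    · apply (hA.mul_left (x/2)).congr
      intro s; rw [pow_succ]; ring
    · have := (summable_nat_add_iff (f := fun s : ℕ => cc ν s * (ν + s) * x ^ s) 1).2 hC
      apply this.congr
      intro s; push_cast; ring
  have : ν * SS ν x + x * TT ν x - x / 2 * SS ν x ≥ ν := by
    rw [hU, hShift, hHalfS]; linarith
  linarith


lemma poch_ofReal (s : ℕ) (r : ℝ) :
    (ascPochhammer ℂ s).eval (r : ℂ) = (((ascPochhammer ℝ s).eval r : ℝ) : ℂ) := by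
  have h := eval₂_at_apply (p := ascPochhammer ℝ s) Complex.ofRealHom r
  rw [← ascPochhammer_map Complex.ofRealHom s, eval_map]
  exact h

lemma kummer_real (ν x : ℝ) :
    kummerM (ν : ℂ) (((2 * ν : ℝ)) : ℂ) (x : ℂ) = ((SS ν x : ℝ) : ℂ) := by
  rw [kummerM, SS, Complex.ofReal_tsum]
  apply tsum_congr
  intro s
  rw [poch_ofReal, poch_ofReal, cc]
  push_cast
  ring

lemma exp_lt_SS {ν : ℝ} (hν : 0 < ν) {x : ℝ} (hx : 0 < x) :
    Real.exp (x / 2) < SS ν x := by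
  have hexp : Real.exp (x / 2) = ∑' s : ℕ, (x/2) ^ s / s.factorial := by
    rw [Real.exp_eq_exp_ℝ, NormedSpace.exp_eq_tsum_div]
  rw [hexp, SS]
  apply Summable.tsum_lt_tsum_of_nonneg (i := 2)
  · intro s; positivity
  · intro s
    have h1 : (x/2 : ℝ)^s / s.factorial = ((1/2)^s / s.factorial) * x ^ s := by
      rw [div_pow, div_pow, one_pow]; ring
    rw [h1]
    exact mul_le_mul_of_nonneg_right (cc_half_le hν s) (by positivity)
  · have h1 : (x/2 : ℝ)^2 / (Nat.factorial 2) = ((1/2)^2 / (Nat.factorial 2)) * x ^ 2 := by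
      rw [div_pow]; ring
    rw [h1]
    exact mul_lt_mul_of_pos_right (cc_two_lt hν) (by positivity)
  · exact summable_A hν x

noncomputable def gg (ν : ℝ) : ℝ → ℝ := fun x => Real.exp (-(x/2)) * (x ^ ν * SS ν x)

lemma hasDerivAt_gg {ν : ℝ} (hν : 0 < ν) {x : ℝ} (hx : 0 < x) :
    HasDerivAt (gg ν)
      (Real.exp (-(x/2)) * x ^ (ν - 1) *
        (ν * SS ν x + x * TT ν x - x / 2 * SS ν x)) x := by
  have he : HasDerivAt (fun y : ℝ => Real.exp (-(y/2))) (Real.exp (-(x/2)) * (-(1/2))) x := by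
    have : HasDerivAt (fun y : ℝ => -(y/2)) (-(1/2)) x := ((hasDerivAt_id x).div_const 2).neg
    exact this.exp
  have hp : HasDerivAt (fun y : ℝ => y ^ ν) (ν * x ^ (ν - 1)) x :=
    Real.hasDerivAt_rpow_const (Or.inl hx.ne')
  have hs := hasDerivAt_SS hν hx
  have hcomb := he.mul (hp.mul hs)
  have hpow : x ^ ν = x ^ (ν - 1) * x := by
    rw [← Real.rpow_add_one hx.ne' (ν - 1), sub_add_cancel]
  have heq : Real.exp (-(x/2)) * (-(1/2)) * (x ^ ν * SS ν x) +
      Real.exp (-(x/2)) * (ν * x ^ (ν-1) * SS ν x + x ^ ν * TT ν x)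
      = Real.exp (-(x/2)) * x ^ (ν - 1) *
        (ν * SS ν x + x * TT ν x - x / 2 * SS ν x) := by
    rw [hpow]; ring
  rw [← heq]
  exact hcomb

lemma strictMonoOn_gg {ν : ℝ} (hν : 0 < ν) :
    StrictMonoOn (gg ν) (Set.Ioi 0) := by
  apply strictMonoOn_of_deriv_pos (convex_Ioi 0)
  · intro y hy
    exact (hasDerivAt_gg hν hy).continuousAt.continuousWithinAt
  · intro y hy
    rw [interior_Ioi] at hy
    rw [(hasDerivAt_gg hν hy).deriv]
    have h1 : (0:ℝ) < Real.exp (-(y/2)) := Real.exp_pos _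
    have h2 : (0:ℝ) < y ^ (ν - 1) := Real.rpow_pos_of_pos hy _
    have h3 := G_pos hν hy
    positivity

lemma whittaker_eq (μ : ℝ) (hμ0 : 0 ≤ μ) {x : ℝ} (hx : 0 < x) :
    whittakerM (μ : ℂ) (x : ℂ) = ((gg (1/2 + μ) x : ℝ) : ℂ) := by
  set ν : ℝ := 1/2 + μ with hνdef
  have hab : (1/2 + (μ:ℂ)) = ((ν : ℝ) : ℂ) := by push_cast [hνdef]; ring
  have hb : (1 + 2 * (μ:ℂ)) = (((2 * ν : ℝ)) : ℂ) := by push_cast [hνdef]; ring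
  have hexp : Complex.exp (-(x:ℂ) / 2) = ((Real.exp (-(x/2)) : ℝ) : ℂ) := by
    rw [show (-(x:ℂ)/2) = ((-(x/2) : ℝ) : ℂ) from by push_cast; ring, Complex.ofReal_exp]
  have hpowc : ((x:ℂ)) ^ ((1:ℂ)/2 + (μ:ℂ)) = ((x ^ ν : ℝ) : ℂ) := by
    rw [show ((1:ℂ)/2 + (μ:ℂ)) = ((ν : ℝ) : ℂ) from by push_cast [hνdef]; ring]
    exact (Complex.ofReal_cpow hx.le ν).symm
  rw [whittakerM, hpowc, hexp]
  rw [show (1:ℂ)/2 + (μ:ℂ) = ((ν : ℝ) : ℂ) from by push_cast [hνdef]; ring,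
    show (1 + 2 * (μ:ℂ)) = (((2 * ν : ℝ)) : ℂ) from hb, kummer_real]
  rw [gg]
  push_cast
  ring

end WhitAux

open WhitAux in
/-- For `0 ≤ μ < 1/2` and `x > 0`: `M(1/2+μ, 1+2μ, x) ≥ e^{x/2}` (the value is real),
`M_{0,μ}(x) > x^{1/2+μ}` (the value is real), and `x ↦ M_{0,μ}(x)` is monotone increasing
on `(0,∞)`. -/
theorem stmt0 (μ : ℝ) (hμ0 : 0 ≤ μ) (hμ : μ < 1 / 2) :
    (∀ x : ℝ, 0 < x →
      (kummerM (1 / 2 + (μ : ℂ)) (1 + 2 * (μ : ℂ)) (x : ℂ)).im = 0 ∧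
      Real.exp (x / 2) ≤ (kummerM (1 / 2 + (μ : ℂ)) (1 + 2 * (μ : ℂ)) (x : ℂ)).re ∧
      (whittakerM (μ : ℂ) (x : ℂ)).im = 0 ∧
      x ^ ((1 : ℝ) / 2 + μ) < (whittakerM (μ : ℂ) (x : ℂ)).re) ∧
    StrictMonoOn (fun x : ℝ => (whittakerM (μ : ℂ) (x : ℂ)).re) (Set.Ioi 0) := by
  set ν : ℝ := 1 / 2 + μ with hνdef
  have hν : 0 < ν := by rw [hνdef]; linarith
  have hkum : ∀ x : ℝ, kummerM (1 / 2 + (μ : ℂ)) (1 + 2 * (μ : ℂ)) (x : ℂ)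
      = ((SS ν x : ℝ) : ℂ) := by
    intro x
    rw [show (1/2 + (μ:ℂ)) = ((ν : ℝ) : ℂ) from by push_cast [hνdef]; ring,
      show (1 + 2 * (μ:ℂ)) = (((2 * ν : ℝ)) : ℂ) from by push_cast [hνdef]; ring]
    exact kummer_real ν x
  have hwhit : ∀ x : ℝ, 0 < x → whittakerM (μ : ℂ) (x : ℂ) = ((gg ν x : ℝ) : ℂ) :=
    fun x hx => whittaker_eq μ hμ0 hx
  constructor
  · intro x hx
    refine ⟨?_, ?_, ?_, ?_⟩
    · rw [hkum x]; simp
    · rw [hkum x]; simpa using (exp_lt_SS hν hx).le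
    · rw [hwhit x hx]; simp
    · rw [hwhit x hx]
      simp only [Complex.ofReal_re]
      have h1 : Real.exp (x/2) < SS ν x := exp_lt_SS hν hx
      have h2 : (0:ℝ) < x ^ ν := Real.rpow_pos_of_pos hx ν
      have h3 : (0:ℝ) < Real.exp (-(x/2)) := Real.exp_pos _
      have key : x ^ ν < Real.exp (-(x/2)) * (x ^ ν * SS ν x) := by
        have h4 := mul_lt_mul_of_pos_left h1 (mul_pos h3 h2)
        have h5 : Real.exp (-(x/2)) * x ^ ν * Real.exp (x/2) = x ^ ν := by
          rw [mul_comm (Real.exp (-(x/2))) (x ^ ν), mul_assoc,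
            ← Real.exp_add]
          norm_num
        calc x ^ ν = Real.exp (-(x/2)) * x ^ ν * Real.exp (x/2) := h5.symm
          _ < Real.exp (-(x/2)) * x ^ ν * SS ν x := h4
          _ = Real.exp (-(x/2)) * (x ^ ν * SS ν x) := by ring
      exact key
  · intro a ha b hb hab
    simp only
    rw [hwhit a ha, hwhit b hb]
    simpa using strictMonoOn_gg hν ha hb hab
end

section
/- Assume β² < 1/4, let m ≥ 1 be an integer, y₀ ≤ 0 and ε ∈ (0,1]. Let φ : [0,1] → ℂ be C² with φ(0) = φ(1) = 0 and φ''(y) − m²φ(y) + β²φ(y)/(y−y₀+iε)² = F(y) on (0,1), with F continuous. Then (1−4β²)·‖φ'‖²_{L²(0,1)} + m²·‖φ‖²_{L²(0,1)} ≤ C·m^{−2}·‖F‖²_{L²(0,1)} for a constant C depending only on β, and moreover 0 ≤ ∫₀¹ ε(y−y₀)/((y−y₀)²+ε²)² · |φ(y)|² dy ≤ 2·‖φ‖_{L²(0,1)}·‖F‖_{L²(0,1)}. -/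
open MeasureTheory Set
set_option maxHeartbeats 1000000

lemma myFTC {E : Type*} [NormedAddCommGroup E] [NormedSpace ℝ E] [CompleteSpace E]
    (g g' : ℝ → E) (hc : ContinuousOn g (Icc 0 1))
    (hd : ∀ y ∈ Ioo (0:ℝ) 1, HasDerivAt g (g' y) y)
    (hi : IntegrableOn g' (Ioo 0 1)) :
    ∫ y in Ioo (0:ℝ) 1, g' y = g 1 - g 0 := by
  have h01 : (0:ℝ) ≤ 1 := zero_le_one
  have hint : IntervalIntegrable g' volume 0 1 := by
    rw [intervalIntegrable_iff_integrableOn_Ioo_of_le h01]; exact hi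
  have := intervalIntegral.integral_eq_sub_of_hasDeriv_right_of_le h01 hc
    (fun y hy => (hd y hy).hasDerivWithinAt) hint
  rw [intervalIntegral.integral_of_le h01, integral_Ioc_eq_integral_Ioo] at this
  exact this

lemma myCS (f g : ℝ → ℝ) (hf : IntegrableOn (fun y => f y ^ 2) (Ioo 0 1))
    (hg : IntegrableOn (fun y => g y ^ 2) (Ioo 0 1))
    (hfg : IntegrableOn (fun y => f y * g y) (Ioo 0 1)) :
    (∫ y in Ioo (0:ℝ) 1, f y * g y) ^ 2 ≤
      (∫ y in Ioo (0:ℝ) 1, f y ^ 2) * ∫ y in Ioo (0:ℝ) 1, g y ^ 2 := by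
  set a := ∫ y in Ioo (0:ℝ) 1, f y ^ 2
  set b := ∫ y in Ioo (0:ℝ) 1, f y * g y
  set c := ∫ y in Ioo (0:ℝ) 1, g y ^ 2
  have key : ∀ t : ℝ, 0 ≤ a * t ^ 2 + (2 * b) * t + c := by
    intro t
    have h1 : ∀ y, 0 ≤ (t * f y + g y) ^ 2 := fun y => sq_nonneg _
    have h2 : (0:ℝ) ≤ ∫ y in Ioo (0:ℝ) 1, (t * f y + g y) ^ 2 :=
      integral_nonneg (fun y => h1 y)
    have h3 : ∀ y, (t * f y + g y) ^ 2
        = t ^ 2 * f y ^ 2 + (2 * t) * (f y * g y) + g y ^ 2 := by intro y; ring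
    rw [integral_congr_ae (Filter.Eventually.of_forall h3)] at h2
    have e1 : ∫ y in Ioo (0:ℝ) 1, (t ^ 2 * f y ^ 2 + (2 * t) * (f y * g y) + g y ^ 2)
        = t ^ 2 * a + (2 * t) * b + c := by
      have hadd : IntegrableOn (fun y => t ^ 2 * f y ^ 2 + (2 * t) * (f y * g y)) (Ioo 0 1) :=
        (hf.const_mul _).add (hfg.const_mul _)
      rw [integral_add hadd hg, integral_add (hf.const_mul _) (hfg.const_mul _),
        integral_const_mul, integral_const_mul]
    rw [e1] at h2
    nlinarith
  have key2 : ∀ t : ℝ, 0 ≤ a * (t * t) + (2 * b) * t + c := by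
    intro t; have := key t; nlinarith
  have := discrim_le_zero key2
  rw [discrim] at this
  nlinarith

lemma lingrow (φ φ' : ℝ → ℂ) (hφ'c : ContinuousOn φ' (Icc 0 1))
    (hder : ∀ y ∈ Ioo (0:ℝ) 1, HasDerivAt φ (φ' y) y)
    (hφc : ContinuousOn φ (Icc 0 1)) (h0 : φ 0 = 0) :
    ∃ M : ℝ, 0 ≤ M ∧ ∀ y ∈ Icc (0:ℝ) 1, ‖φ y‖ ≤ M * y := by
  obtain ⟨M, hM⟩ := isCompact_Icc.exists_bound_of_continuousOn hφ'c
  refine ⟨max M 0, le_max_right _ _, fun y hy => ?_⟩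
  rcases eq_or_lt_of_le hy.1 with h | h
  · simp [← h, h0]
  · have hftc : ∫ t in (0:ℝ)..y, φ' t = φ y - φ 0 := by
      apply intervalIntegral.integral_eq_sub_of_hasDeriv_right_of_le hy.1
        (hφc.mono (Icc_subset_Icc le_rfl hy.2))
        (fun t ht => (hder t ⟨ht.1, lt_of_lt_of_le ht.2 hy.2⟩).hasDerivWithinAt)
      exact (hφ'c.mono (Icc_subset_Icc le_rfl hy.2)).intervalIntegrable_of_Icc hy.1
    have hb : ‖∫ t in (0:ℝ)..y, φ' t‖ ≤ max M 0 * |y - 0| := by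
      apply intervalIntegral.norm_integral_le_of_norm_le_const
      intro t ht
      rw [uIoc_of_le hy.1] at ht
      exact le_trans (hM t ⟨ht.1.le, le_trans ht.2 hy.2⟩) (le_max_left _ _)
    rw [hftc, h0, sub_zero] at hb
    calc ‖φ y‖ = ‖φ y‖ := rfl
      _ ≤ max M 0 * |y - 0| := hb
      _ = max M 0 * y := by rw [sub_zero, _root_.abs_of_nonneg hy.1]

-- integrable of bounded on Ioo 0 1
lemma intbdd (h : ℝ → ℝ) (hc : ContinuousOn h (Ioo 0 1)) (c : ℝ)
    (hb : ∀ y ∈ Ioo (0:ℝ) 1, |h y| ≤ c) : IntegrableOn h (Ioo 0 1) := by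
  apply Integrable.mono' (g := fun _ => c)
      (integrableOn_const measure_Ioo_lt_top.ne)
      (hc.aestronglyMeasurable measurableSet_Ioo)
  exact (ae_restrict_iff' measurableSet_Ioo).mpr
    (Filter.Eventually.of_forall fun y hy => by simpa [Real.norm_eq_abs] using hb y hy)

-- derivative of normSq ∘ φ
lemma derivNormSq (φ φ' : ℝ → ℂ) {y : ℝ} (h : HasDerivAt φ (φ' y) y) :
    HasDerivAt (fun t => Complex.normSq (φ t))
      ((φ' y * (starRingEnd ℂ) (φ y) + φ y * (starRingEnd ℂ) (φ' y)).re) y := by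
  have h1 : HasDerivAt (fun t => φ t * (starRingEnd ℂ) (φ t))
      (φ' y * (starRingEnd ℂ) (φ y) + φ y * (starRingEnd ℂ) (φ' y)) y := h.mul h.star
  have h2 := (Complex.reCLM.hasFDerivAt).comp_hasDerivAt y h1
  have h3 : (⇑Complex.reCLM ∘ fun t => φ t * (starRingEnd ℂ) (φ t))
      = fun t => Complex.normSq (φ t) := by
    funext t
    simp [Function.comp, Complex.mul_conj]
  rwa [h3] at h2
lemma contIccInt (h : ℝ → ℝ) (hc : ContinuousOn h (Icc 0 1)) :
    IntegrableOn h (Ioo 0 1) :=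
  (hc.integrableOn_compact isCompact_Icc).mono_set Ioo_subset_Icc_self

lemma contIccIntE {E : Type*} [NormedAddCommGroup E] (h : ℝ → E)
    (hc : ContinuousOn h (Icc 0 1)) : IntegrableOn h (Ioo 0 1) :=
  (hc.integrableOn_compact isCompact_Icc).mono_set Ioo_subset_Icc_self

lemma hardy (φ φ' : ℝ → ℂ) (hφc : ContinuousOn φ (Icc 0 1))
    (hφ'c : ContinuousOn φ' (Icc 0 1))
    (hder : ∀ y ∈ Ioo (0:ℝ) 1, HasDerivAt φ (φ' y) y) (h0 : φ 0 = 0) :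
    ∫ y in Ioo (0:ℝ) 1, Complex.normSq (φ y) / y ^ 2
      ≤ 4 * ∫ y in Ioo (0:ℝ) 1, Complex.normSq (φ' y) := by
  obtain ⟨M, hM0, hM⟩ := lingrow φ φ' hφ'c hder hφc h0
  obtain ⟨K0, hK0⟩ := isCompact_Icc.exists_bound_of_continuousOn hφ'c
  set K := max K0 0 with hKdef
  have hKnn : 0 ≤ K := le_max_right _ _
  have hK : ∀ y ∈ Icc (0:ℝ) 1, ‖φ' y‖ ≤ K :=
    fun y hy => le_trans (hK0 y hy) (le_max_left _ _)
  set N : ℝ → ℝ := fun y => Complex.normSq (φ y) with hNdef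
  set r : ℝ → ℝ := fun y =>
    (φ' y * (starRingEnd ℂ) (φ y) + φ y * (starRingEnd ℂ) (φ' y)).re with hrdef
  have hNnn : ∀ y, 0 ≤ N y := fun y => Complex.normSq_nonneg _
  have hNb : ∀ y ∈ Icc (0:ℝ) 1, N y ≤ (M * y) ^ 2 := by
    intro y hy
    have h2 : N y = ‖φ y‖ ^ 2 := (Complex.sq_norm _).symm
    rw [h2]
    exact pow_le_pow_left₀ (norm_nonneg _) (hM y hy) 2
  have hrb : ∀ y ∈ Icc (0:ℝ) 1, |r y| ≤ 2 * (‖φ y‖ * ‖φ' y‖) := by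
    intro y hy
    calc |r y| ≤ ‖φ' y * (starRingEnd ℂ) (φ y) + φ y * (starRingEnd ℂ) (φ' y)‖ :=
          Complex.abs_re_le_norm _
      _ ≤ ‖φ' y * (starRingEnd ℂ) (φ y)‖
          + ‖φ y * (starRingEnd ℂ) (φ' y)‖ := norm_add_le _ _
      _ = 2 * (‖φ y‖ * ‖φ' y‖) := by
          simp only [norm_mul, Complex.norm_conj]; ring
  have hrb2 : ∀ y ∈ Icc (0:ℝ) 1, |r y| ≤ 2 * (M * K) * y := by
    intro y hy
    refine le_trans (hrb y hy) ?_
    have h1 := hM y hy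
    have h2 := hK y hy
    have h3 : ‖φ y‖ * ‖φ' y‖ ≤ (M * y) * K :=
      mul_le_mul h1 h2 (norm_nonneg _) (mul_nonneg hM0 hy.1)
    nlinarith
  -- continuity of r on Icc
  have hrc : ContinuousOn r (Icc 0 1) := by
    apply Complex.continuous_re.comp_continuousOn
    exact (hφ'c.mul (Complex.continuous_conj.comp_continuousOn hφc)).add
      (hφc.mul (Complex.continuous_conj.comp_continuousOn hφ'c))
  have hNc : ContinuousOn N (Icc 0 1) :=
    Complex.continuous_normSq.comp_continuousOn hφc
  -- the function g = N / y
  set g : ℝ → ℝ := fun y => N y / y with hgdef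
  have hg0 : g 0 = 0 := by
    simp only [hgdef, hNdef, h0, div_zero, Complex.normSq_zero, zero_div]
  have hgc : ContinuousOn g (Icc 0 1) := by
    intro y hy
    rcases eq_or_ne y 0 with h | h
    · subst h
      unfold ContinuousWithinAt
      rw [hg0]
      apply squeeze_zero' (g := fun t => M ^ 2 * t)
      · exact eventually_nhdsWithin_of_forall fun t ht => div_nonneg (hNnn t) ht.1
      · apply eventually_nhdsWithin_of_forall
        intro t ht
        rcases eq_or_lt_of_le ht.1 with h' | h'
        · rw [← h', hg0, mul_zero]
        · rw [hgdef, div_le_iff₀ h']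
          calc N t ≤ (M * t) ^ 2 := hNb t ht
            _ = M ^ 2 * t * t := by ring
      · have : Continuous (fun t : ℝ => M ^ 2 * t) := by continuity
        have h2 := this.tendsto 0
        simp only [mul_zero] at h2
        exact h2.mono_left nhdsWithin_le_nhds
    · exact ((hNc y hy).div (continuousWithinAt_id) h)
  -- derivative of g on Ioo
  have hgd : ∀ y ∈ Ioo (0:ℝ) 1, HasDerivAt g ((r y * y - N y * 1) / y ^ 2) y := by
    intro y hy
    exact (derivNormSq φ φ' (hder y hy)).div (hasDerivAt_id y) (ne_of_gt hy.1)
  -- integrability of the derivative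
  have hgd_int : IntegrableOn (fun y => (r y * y - N y * 1) / y ^ 2) (Ioo 0 1) := by
    apply intbdd _ ?_ (2 * (M * K) + M ^ 2)
    · intro y hy
      have hy1 : y ∈ Icc (0:ℝ) 1 := Ioo_subset_Icc_self hy
      have h1 : |r y * y - N y * 1| ≤ (2 * (M * K) + M ^ 2) * y ^ 2 := by
        have h2 := hrb2 y hy1
        have h3 := hNb y hy1
        have h4 := hNnn y
        have h5 : |r y * y| ≤ 2 * (M * K) * y * y := by
          rw [abs_mul, abs_of_pos hy.1]
          exact mul_le_mul_of_nonneg_right h2 hy.1.le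
        rw [abs_sub_comm]
        rw [abs_sub_le_iff]
        constructor <;> nlinarith [neg_abs_le (r y * y), le_abs_self (r y * y)]
      rw [abs_div, abs_of_pos (pow_pos hy.1 2), div_le_iff₀ (pow_pos hy.1 2)]
      exact h1
    · apply ContinuousOn.div
      · exact ((hrc.mono Ioo_subset_Icc_self).mul continuousOn_id).sub
          ((hNc.mono Ioo_subset_Icc_self).mul continuousOn_const)
      · exact (continuousOn_id.pow 2)
      · intro y hy; exact pow_ne_zero _ (ne_of_gt hy.1)
  -- FTC
  have hFTC : ∫ y in Ioo (0:ℝ) 1, (r y * y - N y * 1) / y ^ 2 = g 1 - g 0 :=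
    myFTC g _ hgc hgd hgd_int
  -- rewrite integrand as difference on Ioo
  have hintrN : IntegrableOn (fun y => N y / y ^ 2) (Ioo 0 1) := by
    apply intbdd _ ?_ (M ^ 2)
    · intro y hy
      have hy1 : y ∈ Icc (0:ℝ) 1 := Ioo_subset_Icc_self hy
      rw [abs_div, _root_.abs_of_nonneg (hNnn y), abs_of_pos (pow_pos hy.1 2),
        div_le_iff₀ (pow_pos hy.1 2)]
      calc N y ≤ (M * y) ^ 2 := hNb y hy1
        _ = M ^ 2 * y ^ 2 := by ring
    · exact ((hNc.mono Ioo_subset_Icc_self).div (continuousOn_id.pow 2)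
        (fun y hy => pow_ne_zero _ (ne_of_gt hy.1)))
  have hintrr : IntegrableOn (fun y => r y / y) (Ioo 0 1) := by
    apply intbdd _ ?_ (2 * (M * K))
    · intro y hy
      have hy1 : y ∈ Icc (0:ℝ) 1 := Ioo_subset_Icc_self hy
      rw [abs_div, abs_of_pos hy.1, div_le_iff₀ hy.1]
      exact hrb2 y hy1
    · exact ((hrc.mono Ioo_subset_Icc_self).div continuousOn_id
        (fun y hy => ne_of_gt hy.1))
  have hsplit : ∫ y in Ioo (0:ℝ) 1, (r y * y - N y * 1) / y ^ 2
      = (∫ y in Ioo (0:ℝ) 1, r y / y) - ∫ y in Ioo (0:ℝ) 1, N y / y ^ 2 := by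
    rw [← integral_sub hintrr hintrN]
    apply setIntegral_congr_fun measurableSet_Ioo
    intro y hy
    have : y ≠ 0 := ne_of_gt hy.1
    field_simp
  -- conclusion pieces
  set H := ∫ y in Ioo (0:ℝ) 1, N y / y ^ 2 with hHdef
  set A := ∫ y in Ioo (0:ℝ) 1, Complex.normSq (φ' y) with hAdef
  have hAnn : 0 ≤ A := integral_nonneg fun y => Complex.normSq_nonneg _
  have hHnn : 0 ≤ H := integral_nonneg fun y => div_nonneg (hNnn y) (sq_nonneg y)
  have hg1 : 0 ≤ g 1 := by
    simp only [hgdef]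
    exact div_nonneg (hNnn 1) zero_le_one
  have hstep1 : H ≤ ∫ y in Ioo (0:ℝ) 1, r y / y := by
    have := hFTC
    rw [hsplit, hg0, sub_zero] at this
    linarith
  -- Cauchy-Schwarz
  set f1 : ℝ → ℝ := fun y => ‖φ y‖ / y with hf1def
  set f2 : ℝ → ℝ := fun y => ‖φ' y‖ with hf2def
  have hf1sq : ∀ y ∈ Ioo (0:ℝ) 1, f1 y ^ 2 = N y / y ^ 2 := by
    intro y hy
    simp only [hf1def, hNdef, div_pow, Complex.sq_norm]
  have hf2sq : ∀ y, f2 y ^ 2 = Complex.normSq (φ' y) := by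
    intro y; simp [hf2def, Complex.sq_norm]
  have hif1 : IntegrableOn (fun y => f1 y ^ 2) (Ioo 0 1) := by
    apply hintrN.congr_fun ?_ measurableSet_Ioo
    intro y hy; exact (hf1sq y hy).symm
  have hif2 : IntegrableOn (fun y => f2 y ^ 2) (Ioo 0 1) := by
    apply contIccInt
    intro y hy
    exact ((continuous_norm.comp_continuousOn hφ'c).pow 2) y hy
  have hif12 : IntegrableOn (fun y => f1 y * f2 y) (Ioo 0 1) := by
    apply intbdd _ ?_ (M * K)
    · intro y hy
      have hy1 : y ∈ Icc (0:ℝ) 1 := Ioo_subset_Icc_self hy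
      have h1 : f1 y ≤ M := by
        rw [hf1def]
        rw [div_le_iff₀ hy.1]
        calc ‖φ y‖ ≤ M * y := hM y hy1
          _ = M * y := rfl
      have h2 : f2 y ≤ K := hK y hy1
      have h3 : 0 ≤ f1 y := div_nonneg (norm_nonneg _) hy.1.le
      have h4 : 0 ≤ f2 y := norm_nonneg _
      rw [_root_.abs_of_nonneg (mul_nonneg h3 h4)]
      exact mul_le_mul h1 h2 h4 hM0
    · exact ((continuous_norm.comp_continuousOn
        (hφc.mono Ioo_subset_Icc_self)).div continuousOn_id
          (fun y hy => ne_of_gt hy.1)).mul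
        (continuous_norm.comp_continuousOn (hφ'c.mono Ioo_subset_Icc_self))
  have hCS := myCS f1 f2 hif1 hif2 hif12
  have hstep2 : ∫ y in Ioo (0:ℝ) 1, r y / y
      ≤ 2 * ∫ y in Ioo (0:ℝ) 1, f1 y * f2 y := by
    rw [← integral_const_mul]
    apply setIntegral_mono_on hintrr (hif12.const_mul 2) measurableSet_Ioo
    intro y hy
    have hy1 : y ∈ Icc (0:ℝ) 1 := Ioo_subset_Icc_self hy
    have h1 : r y ≤ 2 * (‖φ y‖ * ‖φ' y‖) :=
      le_trans (le_abs_self _) (hrb y hy1)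
    rw [div_le_iff₀ hy.1]
    calc r y ≤ 2 * (‖φ y‖ * ‖φ' y‖) := h1
      _ = 2 * (f1 y * f2 y) * y := by
          have hyne : y ≠ 0 := ne_of_gt hy.1
          simp only [hf1def, hf2def]
          field_simp
  have hEf1 : (∫ y in Ioo (0:ℝ) 1, f1 y ^ 2) = H := by
    rw [hHdef]
    apply setIntegral_congr_fun measurableSet_Ioo
    intro y hy
    exact hf1sq y hy
  have hEf2 : (∫ y in Ioo (0:ℝ) 1, f2 y ^ 2) = A := by
    rw [hAdef]
    apply setIntegral_congr_fun measurableSet_Ioo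
    intro y _
    exact hf2sq y
  rw [hEf1, hEf2] at hCS
  set S := ∫ y in Ioo (0:ℝ) 1, f1 y * f2 y with hSdef
  have hfinal : H ≤ 2 * S := le_trans hstep1 hstep2
  rcases eq_or_lt_of_le hHnn with h | h
  · linarith
  · nlinarith
lemma zinv_re_im (a e n : ℝ) (hw : a^2+e^2 ≠ 0) :
    ((n:ℂ) / ((a:ℂ) + (e:ℂ)*Complex.I)^2).re = n*(a^2-e^2)/((a^2+e^2)^2) ∧
    ((n:ℂ) / ((a:ℂ) + (e:ℂ)*Complex.I)^2).im = -(2*a*e*n)/((a^2+e^2)^2) := by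
  have h1 : ((a:ℂ) + (e:ℂ)*Complex.I)^2 = (((a^2-e^2 : ℝ)):ℂ) + ((2*a*e : ℝ):ℂ)*Complex.I := by
    push_cast; ring_nf; rw [Complex.I_sq]; ring
  have hn : Complex.normSq ((((a^2-e^2 : ℝ)):ℂ) + ((2*a*e : ℝ):ℂ)*Complex.I) = (a^2+e^2)^2 := by
    rw [Complex.normSq_add_mul_I]; ring
  constructor
  · rw [h1, Complex.div_re, hn]
    simp only [Complex.add_re, Complex.ofReal_re, Complex.mul_re, Complex.I_re,
      Complex.ofReal_im, Complex.I_im, Complex.add_im, Complex.mul_im]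
    ring
  · rw [h1, Complex.div_im, hn]
    simp only [Complex.add_re, Complex.ofReal_re, Complex.mul_re, Complex.I_re,
      Complex.ofReal_im, Complex.I_im, Complex.add_im, Complex.mul_im]
    ring

lemma keyalg (s Q A : ℝ) (hs0 : 0 ≤ s) (hs : s ≤ 1/4) (hQ : 0 ≤ Q) (hQA : Q ≤ A) :
    Q * A * (1 - 16 * s^2) ≤ 4 * ((1 - 4*s) * A + 3 * s * Q)^2 := by
  rcases le_or_gt (1 - 24*s + 80*s^2) 0 with h | h
  · nlinarith [mul_nonneg hQ (le_trans hQ hQA), sq_nonneg ((1-4*s)*A - 3*s*Q),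
      mul_nonneg (mul_nonneg hQ (le_trans hQ hQA)) (neg_nonneg.mpr h), sq_nonneg (A - Q)]
  · have hA : 0 ≤ A := le_trans hQ hQA
    have h2 : (1 - 24*s + 80*s^2) * (Q * A) ≤ (1 - 24*s + 80*s^2) * (A * A) := by
      apply mul_le_mul_of_nonneg_left _ h.le
      exact mul_le_mul_of_nonneg_right hQA hA
    nlinarith [sq_nonneg (A - Q), mul_nonneg (mul_nonneg hs0 hs0) (sq_nonneg Q),
      mul_nonneg hs0 (sq_nonneg Q), sq_nonneg Q,
      mul_nonneg (mul_nonneg hA hA) (mul_nonneg hs0 (sub_nonneg.mpr hs))]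
/-- Uniform `H¹` bounds for `β² < 1/4`: there is `C > 0` depending only on `β` such that for
every integer `m ≥ 1`, `y₀ ≤ 0`, `ε ∈ (0,1]`, and every `C²` function `φ : [0,1] → ℂ`
(derivatives `φ'`, `φ''`) with `φ(0) = φ(1) = 0` solving
`φ'' - m²φ + β²φ/(y-y₀+iε)² = F` on `(0,1)` with `F` continuous:
`(1-4β²) ‖φ'‖²_{L²} + m² ‖φ‖²_{L²} ≤ C m^{-2} ‖F‖²_{L²}`, and
`0 ≤ ∫₀¹ ε(y-y₀)/((y-y₀)²+ε²)² |φ|² dy ≤ 2 ‖φ‖_{L²} ‖F‖_{L²}`. -/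
theorem stmt10 (β : ℝ) (hβ0 : 0 < β) (hβ : β ^ 2 < 1 / 4) :
    ∃ C > (0 : ℝ), ∀ m : ℕ, 1 ≤ m → ∀ y₀ : ℝ, y₀ ≤ 0 → ∀ ε : ℝ, 0 < ε → ε ≤ 1 →
      ∀ φ φ' φ'' F : ℝ → ℂ,
        ContinuousOn φ (Set.Icc 0 1) →
        ContinuousOn φ' (Set.Icc 0 1) →
        ContinuousOn φ'' (Set.Icc 0 1) →
        ContinuousOn F (Set.Icc 0 1) →
        (∀ y ∈ Set.Ioo (0 : ℝ) 1, HasDerivAt φ (φ' y) y) →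
        (∀ y ∈ Set.Ioo (0 : ℝ) 1, HasDerivAt φ' (φ'' y) y) →
        φ 0 = 0 → φ 1 = 0 →
        (∀ y ∈ Set.Ioo (0 : ℝ) 1,
          φ'' y - (m : ℂ) ^ 2 * φ y +
            (β : ℂ) ^ 2 * φ y / ((y : ℂ) - (y₀ : ℂ) + (ε : ℂ) * Complex.I) ^ 2 = F y) →
        ((1 - 4 * β ^ 2) * (∫ y in Set.Ioo (0 : ℝ) 1, ‖φ' y‖ ^ 2)
            + (m : ℝ) ^ 2 * (∫ y in Set.Ioo (0 : ℝ) 1, ‖φ y‖ ^ 2)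
          ≤ C * ((m : ℝ) ^ 2)⁻¹ * (∫ y in Set.Ioo (0 : ℝ) 1, ‖F y‖ ^ 2)) ∧
        (0 ≤ ∫ y in Set.Ioo (0 : ℝ) 1,
            ε * (y - y₀) / ((y - y₀) ^ 2 + ε ^ 2) ^ 2 * ‖φ y‖ ^ 2) ∧
        ((∫ y in Set.Ioo (0 : ℝ) 1,
            ε * (y - y₀) / ((y - y₀) ^ 2 + ε ^ 2) ^ 2 * ‖φ y‖ ^ 2)
          ≤ 2 * Real.sqrt (∫ y in Set.Ioo (0 : ℝ) 1, ‖φ y‖ ^ 2) *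
              Real.sqrt (∫ y in Set.Ioo (0 : ℝ) 1, ‖F y‖ ^ 2)) := by
  refine ⟨1, one_pos, ?_⟩
  intro m hm y₀ hy₀ ε hε hε1 φ φ' φ'' F hφc hφ'c hφ''c hFc hder hder' h0 h1 heq
  simp only [Complex.sq_norm]
  -- basic positivity
  have hm1 : (1:ℝ) ≤ (m:ℝ) := by exact_mod_cast hm
  have hm2 : (0:ℝ) < (m:ℝ)^2 := by positivity
  set s := β^2 with hsdef
  have hs0 : 0 < s := by positivity
  have hs4 : s < 1/4 := by rw [hsdef]; linarith
  -- abbreviations (after the simp, so the goal folds)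
  set Aq := ∫ y in Ioo (0:ℝ) 1, Complex.normSq (φ' y) with hAdef
  set Bq := ∫ y in Ioo (0:ℝ) 1, Complex.normSq (φ y) with hBdef
  set Gq := ∫ y in Ioo (0:ℝ) 1, Complex.normSq (F y) with hGdef
  set T := ∫ y in Ioo (0:ℝ) 1,
      ε * (y - y₀) / ((y - y₀) ^ 2 + ε ^ 2) ^ 2 * Complex.normSq (φ y) with hTdef
  have hAnn : 0 ≤ Aq := integral_nonneg fun y => Complex.normSq_nonneg _
  have hBnn : 0 ≤ Bq := integral_nonneg fun y => Complex.normSq_nonneg _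
  have hGnn : 0 ≤ Gq := integral_nonneg fun y => Complex.normSq_nonneg _
  have hNc : ContinuousOn (fun y => Complex.normSq (φ y)) (Icc 0 1) :=
    Complex.continuous_normSq.comp_continuousOn hφc
  have hwpos : ∀ y : ℝ, 0 < (y - y₀)^2 + ε^2 := fun y => by positivity
  have hapos : ∀ y ∈ Ioo (0:ℝ) 1, 0 < y - y₀ := fun y hy => by
    have := hy.1; linarith
  have hTnn : 0 ≤ T := by
    rw [hTdef]
    apply setIntegral_nonneg measurableSet_Ioo
    intro y hy
    have h1' := hapos y hy
    have h2' := hwpos y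
    have h3' := Complex.normSq_nonneg (φ y)
    positivity
  -- the complex field z
  set z : ℝ → ℂ := fun y => (y : ℂ) - (y₀ : ℂ) + (ε : ℂ) * Complex.I with hzdef
  have hza : ∀ y : ℝ, z y = ((y - y₀ : ℝ) : ℂ) + (ε : ℂ) * Complex.I := by
    intro y; simp only [hzdef]; push_cast; ring
  have hzc : Continuous z := by
    simp only [hzdef]
    exact ((Complex.continuous_ofReal.sub continuous_const).add continuous_const)
  have hzne : ∀ y : ℝ, z y ≠ 0 := by
    intro y h
    have h2' : (z y).im = ε := by rw [hza]; simp
    rw [h] at h2'; simp at h2'; exact hε.ne' h2'.symm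
  have hz2ne : ∀ y : ℝ, (z y)^2 ≠ 0 := fun y => pow_ne_zero _ (hzne y)
  -- linear growth of φ
  obtain ⟨M, hM0, hM⟩ := lingrow φ φ' hφ'c hder hφc h0
  have hNb : ∀ y ∈ Icc (0:ℝ) 1, Complex.normSq (φ y) ≤ M^2 * y^2 := by
    intro y hy
    have h2' : Complex.normSq (φ y) = ‖φ y‖ ^ 2 := (Complex.sq_norm _).symm
    rw [h2']
    calc ‖φ y‖ ^ 2 ≤ (M*y)^2 := by
          apply pow_le_pow_left₀ (norm_nonneg _) (hM y hy)
      _ = M^2*y^2 := by ring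
  ---------------------------------------------------------------
  -- Step A : integration by parts  ∫ φ'' conj φ = -Aq
  ---------------------------------------------------------------
  have hibp1 : ∫ y in Ioo (0:ℝ) 1,
      (φ'' y * (starRingEnd ℂ) (φ y) + φ' y * (starRingEnd ℂ) (φ' y)) = 0 := by
    have hd : ∀ y ∈ Ioo (0:ℝ) 1, HasDerivAt (fun t => φ' t * (starRingEnd ℂ) (φ t))
        (φ'' y * (starRingEnd ℂ) (φ y) + φ' y * (starRingEnd ℂ) (φ' y)) y :=
      fun y hy => (hder' y hy).mul (hder y hy).star
    have hcont : ContinuousOn (fun t => φ' t * (starRingEnd ℂ) (φ t)) (Icc 0 1) :=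
      hφ'c.mul (Complex.continuous_conj.comp_continuousOn hφc)
    have hint : IntegrableOn (fun y =>
        φ'' y * (starRingEnd ℂ) (φ y) + φ' y * (starRingEnd ℂ) (φ' y)) (Ioo 0 1) :=
      contIccIntE _ ((hφ''c.mul (Complex.continuous_conj.comp_continuousOn hφc)).add
        (hφ'c.mul (Complex.continuous_conj.comp_continuousOn hφ'c)))
    rw [myFTC _ _ hcont hd hint]
    simp [h0, h1]
  have hint1 : IntegrableOn (fun y => φ'' y * (starRingEnd ℂ) (φ y)) (Ioo 0 1) :=
    contIccIntE _ (hφ''c.mul (Complex.continuous_conj.comp_continuousOn hφc))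
  have hint2 : IntegrableOn (fun y => φ' y * (starRingEnd ℂ) (φ' y)) (Ioo 0 1) :=
    contIccIntE _ (hφ'c.mul (Complex.continuous_conj.comp_continuousOn hφ'c))
  have hibp2 : ∫ y in Ioo (0:ℝ) 1, φ'' y * (starRingEnd ℂ) (φ y) = -((Aq : ℝ) : ℂ) := by
    rw [integral_add hint1 hint2] at hibp1
    have h2' : ∫ y in Ioo (0:ℝ) 1, φ' y * (starRingEnd ℂ) (φ' y) = ((Aq : ℝ) : ℂ) := by
      rw [setIntegral_congr_fun measurableSet_Ioo
        (fun y (_ : y ∈ Ioo (0:ℝ) 1) => Complex.mul_conj (φ' y))]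
      rw [hAdef]
      exact integral_ofReal
    rw [h2'] at hibp1
    linear_combination hibp1
  ---------------------------------------------------------------
  -- Step B : complex energy identity
  ---------------------------------------------------------------
  have hNz2c : ContinuousOn (fun y => ((Complex.normSq (φ y) : ℝ) : ℂ) / (z y)^2) (Icc 0 1) :=
    (Complex.continuous_ofReal.comp_continuousOn hNc).div
      ((hzc.pow 2).continuousOn) (fun y _ => hz2ne y)
  have hNz2int : IntegrableOn (fun y => ((Complex.normSq (φ y) : ℝ) : ℂ) / (z y)^2)
      (Ioo 0 1) := contIccIntE _ hNz2c
  have hNintC : IntegrableOn (fun y => ((Complex.normSq (φ y) : ℝ) : ℂ)) (Ioo 0 1) :=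
    contIccIntE _ (Complex.continuous_ofReal.comp_continuousOn hNc)
  set K := ∫ y in Ioo (0:ℝ) 1, ((Complex.normSq (φ y) : ℝ) : ℂ) / (z y)^2 with hKdef
  set I := ∫ y in Ioo (0:ℝ) 1, F y * (starRingEnd ℂ) (φ y) with hIdef
  have heqI : ∀ y ∈ Ioo (0:ℝ) 1, F y * (starRingEnd ℂ) (φ y)
      = φ'' y * (starRingEnd ℂ) (φ y) - (m:ℂ)^2 * ((Complex.normSq (φ y) : ℝ):ℂ)
        + (β:ℂ)^2 * (((Complex.normSq (φ y) : ℝ):ℂ) / (z y)^2) := by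
    intro y hy
    rw [← heq y hy]
    have hNy : ((Complex.normSq (φ y):ℝ):ℂ) = φ y * (starRingEnd ℂ) (φ y) :=
      (Complex.mul_conj (φ y)).symm
    simp only [hzdef]
    rw [hNy]
    have hznez : ((y : ℂ) - (y₀ : ℂ) + (ε : ℂ) * Complex.I) ^ 2 ≠ 0 := by
      have := hz2ne y; simpa [hzdef] using this
    field_simp
  have hIeq : I = -((Aq:ℝ):ℂ) - (m:ℂ)^2 * ((Bq:ℝ):ℂ) + (β:ℂ)^2 * K := by
    rw [hIdef]
    rw [setIntegral_congr_fun measurableSet_Ioo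
      (fun y hy => heqI y hy)]
    have hsub : IntegrableOn (fun y => φ'' y * (starRingEnd ℂ) (φ y)
        - (m:ℂ)^2 * ((Complex.normSq (φ y) : ℝ):ℂ)) (Ioo 0 1) :=
      hint1.sub (hNintC.const_mul _)
    rw [integral_add hsub (hNz2int.const_mul _),
      integral_sub hint1 (hNintC.const_mul _),
      integral_const_mul, integral_const_mul, hibp2]
    have hB' : ∫ y in Ioo (0:ℝ) 1, ((Complex.normSq (φ y) : ℝ):ℂ) = ((Bq:ℝ):ℂ) := by
      rw [hBdef]; exact integral_ofReal
    rw [hB', ← hKdef]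
  ---------------------------------------------------------------
  -- Step C : real and imaginary parts
  ---------------------------------------------------------------
  have hKre : K.re = ∫ y in Ioo (0:ℝ) 1,
      Complex.normSq (φ y) * ((y-y₀)^2 - ε^2)/(((y-y₀)^2+ε^2)^2) := by
    have h' := integral_re hNz2int
    simp only [RCLike.re_to_complex] at h'
    rw [hKdef, ← h']
    apply setIntegral_congr_fun measurableSet_Ioo
    intro y _
    have h := (zinv_re_im (y - y₀) ε (Complex.normSq (φ y)) (hwpos y).ne').1
    show (((Complex.normSq (φ y) : ℝ):ℂ) / (z y)^2).re = _
    rw [hza y]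
    exact h
  have hKim : K.im = -2 * T := by
    have h' := integral_im hNz2int
    simp only [RCLike.im_to_complex] at h'
    have h2' : K.im = ∫ y in Ioo (0:ℝ) 1,
        -(2*(y-y₀)*ε*Complex.normSq (φ y))/(((y-y₀)^2+ε^2)^2) := by
      rw [hKdef, ← h']
      apply setIntegral_congr_fun measurableSet_Ioo
      intro y _
      have h := (zinv_re_im (y - y₀) ε (Complex.normSq (φ y)) (hwpos y).ne').2
      show (((Complex.normSq (φ y) : ℝ):ℂ) / (z y)^2).im = _
      rw [hza y]
      exact h
    rw [h2', hTdef, ← integral_const_mul]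
    apply setIntegral_congr_fun measurableSet_Ioo
    intro y _
    ring
  have hmc : ((m:ℕ):ℂ)^2 = (((m:ℝ)^2 : ℝ):ℂ) := by push_cast; ring
  have hβc : ((β:ℝ):ℂ)^2 = ((s:ℝ):ℂ) := by rw [hsdef]; push_cast; ring
  have hIeq2 : I = ((-Aq - (m:ℝ)^2*Bq : ℝ) : ℂ) + ((s:ℝ):ℂ) * K := by
    rw [hIeq, hmc, hβc]; push_cast; ring
  have hIre : I.re = -Aq - (m:ℝ)^2*Bq + s*K.re := by
    rw [hIeq2, Complex.add_re, Complex.ofReal_re, Complex.re_ofReal_mul]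
  have hIim : I.im = s * K.im := by
    rw [hIeq2, Complex.add_im, Complex.ofReal_im, Complex.im_ofReal_mul, zero_add]
  ---------------------------------------------------------------
  -- Step D : the real-part inequality
  ---------------------------------------------------------------
  set Qq := ∫ y in Ioo (0:ℝ) 1, ε^2*Complex.normSq (φ y)/(((y-y₀)^2+ε^2)^2) with hQdef
  have hac : Continuous (fun y : ℝ => y - y₀) := continuous_id.sub continuous_const
  have hw1c : Continuous (fun y : ℝ => (y-y₀)^2+ε^2) := (hac.pow 2).add continuous_const
  have hwc : Continuous (fun y : ℝ => (((y-y₀)^2+ε^2)^2)) := hw1c.pow 2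
  have hw2ne : ∀ y ∈ Icc (0:ℝ) 1, (((y-y₀)^2+ε^2)^2) ≠ 0 :=
    fun y _ => pow_ne_zero _ (hwpos y).ne'
  have hint_fre : IntegrableOn (fun y =>
      Complex.normSq (φ y) * ((y-y₀)^2 - ε^2)/(((y-y₀)^2+ε^2)^2)) (Ioo 0 1) := by
    apply contIccInt
    exact (hNc.mul ((hac.pow 2).sub continuous_const).continuousOn).div hwc.continuousOn hw2ne
  have hint_Q : IntegrableOn (fun y =>
      ε^2*Complex.normSq (φ y)/(((y-y₀)^2+ε^2)^2)) (Ioo 0 1) := by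
    apply contIccInt
    exact (continuousOn_const.mul hNc).div hwc.continuousOn hw2ne
  have hQnn : 0 ≤ Qq := by
    rw [hQdef]
    apply setIntegral_nonneg measurableSet_Ioo
    intro y _
    have := Complex.normSq_nonneg (φ y)
    positivity
  have hint_Ny2 : IntegrableOn (fun y => Complex.normSq (φ y) / y^2) (Ioo 0 1) := by
    apply intbdd _ ?_ (M^2)
    · intro y hy
      have hy1 : y ∈ Icc (0:ℝ) 1 := Ioo_subset_Icc_self hy
      rw [abs_div, _root_.abs_of_nonneg (Complex.normSq_nonneg _),
        _root_.abs_of_pos (pow_pos hy.1 2), div_le_iff₀ (pow_pos hy.1 2)]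
      calc Complex.normSq (φ y) ≤ M^2 * y^2 := hNb y hy1
        _ = M ^ 2 * y ^ 2 := by ring
    · exact ((hNc.mono Ioo_subset_Icc_self).div (continuousOn_id.pow 2)
        (fun y hy => pow_ne_zero _ (ne_of_gt hy.1)))
  have hhardy := hardy φ φ' hφc hφ'c hder h0
  -- pointwise inequality for the real part
  have hfre_le : (∫ y in Ioo (0:ℝ) 1,
      Complex.normSq (φ y) * ((y-y₀)^2 - ε^2)/(((y-y₀)^2+ε^2)^2))
      ≤ (∫ y in Ioo (0:ℝ) 1, (Complex.normSq (φ y) / y^2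
          - 3*(ε^2*Complex.normSq (φ y)/(((y-y₀)^2+ε^2)^2)))) := by
    apply setIntegral_mono_on hint_fre (hint_Ny2.sub (hint_Q.const_mul 3)) measurableSet_Ioo
    intro y hy
    show Complex.normSq (φ y) * ((y-y₀)^2 - ε^2)/(((y-y₀)^2+ε^2)^2)
        ≤ Complex.normSq (φ y) / y^2 - 3*(ε^2*Complex.normSq (φ y)/(((y-y₀)^2+ε^2)^2))
    have ha := hapos y hy
    have hy1 : 0 < y := hy.1
    have hya : y ≤ y - y₀ := by linarith
    have hNn := Complex.normSq_nonneg (φ y)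
    have key : ((y-y₀)^2-ε^2)/(((y-y₀)^2+ε^2)^2) + 3*(ε^2/(((y-y₀)^2+ε^2)^2))
        ≤ 1/y^2 := by
      have e1 : ((y-y₀)^2-ε^2)/(((y-y₀)^2+ε^2)^2) + 3*(ε^2/(((y-y₀)^2+ε^2)^2))
          = ((y-y₀)^2+2*ε^2)/(((y-y₀)^2+ε^2)^2) := by ring
      rw [e1, div_le_div_iff₀ (by positivity) (by positivity)]
      have hy2a : y^2 ≤ (y-y₀)^2 := by nlinarith
      nlinarith [sq_nonneg (ε^2), mul_le_mul_of_nonneg_left hy2a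
        (by positivity : (0:ℝ) ≤ (y-y₀)^2 + 2*ε^2)]
    have hmul := mul_le_mul_of_nonneg_left key hNn
    have e1 : Complex.normSq (φ y) * (((y-y₀)^2-ε^2)/(((y-y₀)^2+ε^2)^2)
          + 3*(ε^2/(((y-y₀)^2+ε^2)^2)))
        = Complex.normSq (φ y) * ((y-y₀)^2 - ε^2)/(((y-y₀)^2+ε^2)^2)
          + 3*(ε^2*Complex.normSq (φ y)/(((y-y₀)^2+ε^2)^2)) := by ring
    have e2 : Complex.normSq (φ y) * (1/y^2) = Complex.normSq (φ y)/y^2 := by ring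
    linarith
  have hsplit_re : (∫ y in Ioo (0:ℝ) 1, (Complex.normSq (φ y) / y^2
        - 3*(ε^2*Complex.normSq (φ y)/(((y-y₀)^2+ε^2)^2))))
      = (∫ y in Ioo (0:ℝ) 1, Complex.normSq (φ y) / y^2) - 3*Qq := by
    rw [integral_sub hint_Ny2 (hint_Q.const_mul 3), integral_const_mul, hQdef]
  have hKre_le : K.re ≤ 4*Aq - 3*Qq := by
    rw [hKre]
    calc _ ≤ _ := hfre_le
      _ = (∫ y in Ioo (0:ℝ) 1, Complex.normSq (φ y) / y^2) - 3*Qq := hsplit_re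
      _ ≤ 4*Aq - 3*Qq := by
          have := hhardy
          rw [← hAdef] at this
          linarith
  have hP : (1-4*s)*Aq + (m:ℝ)^2*Bq + 3*s*Qq ≤ -I.re := by
    have h2' := mul_le_mul_of_nonneg_left hKre_le hs0.le
    rw [hIre]
    nlinarith
  -- Qq ≤ Aq
  have hQA : Qq ≤ Aq := by
    have hstep : Qq ≤ (1/4) * ∫ y in Ioo (0:ℝ) 1, Complex.normSq (φ y) / y^2 := by
      rw [hQdef, ← integral_const_mul]
      apply setIntegral_mono_on hint_Q (hint_Ny2.const_mul _) measurableSet_Ioo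
      intro y hy
      show ε^2*Complex.normSq (φ y)/(((y-y₀)^2+ε^2)^2)
          ≤ 1/4 * (Complex.normSq (φ y) / y^2)
      have ha := hapos y hy
      have hy1 : 0 < y := hy.1
      have hya : y ≤ y - y₀ := by linarith
      have hNn := Complex.normSq_nonneg (φ y)
      have key : ε^2/(((y-y₀)^2+ε^2)^2) ≤ 1/(4*y^2) := by
        rw [div_le_div_iff₀ (by positivity) (by positivity)]
        have hy2a : y^2 ≤ (y-y₀)^2 := by nlinarith
        nlinarith [sq_nonneg ((y-y₀)^2 - ε^2), mul_le_mul_of_nonneg_left hy2a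
          (by positivity : (0:ℝ) ≤ 4*ε^2)]
      have hmul := mul_le_mul_of_nonneg_left key hNn
      have e1 : Complex.normSq (φ y) * (ε^2/(((y-y₀)^2+ε^2)^2))
          = ε^2*Complex.normSq (φ y)/(((y-y₀)^2+ε^2)^2) := by ring
      have e2 : Complex.normSq (φ y) * (1/(4*y^2)) = 1/4 * (Complex.normSq (φ y)/y^2) := by
        ring
      linarith
    have := hhardy
    rw [← hAdef] at this
    linarith
  ---------------------------------------------------------------
  -- Step E : |I|² ≤ Bq Gq
  ---------------------------------------------------------------
  have hnormI : I.re^2 + I.im^2 ≤ Bq * Gq := by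
    have habs1 : ‖I‖ ≤ ∫ y in Ioo (0:ℝ) 1,
        ‖F y‖ * ‖φ y‖ := by
      rw [hIdef]
      calc ‖∫ y in Ioo (0:ℝ) 1, F y * (starRingEnd ℂ) (φ y)‖
          = ‖∫ y in Ioo (0:ℝ) 1, F y * (starRingEnd ℂ) (φ y)‖ :=
            rfl
        _ ≤ ∫ y in Ioo (0:ℝ) 1, ‖F y * (starRingEnd ℂ) (φ y)‖ :=
            norm_integral_le_integral_norm _
        _ = ∫ y in Ioo (0:ℝ) 1, ‖F y‖ * ‖φ y‖ := by
            apply setIntegral_congr_fun measurableSet_Ioo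
            intro y _
            simp [map_mul]
    have hiF2 : IntegrableOn (fun y => ‖F y‖ ^ 2) (Ioo 0 1) :=
      contIccInt _ ((continuous_norm.comp_continuousOn hFc).pow 2)
    have hiφ2 : IntegrableOn (fun y => ‖φ y‖ ^ 2) (Ioo 0 1) :=
      contIccInt _ ((continuous_norm.comp_continuousOn hφc).pow 2)
    have hiFφ : IntegrableOn (fun y => ‖F y‖ * ‖φ y‖) (Ioo 0 1) :=
      contIccInt _ ((continuous_norm.comp_continuousOn hFc).mul
        (continuous_norm.comp_continuousOn hφc))
    have hcs := myCS (fun y => ‖F y‖) (fun y => ‖φ y‖)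
      hiF2 hiφ2 hiFφ
    simp only [Complex.sq_norm] at hcs
    rw [← hGdef, ← hBdef] at hcs
    have habsnn : 0 ≤ ‖I‖ := norm_nonneg _
    have hintnn : 0 ≤ ∫ y in Ioo (0:ℝ) 1, ‖F y‖ * ‖φ y‖ :=
      setIntegral_nonneg measurableSet_Ioo
        (fun y _ => mul_nonneg (norm_nonneg _) (norm_nonneg _))
    have h2' : ‖I‖ ^ 2 ≤ Gq * Bq := by
      calc ‖I‖ ^ 2
          ≤ (∫ y in Ioo (0:ℝ) 1, ‖F y‖ * ‖φ y‖) ^ 2 := by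
            apply pow_le_pow_left₀ habsnn habs1
        _ ≤ Gq * Bq := hcs
    have h3' : I.re^2 + I.im^2 = ‖I‖ ^ 2 := by
      rw [Complex.sq_norm, Complex.normSq_apply]; ring
    rw [h3']
    linarith [h2']
  ---------------------------------------------------------------
  -- Step F : second integration by parts, T ≤ sqrt(Qq Aq)
  ---------------------------------------------------------------
  have hibpT : ∫ y in Ioo (0:ℝ) 1,
      (2*ε*(y-y₀)/(((y-y₀)^2+ε^2)^2) * Complex.normSq (φ y)
        + (-ε/((y-y₀)^2+ε^2)) * (φ' y * (starRingEnd ℂ) (φ y)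
            + φ y * (starRingEnd ℂ) (φ' y)).re) = 0 := by
    have hcont : ContinuousOn (fun y => -ε/((y-y₀)^2+ε^2) * Complex.normSq (φ y))
        (Icc 0 1) :=
      ((continuousOn_const.div hw1c.continuousOn (fun y _ => (hwpos y).ne')).mul hNc)
    have hd : ∀ y ∈ Ioo (0:ℝ) 1, HasDerivAt
        (fun t => -ε/((t-y₀)^2+ε^2) * Complex.normSq (φ t))
        (2*ε*(y-y₀)/(((y-y₀)^2+ε^2)^2) * Complex.normSq (φ y)
          + (-ε/((y-y₀)^2+ε^2)) * (φ' y * (starRingEnd ℂ) (φ y)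
            + φ y * (starRingEnd ℂ) (φ' y)).re) y := by
      intro y hy
      have hwd : HasDerivAt (fun t : ℝ => (t-y₀)^2+ε^2) (2*(y-y₀)) y := by
        have h' := (((hasDerivAt_id y).sub_const y₀).pow 2).add_const (ε^2)
        exact h'.congr_deriv (by simp)
      have hdiv : HasDerivAt (fun t : ℝ => -ε/((t-y₀)^2+ε^2))
          (2*ε*(y-y₀)/(((y-y₀)^2+ε^2)^2)) y := by
        have h' := (hasDerivAt_const y (-ε)).div hwd (hwpos y).ne'
        exact h'.congr_deriv (by ring)
      exact hdiv.mul (derivNormSq φ φ' (hder y hy))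
    have hrc : ContinuousOn (fun y => (φ' y * (starRingEnd ℂ) (φ y)
        + φ y * (starRingEnd ℂ) (φ' y)).re) (Icc 0 1) := by
      apply Complex.continuous_re.comp_continuousOn
      exact (hφ'c.mul (Complex.continuous_conj.comp_continuousOn hφc)).add
        (hφc.mul (Complex.continuous_conj.comp_continuousOn hφ'c))
    have hint : IntegrableOn (fun y =>
        2*ε*(y-y₀)/(((y-y₀)^2+ε^2)^2) * Complex.normSq (φ y)
          + (-ε/((y-y₀)^2+ε^2)) * (φ' y * (starRingEnd ℂ) (φ y)
            + φ y * (starRingEnd ℂ) (φ' y)).re) (Ioo 0 1) := by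
      apply contIccInt
      exact (((continuousOn_const.mul hac.continuousOn).div hwc.continuousOn hw2ne).mul hNc).add
        ((continuousOn_const.div hw1c.continuousOn (fun y _ => (hwpos y).ne')).mul hrc)
    rw [myFTC _ _ hcont hd hint]
    simp [h0, h1]
  have hint_TN : IntegrableOn (fun y =>
      2*ε*(y-y₀)/(((y-y₀)^2+ε^2)^2) * Complex.normSq (φ y)) (Ioo 0 1) := by
    apply contIccInt
    exact (((continuousOn_const.mul hac.continuousOn).div hwc.continuousOn hw2ne).mul hNc)
  have hrc2 : ContinuousOn (fun y => (φ' y * (starRingEnd ℂ) (φ y)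
      + φ y * (starRingEnd ℂ) (φ' y)).re) (Icc 0 1) := by
    apply Complex.continuous_re.comp_continuousOn
    exact (hφ'c.mul (Complex.continuous_conj.comp_continuousOn hφc)).add
      (hφc.mul (Complex.continuous_conj.comp_continuousOn hφ'c))
  have hint_er : IntegrableOn (fun y =>
      (-ε/((y-y₀)^2+ε^2)) * (φ' y * (starRingEnd ℂ) (φ y)
        + φ y * (starRingEnd ℂ) (φ' y)).re) (Ioo 0 1) := by
    apply contIccInt
    exact ((continuousOn_const.div hw1c.continuousOn (fun y _ => (hwpos y).ne')).mul hrc2)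
  have h2T : 2*T = ∫ y in Ioo (0:ℝ) 1,
      (ε/((y-y₀)^2+ε^2)) * (φ' y * (starRingEnd ℂ) (φ y)
        + φ y * (starRingEnd ℂ) (φ' y)).re := by
    rw [integral_add hint_TN hint_er] at hibpT
    have e1 : ∫ y in Ioo (0:ℝ) 1,
        2*ε*(y-y₀)/(((y-y₀)^2+ε^2)^2) * Complex.normSq (φ y) = 2*T := by
      rw [hTdef, ← integral_const_mul]
      apply setIntegral_congr_fun measurableSet_Ioo
      intro y _; ring
    have e2 : ∫ y in Ioo (0:ℝ) 1,
        (-ε/((y-y₀)^2+ε^2)) * (φ' y * (starRingEnd ℂ) (φ y)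
          + φ y * (starRingEnd ℂ) (φ' y)).re
        = - ∫ y in Ioo (0:ℝ) 1, (ε/((y-y₀)^2+ε^2)) * (φ' y * (starRingEnd ℂ) (φ y)
          + φ y * (starRingEnd ℂ) (φ' y)).re := by
      rw [← integral_neg]
      apply setIntegral_congr_fun measurableSet_Ioo
      intro y _; ring
    rw [e1, e2] at hibpT
    linarith
  -- Cauchy-Schwarz for T
  have hrb : ∀ y ∈ Icc (0:ℝ) 1, (φ' y * (starRingEnd ℂ) (φ y)
      + φ y * (starRingEnd ℂ) (φ' y)).re
      ≤ 2 * (‖φ y‖ * ‖φ' y‖) := by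
    intro y hy
    calc (φ' y * (starRingEnd ℂ) (φ y) + φ y * (starRingEnd ℂ) (φ' y)).re
        ≤ ‖φ' y * (starRingEnd ℂ) (φ y) + φ y * (starRingEnd ℂ) (φ' y)‖ :=
          Complex.re_le_norm _
      _ ≤ ‖φ' y * (starRingEnd ℂ) (φ y)‖
          + ‖φ y * (starRingEnd ℂ) (φ' y)‖ := norm_add_le _ _
      _ = 2 * (‖φ y‖ * ‖φ' y‖) := by
          simp only [norm_mul, Complex.norm_conj]; ring
  have hif1 : IntegrableOn (fun y =>
      (ε * ‖φ y‖/((y-y₀)^2+ε^2)) ^ 2) (Ioo 0 1) := by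
    apply contIccInt
    exact ((continuousOn_const.mul (continuous_norm.comp_continuousOn hφc)).div
      hw1c.continuousOn (fun y _ => (hwpos y).ne')).pow 2
  have hif2 : IntegrableOn (fun y => ‖φ' y‖ ^ 2) (Ioo 0 1) :=
    contIccInt _ ((continuous_norm.comp_continuousOn hφ'c).pow 2)
  have hif12 : IntegrableOn (fun y =>
      (ε * ‖φ y‖/((y-y₀)^2+ε^2)) * ‖φ' y‖) (Ioo 0 1) := by
    apply contIccInt
    exact ((continuousOn_const.mul (continuous_norm.comp_continuousOn hφc)).div
      hw1c.continuousOn (fun y _ => (hwpos y).ne')).mul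
      (continuous_norm.comp_continuousOn hφ'c)
  have hcsT := myCS (fun y => ε * ‖φ y‖/((y-y₀)^2+ε^2))
    (fun y => ‖φ' y‖) hif1 hif2 hif12
  have hf1sq : (∫ y in Ioo (0:ℝ) 1, (ε * ‖φ y‖/((y-y₀)^2+ε^2)) ^ 2) = Qq := by
    rw [hQdef]
    apply setIntegral_congr_fun measurableSet_Ioo
    intro y _
    show (ε * ‖φ y‖/((y-y₀)^2+ε^2)) ^ 2
        = ε^2*Complex.normSq (φ y)/(((y-y₀)^2+ε^2)^2)
    rw [div_pow, mul_pow, Complex.sq_norm]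
  have hf2sq : (∫ y in Ioo (0:ℝ) 1, ‖φ' y‖ ^ 2) = Aq := by
    rw [hAdef]
    apply setIntegral_congr_fun measurableSet_Ioo
    intro y _
    show ‖φ' y‖ ^ 2 = Complex.normSq (φ' y)
    rw [Complex.sq_norm]
  rw [hf1sq, hf2sq] at hcsT
  have hTleS : T ≤ ∫ y in Ioo (0:ℝ) 1,
      (ε * ‖φ y‖/((y-y₀)^2+ε^2)) * ‖φ' y‖ := by
    have hmono : (∫ y in Ioo (0:ℝ) 1, (ε/((y-y₀)^2+ε^2)) * (φ' y * (starRingEnd ℂ) (φ y)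
        + φ y * (starRingEnd ℂ) (φ' y)).re)
        ≤ 2 * ∫ y in Ioo (0:ℝ) 1,
          (ε * ‖φ y‖/((y-y₀)^2+ε^2)) * ‖φ' y‖ := by
      rw [← integral_const_mul]
      have hintl : IntegrableOn (fun y =>
          (ε/((y-y₀)^2+ε^2)) * (φ' y * (starRingEnd ℂ) (φ y)
          + φ y * (starRingEnd ℂ) (φ' y)).re) (Ioo 0 1) := by
        apply contIccInt
        exact ((continuousOn_const.div hw1c.continuousOn (fun y _ => (hwpos y).ne')).mul hrc2)
      apply setIntegral_mono_on hintl (hif12.const_mul 2) measurableSet_Ioo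
      intro y hy
      have hy1 : y ∈ Icc (0:ℝ) 1 := Ioo_subset_Icc_self hy
      have hw' := hwpos y
      have h2' := hrb y hy1
      have h3' : 0 < ε/((y-y₀)^2+ε^2) := by positivity
      calc (ε/((y-y₀)^2+ε^2)) * (φ' y * (starRingEnd ℂ) (φ y)
            + φ y * (starRingEnd ℂ) (φ' y)).re
          ≤ (ε/((y-y₀)^2+ε^2)) * (2 * (‖φ y‖ * ‖φ' y‖)) :=
            mul_le_mul_of_nonneg_left h2' h3'.le
        _ = 2 * ((ε * ‖φ y‖/((y-y₀)^2+ε^2)) * ‖φ' y‖) := by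
            ring
    rw [← h2T] at hmono
    linarith
  have hT2 : T^2 ≤ Qq * Aq := by
    have hSnn : (0:ℝ) ≤ ∫ y in Ioo (0:ℝ) 1,
        (ε * ‖φ y‖/((y-y₀)^2+ε^2)) * ‖φ' y‖ :=
      le_trans hTnn hTleS
    calc T^2 ≤ (∫ y in Ioo (0:ℝ) 1,
        (ε * ‖φ y‖/((y-y₀)^2+ε^2)) * ‖φ' y‖)^2 :=
          pow_le_pow_left₀ hTnn hTleS 2
      _ ≤ Qq * Aq := hcsT
  ---------------------------------------------------------------
  -- Step G : final algebra
  ---------------------------------------------------------------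
  clear_value Aq Bq Gq T Qq K I
  clear hφc hφ'c hφ''c hFc hder hder' heq hNc hwpos hapos hza hzc hzne hz2ne
  clear hM hM0 hNb hibp1 hint1 hint2 hibp2 hNz2c hNz2int hNintC heqI hIeq hIeq2 hmc hβc
  clear hKre hac hw1c hwc hw2ne hint_fre hint_Q hint_Ny2 hhardy hfre_le hsplit_re hKre_le
  clear hibpT hint_TN hrc2 hint_er h2T hrb hif1 hif2 hif12 hcsT hf1sq hf2sq hTleS
  clear hIdef hKdef hTdef hQdef hAdef hBdef hGdef
  clear M φ' φ'' F h0 h1 φ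
  have hX : (1-4*s)*Aq + (m:ℝ)^2*Bq ≤ -I.re := by
    have h3Q : 0 ≤ 3*s*Qq := by positivity
    linarith [hP]
  have hXnn : 0 ≤ (1-4*s)*Aq + (m:ℝ)^2*Bq := by
    have e1 : 0 ≤ (1-4*s)*Aq := mul_nonneg (by linarith) hAnn
    have e2 : 0 ≤ (m:ℝ)^2*Bq := mul_nonneg hm2.le hBnn
    linarith
  have hX2 : ((1-4*s)*Aq + (m:ℝ)^2*Bq)^2 ≤ Bq * Gq := by
    have e1 : ((1-4*s)*Aq + (m:ℝ)^2*Bq)^2 ≤ (-I.re)^2 := pow_le_pow_left₀ hXnn hX 2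
    have e2 : (-I.re)^2 = I.re^2 := by ring
    linarith [sq_nonneg I.im, hnormI]
  refine ⟨?_, ?_, ?_⟩
  · -- first estimate
    have hmBX : (m:ℝ)^2*Bq ≤ (1-4*s)*Aq + (m:ℝ)^2*Bq := by
      have e1 : 0 ≤ (1-4*s)*Aq := mul_nonneg (by linarith) hAnn
      linarith
    have hkey : ((1-4*s)*Aq + (m:ℝ)^2*Bq) * ((m:ℝ)^2 * ((1-4*s)*Aq + (m:ℝ)^2*Bq))
        ≤ ((1-4*s)*Aq + (m:ℝ)^2*Bq) * Gq := by
      have h1' : (m:ℝ)^2 * ((1-4*s)*Aq + (m:ℝ)^2*Bq)^2 ≤ (m:ℝ)^2 * (Bq * Gq) :=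
        mul_le_mul_of_nonneg_left hX2 hm2.le
      have h2' : ((m:ℝ)^2 * Bq) * Gq ≤ ((1-4*s)*Aq + (m:ℝ)^2*Bq) * Gq :=
        mul_le_mul_of_nonneg_right hmBX hGnn
      have e1 : ((1-4*s)*Aq + (m:ℝ)^2*Bq)*((m:ℝ)^2*((1-4*s)*Aq + (m:ℝ)^2*Bq))
          = (m:ℝ)^2*((1-4*s)*Aq + (m:ℝ)^2*Bq)^2 := by ring
      have e2 : (m:ℝ)^2*(Bq*Gq) = ((m:ℝ)^2*Bq)*Gq := by ring
      linarith
    rcases hXnn.eq_or_lt with hX0 | hX0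
    · rw [← hX0]
      positivity
    · have hfin : (m:ℝ)^2 * ((1-4*s)*Aq + (m:ℝ)^2*Bq) ≤ Gq := by
        have := le_of_mul_le_mul_left hkey hX0
        linarith
      rw [one_mul, show ((m:ℝ)^2)⁻¹*Gq = Gq/(m:ℝ)^2 by ring, le_div_iff₀ hm2]
      linarith [hfin]
  · exact hTnn
  · -- second estimate
    have hP0 : 0 ≤ (1-4*s)*Aq + 3*s*Qq := by
      have e1 : 0 ≤ (1-4*s)*Aq := mul_nonneg (by linarith) hAnn
      have e2 : 0 ≤ 3*s*Qq := by positivity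
      linarith
    have hP0le : (1-4*s)*Aq + 3*s*Qq ≤ -I.re := by
      have e1 : 0 ≤ (m:ℝ)^2*Bq := mul_nonneg hm2.le hBnn
      linarith [hP]
    have hP02 : ((1-4*s)*Aq + 3*s*Qq)^2 ≤ I.re^2 := by
      have e1 : ((1-4*s)*Aq + 3*s*Qq)^2 ≤ (-I.re)^2 := pow_le_pow_left₀ hP0 hP0le 2
      have e2 : (-I.re)^2 = I.re^2 := by ring
      linarith
    have halg := keyalg s Qq Aq hs0.le hs4.le hQnn hQA
    have hIm2 : I.im^2 = 4*s^2*T^2 := by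
      rw [hIim, hKim]; ring
    have hT4 : T^2 ≤ 4*(Bq*Gq) := by
      have h1' : (1-16*s^2) * T^2 ≤ (1-16*s^2) * (Qq*Aq) := by
        apply mul_le_mul_of_nonneg_left hT2
        nlinarith [hs0.le, hs4]
      have e1 : (1-16*s^2) * (Qq*Aq) = Qq*Aq*(1-16*s^2) := by ring
      have e2 : (1-16*s^2) * T^2 = T^2 - 16*s^2*T^2 := by ring
      have e3 : 16*s^2*T^2 = 4*(4*s^2*T^2) := by ring
      linarith [halg, hP02, hnormI, hIm2]
    have hsq : T ≤ Real.sqrt (4*(Bq*Gq)) := by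
      rw [← Real.sqrt_sq hTnn]
      exact Real.sqrt_le_sqrt hT4
    have hsqeq : Real.sqrt (4*(Bq*Gq)) = 2 * Real.sqrt Bq * Real.sqrt Gq := by
      rw [Real.sqrt_mul (by norm_num : (0:ℝ) ≤ 4), Real.sqrt_mul hBnn]
      have h4 : Real.sqrt 4 = 2 := by
        rw [show (4:ℝ) = 2^2 by norm_num, Real.sqrt_sq (by norm_num : (0:ℝ) ≤ 2)]
      rw [h4]; ring
    rw [hsqeq] at hsq
    exact hsq
end

section
/- Assume β² < 1/4, let m ≥ 1 be an integer, and let c ∈ ℂ with Re c ≤ 0 or Re c ≥ 1. If ψ : [0,1] → ℂ is C² with ψ(0) = ψ(1) = 0 and ψ''(y) − m²ψ(y) + β²ψ(y)/(y−c)² = 0 for all y ∈ (0,1), then ψ ≡ 0. (In particular, for β² < 1/4 no c with Re c ≤ 0 or Re c ≥ 1 is an eigenvalue of the linearized operator.) -/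
set_option maxRecDepth 8000
set_option maxHeartbeats 1000000

open MeasureTheory intervalIntegral Set Filter

private lemma tg_ae_Ioo {P : ℝ → Prop} (h : ∀ y ∈ Set.Ioo (0:ℝ) 1, P y) :
    ∀ᵐ y ∂((volume : Measure ℝ).restrict (Set.Icc (0:ℝ) 1)), P y := by
  rw [← Measure.restrict_congr_set (MeasureTheory.Ioo_ae_eq_Icc)]
  filter_upwards [ae_restrict_mem measurableSet_Ioo] using h

private lemma tg_bddII {f : ℝ → ℝ} (hf : ContinuousOn f (Set.Ioo 0 1)) {C : ℝ}
    (hbd : ∀ y ∈ Set.Ioo (0:ℝ) 1, |f y| ≤ C) : IntervalIntegrable f volume 0 1 := by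
  rw [intervalIntegrable_iff, uIoc_of_le (by norm_num : (0:ℝ) ≤ 1)]
  have h1 : IntegrableOn f (Set.Ioo 0 1) := by
    apply Integrable.mono' (g := fun _ => C)
      (integrableOn_const (C := C) (μ := volume) (s := Set.Ioo (0:ℝ) 1) (by simp [Real.volume_Ioo]))
      (hf.aestronglyMeasurable measurableSet_Ioo)
    filter_upwards [ae_restrict_mem measurableSet_Ioo] with y hy
    simpa [Real.norm_eq_abs] using hbd y hy
  exact h1.congr_set_ae MeasureTheory.Ioo_ae_eq_Ioc.symm

private lemma tg_conj_mul (z : ℂ) : (starRingEnd ℂ) z * z = ((‖z‖^2 : ℝ) : ℂ) := by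
  rw [← Complex.normSq_eq_conj_mul_self, Complex.normSq_eq_norm_sq]

private lemma tg_re_conj_mul (z : ℂ) : ((starRingEnd ℂ) z * z).re = ‖z‖^2 := by
  rw [tg_conj_mul, Complex.ofReal_re]

private lemma tg_deriv_re_mul {f h : ℝ → ℂ} {f' h' : ℂ} {x : ℝ}
    (hf : HasDerivAt f f' x) (hh : HasDerivAt h h' x) :
    HasDerivAt (fun y => ((starRingEnd ℂ) (f y) * h y).re)
      (((starRingEnd ℂ) f' * h x).re + ((starRingEnd ℂ) (f x) * h').re) x := by
  have hconj : HasDerivAt (fun y => (starRingEnd ℂ) (f y)) ((starRingEnd ℂ) f') x := hf.star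
  have hprod := hconj.mul hh
  have h3 := (Complex.reCLM.hasFDerivAt).comp_hasDerivAt x hprod
  simpa only [Function.comp_def, Complex.reCLM_apply, Complex.add_re, Pi.mul_apply] using h3

private lemma tg_deriv_sq_norm {f : ℝ → ℂ} {f' : ℂ} {x : ℝ} (hf : HasDerivAt f f' x) :
    HasDerivAt (fun y => ‖f y‖^2) (2 * ((starRingEnd ℂ) (f x) * f').re) x := by
  have h := tg_deriv_re_mul hf hf
  have hfun : (fun y => ((starRingEnd ℂ) (f y) * f y).re) = fun y => ‖f y‖^2 := by
    funext z; rw [tg_re_conj_mul]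
  rw [hfun] at h
  convert h using 1
  have hsym : ((starRingEnd ℂ) f' * f x).re = ((starRingEnd ℂ) (f x) * f').re := by
    simp only [Complex.mul_re, Complex.conj_re, Complex.conj_im]
    ring
  rw [hsym]
  ring

private lemma tg_deriv_re_mul' {f h : ℝ → ℂ} {f' h' : ℂ} {x : ℝ}
    (hf : HasDerivAt f f' x) (hh : HasDerivAt h h' x) :
    HasDerivAt (fun y => ((starRingEnd ℂ) (f y) * h y).re)
      (‖f'‖^2 * 0 + (((starRingEnd ℂ) f' * h x).re + ((starRingEnd ℂ) (f x) * h').re)) x := by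
  simpa using tg_deriv_re_mul hf hh

private lemma tg_core (β : ℝ) (hβ : β ^ 2 < 1 / 4) (m : ℕ) (hm : 1 ≤ m)
    (c : ℂ) (hc : c.re ≤ 0)
    (ψ ψ' ψ'' : ℝ → ℂ)
    (hψ : ContinuousOn ψ (Set.Icc 0 1))
    (hψ' : ContinuousOn ψ' (Set.Icc 0 1))
    (hψ'' : ContinuousOn ψ'' (Set.Icc 0 1))
    (hd1 : ∀ y ∈ Set.Ioo (0 : ℝ) 1, HasDerivAt ψ (ψ' y) y)
    (hd2 : ∀ y ∈ Set.Ioo (0 : ℝ) 1, HasDerivAt ψ' (ψ'' y) y)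
    (h0 : ψ 0 = 0) (h1 : ψ 1 = 0)
    (heq : ∀ y ∈ Set.Ioo (0 : ℝ) 1,
      ψ'' y - (m : ℂ) ^ 2 * ψ y + (β : ℂ) ^ 2 * ψ y / ((y : ℂ) - c) ^ 2 = 0) :
    ∀ y ∈ Set.Icc (0 : ℝ) 1, ψ y = 0 := by
  have h01 : (0:ℝ) ≤ 1 := zero_le_one
  -- FTC representation of ψ
  have key : ∀ y ∈ Icc (0:ℝ) 1, ψ y = ∫ t in (0:ℝ)..y, ψ' t := by
    intro y hy
    have := integral_eq_sub_of_hasDeriv_right_of_le hy.1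
      (hψ.mono (Icc_subset_Icc le_rfl hy.2))
      (fun x hx => (hd1 x ⟨hx.1, lt_of_lt_of_le hx.2 hy.2⟩).hasDerivWithinAt)
      ((hψ'.mono (Icc_subset_Icc le_rfl hy.2)).intervalIntegrable_of_Icc hy.1)
    rw [this, h0, sub_zero]
  -- uniform bound on ψ'
  obtain ⟨M0, hM0⟩ := (isCompact_Icc : IsCompact (Icc (0:ℝ) 1)).exists_bound_of_continuousOn hψ'
  set M : ℝ := max M0 0 with hMdef
  have hM : ∀ x ∈ Icc (0:ℝ) 1, ‖ψ' x‖ ≤ M := fun x hx => (hM0 x hx).trans (le_max_left _ _)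
  have hMnn : (0:ℝ) ≤ M := le_max_right _ _
  have hψle : ∀ y ∈ Icc (0:ℝ) 1, ‖ψ y‖ ≤ M * y := by
    intro y hy
    rw [key y hy]
    have hb : ∀ x ∈ Set.uIoc (0:ℝ) y, ‖ψ' x‖ ≤ M := by
      intro x hx
      rw [uIoc_of_le hy.1] at hx
      exact hM x ⟨le_of_lt hx.1, hx.2.trans hy.2⟩
    have := intervalIntegral.norm_integral_le_of_norm_le_const hb
    simpa [abs_of_nonneg hy.1] using this
  set g : ℝ → ℝ := fun y => ‖ψ y‖ ^ 2 with hgdef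
  set gd : ℝ → ℝ := fun y => 2 * ((starRingEnd ℂ) (ψ y) * ψ' y).re with hgddef
  set r : ℝ → ℝ := fun y => (((((y:ℝ):ℂ) - c) ^ 2)⁻¹).re with hrdef
  have hg_cont : ContinuousOn g (Icc (0:ℝ) 1) := hψ.norm.pow 2
  have hgnn : ∀ y, 0 ≤ g y := fun y => sq_nonneg _
  have hgle : ∀ y ∈ Icc (0:ℝ) 1, g y ≤ (M*y)^2 := fun y hy =>
    pow_le_pow_left₀ (norm_nonneg _) (hψle y hy) 2
  have hg0 : g 0 = 0 := by simp [hgdef, h0]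
  have hg1 : g 1 = 0 := by simp [hgdef, h1]
  have h_ne : ∀ y ∈ Ioo (0:ℝ) 1, ((y:ℂ) - c) ≠ 0 := by
    intro y hy h
    have : ((y:ℂ) - c).re = 0 := by rw [h]; simp
    simp only [Complex.sub_re, Complex.ofReal_re] at this
    linarith [hy.1]
  have habs : ∀ y ∈ Ioo (0:ℝ) 1, y ≤ ‖(y:ℂ) - c‖ := by
    intro y hy
    have h2 := Complex.re_le_norm ((y:ℂ) - c)
    simp only [Complex.sub_re, Complex.ofReal_re] at h2
    linarith
  have hr_bd : ∀ y ∈ Ioo (0:ℝ) 1, |r y| ≤ (y^2)⁻¹ := by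
    intro y hy
    have h1' : |r y| ≤ (‖(((y:ℝ):ℂ) - c)^2‖)⁻¹ := by
      rw [← norm_inv]
      exact Complex.abs_re_le_norm _
    have h2' : (y:ℝ)^2 ≤ ‖(((y:ℝ):ℂ) - c)^2‖ := by
      rw [norm_pow]
      exact pow_le_pow_left₀ (le_of_lt hy.1) (habs y hy) 2
    exact h1'.trans (inv_anti₀ (pow_pos hy.1 2) h2')
  have hr_cont : ContinuousOn r (Ioo (0:ℝ) 1) := by
    apply Complex.continuous_re.comp_continuousOn
    apply ContinuousOn.inv₀
    · exact ((Complex.continuous_ofReal.sub continuous_const).pow 2).continuousOn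
    · exact fun y hy => pow_ne_zero 2 (h_ne y hy)
  -- integrability facts
  have hIJ : IntervalIntegrable (fun y => ‖ψ' y‖^2) volume 0 1 :=
    (hψ'.norm.pow 2).intervalIntegrable_of_Icc h01
  have hIK : IntervalIntegrable g volume 0 1 := hg_cont.intervalIntegrable_of_Icc h01
  have hgr_bd : ∀ y ∈ Ioo (0:ℝ) 1, |g y * r y| ≤ M^2 := by
    intro y hy
    have hy0 : (0:ℝ) < y := hy.1
    have : |g y * r y| ≤ (M*y)^2 * (y^2)⁻¹ := by
      rw [abs_mul, abs_of_nonneg (hgnn y)]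
      exact mul_le_mul (hgle y (Ioo_subset_Icc_self hy)) (hr_bd y hy) (abs_nonneg _)
        (by positivity)
    calc |g y * r y| ≤ (M*y)^2 * (y^2)⁻¹ := this
      _ = M^2 := by field_simp
  have hIgr : IntervalIntegrable (fun y => g y * r y) volume 0 1 :=
    tg_bddII ((hg_cont.mono Ioo_subset_Icc_self).mul hr_cont) hgr_bd
  have hgy2_bd : ∀ y ∈ Ioo (0:ℝ) 1, |g y / y^2| ≤ M^2 := by
    intro y hy
    have hy0 : (0:ℝ) < y := hy.1
    rw [abs_div, abs_of_nonneg (hgnn y), abs_of_nonneg (by positivity : (0:ℝ) ≤ y^2)]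
    rw [div_le_iff₀ (by positivity)]
    calc g y ≤ (M*y)^2 := hgle y (Ioo_subset_Icc_self hy)
      _ = M^2 * y^2 := by ring
  have hIgy2 : IntervalIntegrable (fun y => g y / y^2) volume 0 1 := by
    apply tg_bddII _ hgy2_bd
    exact (hg_cont.mono Ioo_subset_Icc_self).div ((continuous_pow 2).continuousOn)
      (fun y hy => ne_of_gt (pow_pos hy.1 2))
  have hgd_le : ∀ y, gd y ≤ 2 * ‖ψ y‖ * ‖ψ' y‖ := by
    intro y
    have h2 := Complex.re_le_norm ((starRingEnd ℂ) (ψ y) * ψ' y)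
    have h3 : ‖(starRingEnd ℂ) (ψ y) * ψ' y‖ = ‖ψ y‖ * ‖ψ' y‖ := by
      simp [map_mul]
    rw [h3] at h2
    simp only [hgddef]
    nlinarith
  have hgd_abs : ∀ y, |gd y| ≤ 2 * ‖ψ y‖ * ‖ψ' y‖ := by
    intro y
    have h2 := Complex.abs_re_le_norm ((starRingEnd ℂ) (ψ y) * ψ' y)
    have h3 : ‖(starRingEnd ℂ) (ψ y) * ψ' y‖ = ‖ψ y‖ * ‖ψ' y‖ := by
      simp [map_mul]
    rw [h3] at h2
    simp only [hgddef, abs_mul]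
    rw [abs_of_nonneg (by norm_num : (0:ℝ) ≤ 2)]
    nlinarith
  have hgd_cont : ContinuousOn gd (Icc (0:ℝ) 1) := by
    apply ContinuousOn.mul continuousOn_const
    exact Complex.continuous_re.comp_continuousOn
      ((continuous_star.comp_continuousOn hψ).mul hψ')
  have hIgd : IntervalIntegrable (fun y => gd y / y) volume 0 1 := by
    have hcont' : ContinuousOn (fun y:ℝ => gd y / y) (Ioo 0 1) :=
      ContinuousOn.div (hgd_cont.mono Ioo_subset_Icc_self) continuous_id.continuousOn
        (fun y hy => ne_of_gt hy.1)
    apply tg_bddII hcont'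
    intro y hy
    have hy0 : (0:ℝ) < y := hy.1
    rw [abs_div, abs_of_nonneg (le_of_lt hy0), div_le_iff₀ hy0]
    calc |gd y| ≤ 2 * ‖ψ y‖ * ‖ψ' y‖ := hgd_abs y
      _ ≤ 2 * (M * y) * M := by
          apply mul_le_mul _ (hM y (Ioo_subset_Icc_self hy)) (norm_nonneg _) (by positivity)
          exact mul_le_mul_of_nonneg_left (hψle y (Ioo_subset_Icc_self hy)) (by norm_num)
      _ = 2 * M^2 * y := by ring
  -- FTC identity A (energy identity)
  have hFtcA : ∫ y in (0:ℝ)..1, (‖ψ' y‖^2 + ((starRingEnd ℂ) (ψ y) * ψ'' y).re) = 0 := by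
    have hcont : ContinuousOn (fun y => ((starRingEnd ℂ) (ψ y) * ψ' y).re) (Icc 0 1) :=
      Complex.continuous_re.comp_continuousOn ((continuous_star.comp_continuousOn hψ).mul hψ')
    have hderiv : ∀ x ∈ Ioo (0:ℝ) 1, HasDerivWithinAt (fun y => ((starRingEnd ℂ) (ψ y) * ψ' y).re)
        (‖ψ' x‖^2 + ((starRingEnd ℂ) (ψ x) * ψ'' x).re) (Ioi x) x := by
      intro x hx
      have h3 := tg_deriv_re_mul (hd1 x hx) (hd2 x hx)
      rw [tg_re_conj_mul] at h3
      exact h3.hasDerivWithinAt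
    have hint : IntervalIntegrable
        (fun y => ‖ψ' y‖^2 + ((starRingEnd ℂ) (ψ y) * ψ'' y).re) volume 0 1 := by
      apply ContinuousOn.intervalIntegrable_of_Icc h01
      exact (hψ'.norm.pow 2).add (Complex.continuous_re.comp_continuousOn
        ((continuous_star.comp_continuousOn hψ).mul hψ''))
    have := integral_eq_sub_of_hasDeriv_right_of_le h01 hcont hderiv hint
    rw [this]
    simp [h0, h1]
  -- rewrite integrand via the equation
  have heqre : ∀ y ∈ Ioo (0:ℝ) 1,
      ‖ψ' y‖^2 + ((starRingEnd ℂ) (ψ y) * ψ'' y).re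
      = (‖ψ' y‖^2 + (m:ℝ)^2 * g y) - β^2 * (g y * r y) := by
    intro y hy
    have h := heq y hy
    have hψ''y : ψ'' y = (m:ℂ)^2 * ψ y - (β:ℂ)^2 * ψ y / (((y:ℝ):ℂ) - c)^2 := by
      linear_combination h
    have hC : (starRingEnd ℂ) (ψ y) * ψ'' y
        = (((m:ℝ)^2 * g y : ℝ) : ℂ) - ((β^2 * g y : ℝ) : ℂ) * ((((y:ℝ):ℂ) - c)^2)⁻¹ := by
      rw [hψ''y]
      have hcm : (starRingEnd ℂ) (ψ y) * ((m:ℂ)^2 * ψ y - (β:ℂ)^2 * ψ y / (((y:ℝ):ℂ) - c)^2)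
          = (m:ℂ)^2 * ((starRingEnd ℂ) (ψ y) * ψ y)
            - (β:ℂ)^2 * ((starRingEnd ℂ) (ψ y) * ψ y) * ((((y:ℝ):ℂ) - c)^2)⁻¹ := by
        field_simp
      rw [hcm, tg_conj_mul]
      push_cast [hgdef]
      ring
    rw [hC]
    simp only [Complex.sub_re, Complex.ofReal_re, Complex.mul_re, Complex.ofReal_im]
    simp only [hrdef]
    ring
  set J : ℝ := ∫ y in (0:ℝ)..1, ‖ψ' y‖^2 with hJdef
  set K : ℝ := ∫ y in (0:ℝ)..1, g y with hKdef
  set I : ℝ := ∫ y in (0:ℝ)..1, g y / y^2 with hIdef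
  have hJnn : 0 ≤ J := integral_nonneg h01 (fun u _ => sq_nonneg _)
  have hKnn : 0 ≤ K := integral_nonneg h01 (fun u _ => hgnn u)
  -- energy identity in split form
  have hA2 : J + (m:ℝ)^2 * K = β^2 * ∫ y in (0:ℝ)..1, g y * r y := by
    have hcongr : ∫ y in (0:ℝ)..1, (‖ψ' y‖^2 + ((starRingEnd ℂ) (ψ y) * ψ'' y).re)
        = ∫ y in (0:ℝ)..1, ((‖ψ' y‖^2 + (m:ℝ)^2 * g y) - β^2 * (g y * r y)) := by
      apply intervalIntegral.integral_congr_ae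
      have h1e : ∀ᵐ x : ℝ ∂(volume : Measure ℝ), x ≠ (1:ℝ) := by
        refine MeasureTheory.mem_ae_iff.2 ?_
        have h2 : (volume : Measure ℝ) {(1:ℝ)} = 0 := measure_singleton _
        convert h2 using 2
        ext x
        simp
      filter_upwards [h1e] with x hx hmem
      rw [uIoc_of_le h01] at hmem
      exact heqre x ⟨hmem.1, lt_of_le_of_ne hmem.2 hx⟩
    rw [hcongr] at hFtcA
    rw [intervalIntegral.integral_sub ((hIJ.add (hIK.const_mul _))) (hIgr.const_mul _)] at hFtcA
    rw [intervalIntegral.integral_add hIJ (hIK.const_mul _)] at hFtcA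
    rw [intervalIntegral.integral_const_mul, intervalIntegral.integral_const_mul] at hFtcA
    rw [hJdef, hKdef]
    linarith
  have hRleI : (∫ y in (0:ℝ)..1, g y * r y) ≤ I := by
    apply integral_mono_ae_restrict h01 hIgr hIgy2
    apply tg_ae_Ioo
    intro y hy
    have : r y ≤ (y^2)⁻¹ := (le_abs_self _).trans (hr_bd y hy)
    calc g y * r y ≤ g y * (y^2)⁻¹ := mul_le_mul_of_nonneg_left this (hgnn y)
      _ = g y / y^2 := (div_eq_mul_inv _ _).symm
  -- Hardy inequality: I ≤ 4 J
  have hGcont : ContinuousOn (fun y => -(g y) / y) (Icc (0:ℝ) 1) := by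
    intro y hy
    rcases eq_or_lt_of_le hy.1 with h|h
    · have hy0 : y = 0 := h.symm
      subst hy0
      have htend : Tendsto (fun y => -(g y)/y) (nhdsWithin 0 (Icc (0:ℝ) 1)) (nhds 0) := by
        apply squeeze_zero_norm' (a := fun y => M^2 * y)
        · filter_upwards [self_mem_nhdsWithin] with z hz
          rcases eq_or_lt_of_le hz.1 with h'|h'
          · rw [← h']
            simp
          · have hzpos : (0:ℝ) < z := h'
            rw [Real.norm_eq_abs, abs_div, abs_neg, abs_of_nonneg (hgnn z),
              abs_of_nonneg (le_of_lt hzpos), div_le_iff₀ hzpos]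
            calc g z ≤ (M*z)^2 := hgle z hz
              _ = M^2 * z * z := by ring
        · have : Tendsto (fun y:ℝ => M^2 * y) (nhds 0) (nhds (M^2 * 0)) :=
            (continuous_const.mul continuous_id).tendsto 0
          simpa using this.mono_left nhdsWithin_le_nhds
      have hval : (fun y => -(g y)/y) 0 = 0 := by
        show -(g 0)/0 = 0
        rw [div_zero]
      unfold ContinuousWithinAt
      rw [hval]
      exact htend
    · have hcw : ContinuousWithinAt (fun y => -(g y)/y) (Ioc (0:ℝ) 1) y :=
        (((hg_cont.mono Ioc_subset_Icc_self).neg).div continuousOn_id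
          (fun x hx => ne_of_gt hx.1)) y ⟨h, hy.2⟩
      apply hcw.mono_of_mem_nhdsWithin
      rw [mem_nhdsWithin]
      exact ⟨Ioi 0, isOpen_Ioi, h, fun x hx => ⟨hx.1, hx.2.2⟩⟩
  have hGderiv : ∀ x ∈ Ioo (0:ℝ) 1, HasDerivWithinAt (fun y => -(g y)/y)
      (g x / x^2 - gd x / x) (Ioi x) x := by
    intro x hx
    have hx0 : (0:ℝ) < x := hx.1
    have hgx : HasDerivAt g (gd x) x := tg_deriv_sq_norm (hd1 x hx)
    have hdiv : HasDerivAt (fun y => -(g y)/y)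
        (((-(gd x)) * x - (-(g x)) * 1) / x^2) x :=
      (hgx.neg).div (hasDerivAt_id x) (ne_of_gt hx0)
    have heqd : ((-(gd x)) * x - (-(g x)) * 1) / x^2 = g x / x^2 - gd x / x := by
      field_simp
      ring
    rw [heqd] at hdiv
    exact hdiv.hasDerivWithinAt
  have hFtcB : ∫ y in (0:ℝ)..1, (g y / y^2 - gd y / y) = 0 := by
    have := integral_eq_sub_of_hasDeriv_right_of_le h01 hGcont hGderiv (hIgy2.sub hIgd)
    rw [this]
    simp [hg0, hg1]
  have hBsplit : I = ∫ y in (0:ℝ)..1, gd y / y := by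
    rw [intervalIntegral.integral_sub hIgy2 hIgd] at hFtcB
    linarith
  have hIle : I ≤ I/2 + 2*J := by
    have hmono2 : (∫ y in (0:ℝ)..1, gd y / y)
        ≤ ∫ y in (0:ℝ)..1, (g y / y^2 / 2 + 2*‖ψ' y‖^2) := by
      apply integral_mono_ae_restrict h01 hIgd ((hIgy2.div_const 2).add (hIJ.const_mul 2))
      apply tg_ae_Ioo
      intro x hx
      have hx0 : (0:ℝ) < x := hx.1
      have h5 : gd x / x ≤ 2*‖ψ x‖*‖ψ' x‖ / x :=
        (div_le_div_iff_of_pos_right hx0).2 (hgd_le x)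
      have h6 : 2*‖ψ x‖*‖ψ' x‖ / x = 2*(‖ψ x‖/x)*‖ψ' x‖ := by
        field_simp
      have h7 : g x / x^2 = (‖ψ x‖/x)^2 := by
        simp [hgdef, div_pow]
      calc gd x / x ≤ 2*(‖ψ x‖/x)*‖ψ' x‖ := by rw [← h6]; exact h5
        _ ≤ (‖ψ x‖/x)^2/2 + 2*‖ψ' x‖^2 := by
            nlinarith [sq_nonneg (‖ψ x‖/x - 2*‖ψ' x‖)]
        _ = g x / x^2 / 2 + 2*‖ψ' x‖^2 := by rw [h7]
    have h9 : (∫ y in (0:ℝ)..1, gd y / y) ≤ I/2 + 2*J := by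
      calc (∫ y in (0:ℝ)..1, gd y / y)
          ≤ ∫ y in (0:ℝ)..1, (g y / y^2 / 2 + 2*‖ψ' y‖^2) := hmono2
        _ = I/2 + 2*J := by
            rw [intervalIntegral.integral_add (hIgy2.div_const 2) (hIJ.const_mul 2),
              intervalIntegral.integral_div, intervalIntegral.integral_const_mul,
              hIdef, hJdef]
    linarith [hBsplit]
  -- combine everything: J = 0
  have hm2 : (1:ℝ) ≤ (m:ℝ)^2 := by
    have : (1:ℝ) ≤ (m:ℝ) := by exact_mod_cast hm
    nlinarith
  have hJ0 : J = 0 := by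
    have hcomb : J + (m:ℝ)^2 * K ≤ β^2 * I := by
      rw [hA2]
      have hb2 : (0:ℝ) ≤ β^2 := sq_nonneg β
      exact mul_le_mul_of_nonneg_left hRleI hb2
    have hI4J : I ≤ 4*J := by linarith
    have hmK : 0 ≤ (m:ℝ)^2 * K := mul_nonneg (sq_nonneg _) hKnn
    have hJle : J ≤ 0 := by
      nlinarith [mul_le_mul_of_nonneg_left hI4J (sq_nonneg β), hcomb, hmK, hβ, hJnn]
    exact le_antisymm hJle hJnn
  -- conclude pointwise vanishing
  intro y hy
  rcases eq_or_lt_of_le hy.1 with hy0|hy0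
  · rw [← hy0]; exact h0
  by_contra hne
  have hpos : 0 < ‖ψ y‖ := norm_pos_iff.2 hne
  set t : ℝ := y / ‖ψ y‖ with htdef
  have htpos : 0 < t := div_pos hy0 hpos
  have hJy : (∫ s in (0:ℝ)..y, ‖ψ' s‖^2) = 0 := by
    have hint1 : IntervalIntegrable (fun s => ‖ψ' s‖^2) volume 0 y :=
      ((hψ'.norm.pow 2).mono (Icc_subset_Icc le_rfl hy.2)).intervalIntegrable_of_Icc hy.1
    have hint2 : IntervalIntegrable (fun s => ‖ψ' s‖^2) volume y 1 :=
      ((hψ'.norm.pow 2).mono (Icc_subset_Icc hy.1 le_rfl)).intervalIntegrable_of_Icc hy.2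
    have hadd := intervalIntegral.integral_add_adjacent_intervals hint1 hint2
    have hnn1 : 0 ≤ ∫ s in (0:ℝ)..y, ‖ψ' s‖^2 :=
      integral_nonneg hy.1 (fun u _ => sq_nonneg _)
    have hnn2 : 0 ≤ ∫ s in y..1, ‖ψ' s‖^2 :=
      integral_nonneg hy.2 (fun u _ => sq_nonneg _)
    have : (∫ s in (0:ℝ)..y, ‖ψ' s‖^2) + (∫ s in y..1, ‖ψ' s‖^2) = J := hadd
    linarith
  have hbound : ‖ψ y‖ ≤ ∫ s in (0:ℝ)..y, ‖ψ' s‖ := by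
    rw [key y hy]
    exact intervalIntegral.norm_integral_le_integral_norm hy.1
  have hptw : ∀ s ∈ Icc (0:ℝ) y, ‖ψ' s‖ ≤ t/2 * ‖ψ' s‖^2 + 1/(2*t) := by
    intro s _
    have h2t : (0:ℝ) < 2*t := by linarith
    have hkey : (t*‖ψ' s‖ - 1)^2 / (2*t) = t/2*‖ψ' s‖^2 + 1/(2*t) - ‖ψ' s‖ := by
      field_simp
      ring
    linarith [div_nonneg (sq_nonneg (t*‖ψ' s‖ - 1)) (le_of_lt h2t), hkey.ge, hkey.le]
  have hint1 : IntervalIntegrable (fun s => ‖ψ' s‖) volume 0 y :=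
    ((hψ'.norm).mono (Icc_subset_Icc le_rfl hy.2)).intervalIntegrable_of_Icc hy.1
  have hint2 : IntervalIntegrable (fun s => ‖ψ' s‖^2) volume 0 y :=
    ((hψ'.norm.pow 2).mono (Icc_subset_Icc le_rfl hy.2)).intervalIntegrable_of_Icc hy.1
  have hmono3 : (∫ s in (0:ℝ)..y, ‖ψ' s‖)
      ≤ ∫ s in (0:ℝ)..y, (t/2 * ‖ψ' s‖^2 + 1/(2*t)) :=
    integral_mono_on hy.1 hint1 ((hint2.const_mul _).add intervalIntegrable_const) hptw
  have hval : (∫ s in (0:ℝ)..y, (t/2 * ‖ψ' s‖^2 + 1/(2*t))) = y/(2*t) := by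
    rw [intervalIntegral.integral_add (hint2.const_mul _) intervalIntegrable_const,
      intervalIntegral.integral_const_mul, hJy, intervalIntegral.integral_const]
    rw [smul_eq_mul]
    ring
  have hfin : ‖ψ y‖ ≤ ‖ψ y‖ / 2 := by
    have : y/(2*t) = ‖ψ y‖/2 := by
      rw [htdef]
      field_simp
    linarith [hbound.trans (hmono3.trans_eq hval)]
  linarith

/-- No eigenvalues with `Re c ≤ 0` or `Re c ≥ 1` for `β² < 1/4`: every `C²` solution
`ψ : [0,1] → ℂ` (with derivatives `ψ'`, `ψ''`) of the homogeneous Taylor–Goldstein equation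
`ψ'' - m²ψ + β²ψ/(y-c)² = 0` on `(0,1)` with `ψ(0) = ψ(1) = 0` vanishes identically. -/
theorem stmt11 (β : ℝ) (hβ0 : 0 < β) (hβ : β ^ 2 < 1 / 4) (m : ℕ) (hm : 1 ≤ m)
    (c : ℂ) (hc : c.re ≤ 0 ∨ 1 ≤ c.re)
    (ψ ψ' ψ'' : ℝ → ℂ)
    (hψ : ContinuousOn ψ (Set.Icc 0 1))
    (hψ' : ContinuousOn ψ' (Set.Icc 0 1))
    (hψ'' : ContinuousOn ψ'' (Set.Icc 0 1))
    (hd1 : ∀ y ∈ Set.Ioo (0 : ℝ) 1, HasDerivAt ψ (ψ' y) y)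
    (hd2 : ∀ y ∈ Set.Ioo (0 : ℝ) 1, HasDerivAt ψ' (ψ'' y) y)
    (h0 : ψ 0 = 0) (h1 : ψ 1 = 0)
    (heq : ∀ y ∈ Set.Ioo (0 : ℝ) 1,
      ψ'' y - (m : ℂ) ^ 2 * ψ y + (β : ℂ) ^ 2 * ψ y / ((y : ℂ) - c) ^ 2 = 0) :
    ∀ y ∈ Set.Icc (0 : ℝ) 1, ψ y = 0 := by
  rcases hc with hc | hc
  · exact tg_core β hβ m hm c hc ψ ψ' ψ'' hψ hψ' hψ'' hd1 hd2 h0 h1 heq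
  · -- reflect: φ y = ψ (1 - y)
    have hmap : ∀ y ∈ Set.Icc (0:ℝ) 1, (1 - y) ∈ Set.Icc (0:ℝ) 1 := by
      intro y hy; exact ⟨by linarith [hy.2], by linarith [hy.1]⟩
    have hmapo : ∀ y ∈ Set.Ioo (0:ℝ) 1, (1 - y) ∈ Set.Ioo (0:ℝ) 1 := by
      intro y hy; exact ⟨by linarith [hy.2], by linarith [hy.1]⟩
    have hrefl : Continuous (fun y:ℝ => 1 - y) := continuous_const.sub continuous_id
    have hrd : ∀ y : ℝ, HasDerivAt (fun z:ℝ => 1 - z) (-1) y := by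
      intro y
      exact (hasDerivAt_id' y).const_sub 1
    set φ : ℝ → ℂ := fun y => ψ (1 - y) with hφdef
    set φ' : ℝ → ℂ := fun y => -ψ' (1 - y) with hφ'def
    set φ'' : ℝ → ℂ := fun y => ψ'' (1 - y) with hφ''def
    have hres : ∀ y ∈ Set.Icc (0:ℝ) 1, φ y = 0 := by
      apply tg_core β hβ m hm (1 - c) (by simp [Complex.sub_re, Complex.one_re]; linarith)
        φ φ' φ'' (hψ.comp hrefl.continuousOn hmap)
        ((hψ'.comp hrefl.continuousOn hmap).neg)
        (hψ''.comp hrefl.continuousOn hmap)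
      · intro y hy
        have := HasDerivAt.comp_const_sub 1 y (hd1 (1 - y) (hmapo y hy))
        simpa [hφdef, hφ'def] using this
      · intro y hy
        have h2 := (HasDerivAt.comp_const_sub 1 y (hd2 (1 - y) (hmapo y hy))).neg
        rw [neg_neg] at h2; exact h2
      · simp [hφdef, h1]
      · simp [hφdef, h0]
      · intro y hy
        have h := heq (1 - y) (hmapo y hy)
        have hsq : (((1 - y : ℝ) : ℂ) - c)^2 = ((y:ℂ) - (1 - c))^2 := by
          push_cast
          ring
        rw [hsq] at h
        simpa [hφdef, hφ'def, hφ''def] using h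
    intro y hy
    have := hres (1 - y) (hmap y hy)
    simpa [hφdef] using this
end

section
/- Let β > 0, m ≥ 1 an integer, and let c ∈ ℂ satisfy |y−c| > β/m for every y ∈ [0,1]. If ψ : [0,1] → ℂ is C² with ψ(0) = ψ(1) = 0 and ψ''(y) − m²ψ(y) + β²ψ(y)/(y−c)² = 0 for all y ∈ (0,1), then ψ ≡ 0. (Thus all eigenvalues of the Taylor–Goldstein boundary value problem lie in the set {c : dist(c,[0,1]) ≤ β/m}.) -/
open MeasureTheory Set intervalIntegral

/-- Eigenvalues of the Taylor–Goldstein boundary value problem lie within distance `β/m` of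
`[0,1]`: if `|y - c| > β/m` for all `y ∈ [0,1]`, then every `C²` solution `ψ : [0,1] → ℂ`
(with derivatives `ψ'`, `ψ''`) of `ψ'' - m²ψ + β²ψ/(y-c)² = 0` on `(0,1)` with
`ψ(0) = ψ(1) = 0` vanishes identically. -/
theorem stmt12 (β : ℝ) (hβ0 : 0 < β) (m : ℕ) (hm : 1 ≤ m)
    (c : ℂ) (hc : ∀ y ∈ Set.Icc (0 : ℝ) 1, β / m < ‖(y : ℂ) - c‖)
    (ψ ψ' ψ'' : ℝ → ℂ)
    (hψ : ContinuousOn ψ (Set.Icc 0 1))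
    (hψ' : ContinuousOn ψ' (Set.Icc 0 1))
    (hψ'' : ContinuousOn ψ'' (Set.Icc 0 1))
    (hd1 : ∀ y ∈ Set.Ioo (0 : ℝ) 1, HasDerivAt ψ (ψ' y) y)
    (hd2 : ∀ y ∈ Set.Ioo (0 : ℝ) 1, HasDerivAt ψ' (ψ'' y) y)
    (h0 : ψ 0 = 0) (h1 : ψ 1 = 0)
    (heq : ∀ y ∈ Set.Ioo (0 : ℝ) 1,
      ψ'' y - (m : ℂ) ^ 2 * ψ y + (β : ℂ) ^ 2 * ψ y / ((y : ℂ) - c) ^ 2 = 0) :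
    ∀ y ∈ Set.Icc (0 : ℝ) 1, ψ y = 0 := by
  have hm' : (0:ℝ) < m := by exact_mod_cast Nat.lt_of_lt_of_le Nat.zero_lt_one hm
  have hβm : 0 < β / m := div_pos hβ0 hm'
  -- minimum of |y - c| on [0,1]
  have habs : ContinuousOn (fun y : ℝ => ‖(y:ℂ) - c‖) (Icc 0 1) :=
    (continuous_norm.comp (by continuity)).continuousOn
  obtain ⟨y₀, hy₀, hmin⟩ :=
    isCompact_Icc.exists_isMinOn (nonempty_Icc.2 zero_le_one) habs
  set d := ‖(y₀:ℂ) - c‖ with hddef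
  have hdlb : β / m < d := hc y₀ hy₀
  have hdpos : 0 < d := lt_trans hβm hdlb
  have hdall : ∀ y ∈ Icc (0:ℝ) 1, d ≤ ‖(y:ℂ) - c‖ :=
    fun y hy => isMinOn_iff.mp hmin y hy
  have hne : ∀ y ∈ Icc (0:ℝ) 1, ((y:ℂ) - c) ≠ 0 := by
    intro y hy h
    have := hdall y hy
    rw [h] at this
    simp only [norm_zero] at this
    linarith
  set k : ℝ := β^2 / d^2 with hkdef
  have hk : k < (m:ℝ)^2 := by
    rw [hkdef, div_lt_iff₀ (by positivity)]
    have hb : β < d * m := (div_lt_iff₀ hm').mp hdlb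
    nlinarith
  -- pointwise bound
  have hbound : ∀ y ∈ Icc (0:ℝ) 1, β^2 * ((((y:ℂ)-c)^2)⁻¹).re ≤ k := by
    intro y hy
    have h1' : ‖(((y:ℂ)-c)^2)⁻¹‖ = (‖(y:ℂ)-c‖^2)⁻¹ := by
      rw [norm_inv, norm_pow]
    have h2' : (‖(y:ℂ)-c‖^2)⁻¹ ≤ (d^2)⁻¹ := by
      apply inv_anti₀ (by positivity)
      have := hdall y hy
      nlinarith
    have h3' : ((((y:ℂ)-c)^2)⁻¹).re ≤ (d^2)⁻¹ :=
      le_trans (Complex.re_le_norm _) (h1' ▸ h2')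
    have : β^2 * ((((y:ℂ)-c)^2)⁻¹).re ≤ β^2 * (d^2)⁻¹ :=
      mul_le_mul_of_nonneg_left h3' (by positivity)
    rw [hkdef, div_eq_mul_inv]
    exact this
  -- integration by parts
  set G : ℝ → ℂ := fun y => ψ'' y * (starRingEnd ℂ) (ψ y) + ψ' y * (starRingEnd ℂ) (ψ' y)
    with hGdef
  have hGcont : ContinuousOn G (Icc 0 1) :=
    (hψ''.mul hψ.star).add (hψ'.mul hψ'.star)
  have hGint : IntervalIntegrable G volume 0 1 :=
    ContinuousOn.intervalIntegrable (by rw [Set.uIcc_of_le zero_le_one]; exact hGcont)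
  have hgd : ∀ y ∈ Ioo (0:ℝ) 1,
      HasDerivAt (fun y => ψ' y * (starRingEnd ℂ) (ψ y)) (G y) y :=
    fun y hy => (hd2 y hy).mul ((hd1 y hy).star)
  have hibp : ∫ y in (0:ℝ)..1, G y = 0 := by
    rw [integral_eq_sub_of_hasDerivAt_of_le zero_le_one (hψ'.mul hψ.star) hgd hGint]
    simp [h0, h1]
  -- pass to real parts on Ioo
  have hre : ∫ y in Ioo (0:ℝ) 1, (G y).re = 0 := by
    have hIoc : ∫ y in Ioc (0:ℝ) 1, G y = 0 := by
      rwa [intervalIntegral.integral_of_le zero_le_one] at hibp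
    have hint : IntegrableOn G (Ioc 0 1) := hGint.1
    have : ∫ y in Ioc (0:ℝ) 1, (G y).re = 0 := by
      have h2 := integral_re hint
      rw [hIoc] at h2
      simpa [RCLike.re_to_complex] using h2
    rwa [integral_Ioc_eq_integral_Ioo] at this
  -- pointwise lower bound on the real part
  have hGre : ∀ y ∈ Ioo (0:ℝ) 1,
      ((m:ℝ)^2 - k) * Complex.normSq (ψ y) ≤ (G y).re := by
    intro y hy
    have hyIcc : y ∈ Icc (0:ℝ) 1 := Ioo_subset_Icc_self hy
    have hw : ((y:ℂ) - c) ^ 2 ≠ 0 := pow_ne_zero _ (hne y hyIcc)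
    have hψeq : ψ'' y = (m:ℂ)^2 * ψ y - (β:ℂ)^2 * ψ y / ((y:ℂ)-c)^2 := by
      linear_combination heq y hy
    have hGy : G y = ((m^2 * Complex.normSq (ψ y) : ℝ) : ℂ)
        - ((β^2 * Complex.normSq (ψ y) : ℝ):ℂ) * (((y:ℂ)-c)^2)⁻¹
        + ((Complex.normSq (ψ' y) : ℝ):ℂ) := by
      rw [hGdef]
      simp only [hψeq]
      push_cast
      rw [← Complex.mul_conj, ← Complex.mul_conj]
      field_simp
    rw [hGy]
    simp only [Complex.add_re, Complex.sub_re, Complex.ofReal_re, Complex.re_ofReal_mul]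
    have hb := hbound y hyIcc
    have hn : 0 ≤ Complex.normSq (ψ y) := Complex.normSq_nonneg _
    have hn' : 0 ≤ Complex.normSq (ψ' y) := Complex.normSq_nonneg _
    nlinarith [mul_le_mul_of_nonneg_right hb hn]
  -- integrability of the comparison functions
  have hnsq_cont : ContinuousOn (fun y => Complex.normSq (ψ y)) (Icc 0 1) :=
    Complex.continuous_normSq.comp_continuousOn hψ
  have hnsq_int : IntegrableOn (fun y => Complex.normSq (ψ y)) (Ioo (0:ℝ) 1) :=
    (hnsq_cont.integrableOn_Icc).mono_set Ioo_subset_Icc_self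
  have hGre_int : IntegrableOn (fun y => (G y).re) (Ioo (0:ℝ) 1) :=
    ((Complex.continuous_re.comp_continuousOn hGcont).integrableOn_Icc).mono_set
      Ioo_subset_Icc_self
  -- the integral of |ψ|² vanishes
  have hI : ∫ y in Ioo (0:ℝ) 1, Complex.normSq (ψ y) = 0 := by
    have hmono : ∫ y in Ioo (0:ℝ) 1, ((m:ℝ)^2 - k) * Complex.normSq (ψ y)
        ≤ ∫ y in Ioo (0:ℝ) 1, (G y).re :=
      setIntegral_mono_on (hnsq_int.const_mul _) hGre_int measurableSet_Ioo hGre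
    rw [hre, MeasureTheory.integral_const_mul] at hmono
    have hge : 0 ≤ ∫ y in Ioo (0:ℝ) 1, Complex.normSq (ψ y) :=
      setIntegral_nonneg measurableSet_Ioo fun y _ => Complex.normSq_nonneg _
    nlinarith
  -- hence |ψ|² = 0 a.e. on (0,1)
  have hae : ∀ᵐ y ∂volume, y ∈ Ioo (0:ℝ) 1 → Complex.normSq (ψ y) = 0 := by
    have := (integral_eq_zero_iff_of_nonneg
      (fun y => Complex.normSq_nonneg (ψ y)) hnsq_int).mp hI
    exact (ae_restrict_iff' measurableSet_Ioo).mp this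
  -- ψ vanishes on (0,1) by continuity
  have hIoo : ∀ y ∈ Ioo (0:ℝ) 1, ψ y = 0 := by
    intro y0 hy0
    by_contra hne0
    have hpos : 0 < Complex.normSq (ψ y0) := Complex.normSq_pos.2 hne0
    have hcont : ContinuousAt (fun y => Complex.normSq (ψ y)) y0 :=
      Complex.continuous_normSq.continuousAt.comp
        ((hψ y0 (Ioo_subset_Icc_self hy0)).continuousAt (Icc_mem_nhds hy0.1 hy0.2))
    have hev : ∀ᶠ y in nhds y0, Complex.normSq (ψ y) ≠ 0 :=
      hcont.eventually_ne (ne_of_gt hpos)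
    have hset : {y | y ∈ Ioo (0:ℝ) 1 ∧ Complex.normSq (ψ y) ≠ 0} ∈ nhds y0 :=
      Filter.inter_mem (Ioo_mem_nhds hy0.1 hy0.2) hev
    have hnull : volume {y | ¬ (y ∈ Ioo (0:ℝ) 1 → Complex.normSq (ψ y) = 0)} = 0 :=
      MeasureTheory.ae_iff.mp hae
    have hposM : 0 < volume {y | y ∈ Ioo (0:ℝ) 1 ∧ Complex.normSq (ψ y) ≠ 0} :=
      Measure.measure_pos_of_mem_nhds volume hset
    have hsub : {y | y ∈ Ioo (0:ℝ) 1 ∧ Complex.normSq (ψ y) ≠ 0}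
        ⊆ {y | ¬ (y ∈ Ioo (0:ℝ) 1 → Complex.normSq (ψ y) = 0)} := fun y hy => by
      simp only [mem_setOf_eq] at hy ⊢; tauto
    exact absurd (measure_mono_null hsub hnull) (ne_of_gt hposM)
  intro y hy
  rcases eq_or_lt_of_le hy.1 with h | h
  · rw [← h]; exact h0
  rcases eq_or_lt_of_le hy.2 with h' | h'
  · rw [h']; exact h1
  exact hIoo y ⟨h, h'⟩
end

section
/- Assume β² > 1/4 (so ν = √(β²−1/4) > 0) and let m ≥ 1 be an integer. Define, for c > 0, W_m(c) = M_+(c)·M_-(1+c) − M_-(c)·M_+(1+c). Then there exist sequences (p_k)_{k≥1} and (q_k)_{k≥1} of strictly positive real numbers with p_k → 0 and q_k → 0 as k → ∞, such that |W_m(p_k)| = 2·|M_+(p_k)|·|M_+(1+p_k)| and W_m(q_k) = 0 for all k ≥ 1. -/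
open Complex Filter

/-- For `β² > 1/4` (so `ν = √(β²-1/4)`), `M₊(ζ) = M_{0,iν}(2mζ)`. -/
noncomputable def Mp (β : ℝ) (m : ℕ) (ζ : ℂ) : ℂ :=
  whittakerM (Complex.I * (Real.sqrt (β ^ 2 - 1 / 4) : ℂ)) (2 * (m : ℂ) * ζ)

/-- For `β² > 1/4`, `M₋(ζ) = M_{0,-iν}(2mζ)`. -/
noncomputable def Mm (β : ℝ) (m : ℕ) (ζ : ℂ) : ℂ :=
  whittakerM (-(Complex.I * (Real.sqrt (β ^ 2 - 1 / 4) : ℂ))) (2 * (m : ℂ) * ζ)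

/-- The Wronskian function `W_m(c) = M₊(c) M₋(1+c) - M₋(c) M₊(1+c)` for `c > 0`. -/
noncomputable def Wm (β : ℝ) (m : ℕ) (c : ℝ) : ℂ :=
  Mp β m (c : ℂ) * Mm β m ((1 : ℂ) + (c : ℂ)) - Mm β m (c : ℂ) * Mp β m ((1 : ℂ) + (c : ℂ))

/-! ### Auxiliary material -/

/-- The coefficients of the Kummer series. -/
noncomputable def kcoef (a b : ℂ) (s : ℕ) : ℂ :=
  (ascPochhammer ℂ s).eval a / ((ascPochhammer ℂ s).eval b * (s.factorial : ℂ))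

lemma poch_conj (a : ℂ) (s : ℕ) :
    (ascPochhammer ℂ s).eval ((starRingEnd ℂ) a) = (starRingEnd ℂ) ((ascPochhammer ℂ s).eval a) := by
  induction s with
  | zero => simp
  | succ n ih => simp [ascPochhammer_succ_eval, ih]

lemma poch_abs_ge_one {b : ℂ} (hb : ∀ j : ℕ, 1 ≤ ‖b + j‖) (s : ℕ) :
    1 ≤ ‖(ascPochhammer ℂ s).eval b‖ := by
  induction s with
  | zero => simp
  | succ n ih =>
      rw [ascPochhammer_succ_eval, norm_mul]
      nlinarith [hb n]

lemma poch_abs_le {a b : ℂ} (hb : ∀ j : ℕ, 1 ≤ ‖b + j‖) (s : ℕ) :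
    ‖(ascPochhammer ℂ s).eval a‖ ≤
      ‖(ascPochhammer ℂ s).eval b‖ * (1 + ‖a - b‖) ^ s := by
  induction s with
  | zero => simp
  | succ n ih =>
      rw [ascPochhammer_succ_eval, ascPochhammer_succ_eval, norm_mul, norm_mul]
      have h1 : ‖a + n‖ ≤ ‖b + n‖ * (1 + ‖a - b‖) := by
        have h2 : ‖a + n‖ ≤ ‖b + n‖ + ‖a - b‖ := by
          have : a + n = (b + n) + (a - b) := by ring
          rw [this]; exact norm_add_le _ _
        nlinarith [hb n, norm_nonneg (a - b)]
      have hnn : (0:ℝ) ≤ ‖b + n‖ := norm_nonneg _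
      have hC : (0:ℝ) ≤ (1 + ‖a - b‖) ^ n := by positivity
      calc ‖(ascPochhammer ℂ n).eval a‖ * ‖a + n‖
          ≤ (‖(ascPochhammer ℂ n).eval b‖ * (1 + ‖a - b‖) ^ n) *
            (‖b + n‖ * (1 + ‖a - b‖)) := by
            apply mul_le_mul ih h1 (norm_nonneg _) (by positivity)
        _ = ‖(ascPochhammer ℂ n).eval b‖ * ‖b + n‖ *
            (1 + ‖a - b‖) ^ (n + 1) := by ring

lemma kcoef_abs_le {a b : ℂ} (hb : ∀ j : ℕ, 1 ≤ ‖b + j‖) (s : ℕ) :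
    ‖kcoef a b s‖ ≤ (1 + ‖a - b‖) ^ s / s.factorial := by
  rw [kcoef, norm_div, norm_mul]
  have h1 := poch_abs_ge_one hb s
  have h2 := poch_abs_le (a := a) hb s
  have hfac : (0:ℝ) < (s.factorial : ℝ) := by positivity
  rw [Complex.norm_natCast]
  rw [mul_comm (‖(ascPochhammer ℂ s).eval b‖) ((s.factorial : ℝ))]
  rw [div_le_div_iff₀ (by positivity) hfac]
  calc ‖(ascPochhammer ℂ s).eval a‖ * (s.factorial : ℝ)
      ≤ (‖(ascPochhammer ℂ s).eval b‖ * (1 + ‖a - b‖) ^ s) *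
        (s.factorial : ℝ) := by
        apply mul_le_mul_of_nonneg_right h2 hfac.le
    _ = (1 + ‖a - b‖) ^ s * (‖(ascPochhammer ℂ s).eval b‖ *
        (s.factorial : ℝ)) := by ring
    _ = _ := by ring

lemma kcoef_summable {a b : ℂ} (hb : ∀ j : ℕ, 1 ≤ ‖b + j‖) {r : ℝ} (hr : 0 ≤ r) :
    Summable (fun s => ‖kcoef a b s‖ * r ^ s) := by
  have hsum : Summable (fun s : ℕ => ((1 + ‖a - b‖) * r) ^ s / (s.factorial:ℝ)) :=
    Real.summable_pow_div_factorial _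
  have hnn : ∀ s : ℕ, 0 ≤ ‖kcoef a b s‖ * r ^ s := fun s => by positivity
  have hle : ∀ s : ℕ, ‖kcoef a b s‖ * r ^ s ≤
      ((1 + ‖a - b‖) * r) ^ s / (s.factorial:ℝ) := by
    intro s
    have h := mul_le_mul_of_nonneg_right (kcoef_abs_le (a:=a) hb s) (pow_nonneg hr s)
    calc ‖kcoef a b s‖ * r ^ s
        ≤ (1 + ‖a - b‖) ^ s / (s.factorial:ℝ) * r ^ s := h
      _ = ((1 + ‖a - b‖) * r) ^ s / (s.factorial:ℝ) := by
          rw [mul_pow]; ring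
  exact Summable.of_nonneg_of_le hnn hle hsum

lemma kummerM_eq_tsum {a b : ℂ} (ζ : ℂ) : kummerM a b ζ = ∑' s : ℕ, kcoef a b s * ζ ^ s := rfl

/-- The Kummer series as a formal multilinear series. -/
noncomputable def kseries (a b : ℂ) : FormalMultilinearSeries ℂ ℂ ℂ :=
  FormalMultilinearSeries.ofScalars ℂ (kcoef a b)

lemma kseries_radius {a b : ℂ} (hb : ∀ j : ℕ, 1 ≤ ‖b + j‖) :
    (kseries a b).radius = ⊤ := by
  apply FormalMultilinearSeries.radius_eq_top_of_summable_norm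
  intro r
  have : ∀ n, ‖kseries a b n‖ = ‖kcoef a b n‖ := fun n => by
    rw [kseries, FormalMultilinearSeries.ofScalars_norm]
  simpa [this] using kcoef_summable (a := a) hb (r := (r:ℝ)) r.coe_nonneg

lemma kummerM_eq_sum {a b : ℂ} : kummerM a b = (kseries a b).sum := by
  funext ζ
  rw [kummerM_eq_tsum, FormalMultilinearSeries.sum]
  exact tsum_congr fun n => by
    rw [kseries, FormalMultilinearSeries.ofScalars_apply_eq, smul_eq_mul]

lemma kummerM_analyticAt {a b : ℂ} (hb : ∀ j : ℕ, 1 ≤ ‖b + j‖) (z : ℂ) :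
    AnalyticAt ℂ (kummerM a b) z := by
  rw [kummerM_eq_sum]
  have h0 : (0:ENNReal) < (kseries a b).radius := by
    rw [kseries_radius hb]; exact ENNReal.zero_lt_top
  exact ((kseries a b).hasFPowerSeriesOnBall h0).analyticAt_of_mem
    (by rw [kseries_radius hb]; simp [EMetric.mem_ball, edist_ne_top z 0])

lemma kummerM_zero {a b : ℂ} : kummerM a b 0 = 1 := by
  rw [kummerM_eq_tsum]
  rw [tsum_eq_single 0 (fun s hs => by simp [zero_pow hs])]
  simp [kcoef]

lemma kummerM_conj (a b : ℂ) (x : ℝ) :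
    (starRingEnd ℂ) (kummerM a b x) =
      kummerM ((starRingEnd ℂ) a) ((starRingEnd ℂ) b) x := by
  rw [kummerM, kummerM, Complex.conj_tsum]
  exact tsum_congr fun s => by
    rw [map_mul, map_div₀, map_mul, map_pow, Complex.conj_ofReal, poch_conj, poch_conj,
      map_natCast]

lemma whittakerM_conj (γ : ℂ) {t : ℝ} (ht : 0 < t) :
    (starRingEnd ℂ) (whittakerM γ t) = whittakerM ((starRingEnd ℂ) γ) t := by
  have htne : (t : ℂ) ≠ 0 := by simpa using ne_of_gt ht
  have hlog : Complex.log t = (Real.log t : ℂ) := (Complex.ofReal_log ht.le).symm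
  have hcpow : ∀ w : ℂ, (t : ℂ) ^ w = Complex.exp ((Real.log t : ℂ) * w) := fun w => by
    rw [Complex.cpow_def_of_ne_zero htne, hlog]
  rw [whittakerM, whittakerM, map_mul, map_mul]
  congr 1
  · congr 1
    · rw [← Complex.exp_conj]
      congr 1
      simp [map_div₀, Complex.conj_ofReal, map_ofNat]
    · rw [hcpow, hcpow, ← Complex.exp_conj, map_mul, Complex.conj_ofReal]
      congr 2
      rw [map_add, map_div₀, map_one]
      rw [show ((starRingEnd ℂ) 2) = 2 from map_ofNat _ 2]
  · rw [kummerM_conj]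
    congr 2 <;> simp [mul_comm, map_ofNat]

/-- Main analytic engine: for a continuous `H` nonvanishing at `0` and `ν > 0`, the function
`c ↦ Re (e^{iν log c} H(c))` has zeros accumulating at `0⁺`. -/
lemma engine {ν : ℝ} (hν : 0 < ν) {ε : ℝ} (hε : 0 < ε) (H : ℝ → ℂ)
    (hH : ContinuousOn H (Set.Icc 0 ε)) (h0 : H 0 ≠ 0) :
    ∃ p : ℕ → ℝ, (∀ k, p k ∈ Set.Ioc (0:ℝ) ε) ∧ Tendsto p atTop (nhds 0) ∧
      ∀ k, (Complex.exp (Complex.I * ((ν : ℂ) * (Real.log (p k) : ℂ))) * H (p k)).re = 0 := by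
  set r₀ := ‖H 0‖ with hr₀def
  have hr₀ : 0 < r₀ := by simpa [hr₀def] using (norm_pos_iff.mpr h0)
  set α := Complex.arg (H 0) with hαdef
  have hkey : H 0 = (r₀ : ℂ) * Complex.exp ((α : ℂ) * Complex.I) :=
    (Complex.norm_mul_exp_arg_mul_I (H 0)).symm
  have hcw : ContinuousWithinAt H (Set.Icc 0 ε) 0 := hH 0 ⟨le_refl 0, hε.le⟩
  obtain ⟨δ, hδpos, hδ⟩ := Metric.tendsto_nhdsWithin_nhds.mp hcw (r₀ / 2) (by positivity)
  set ε' := min ε (δ / 2) with hε'def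
  have hε'pos : 0 < ε' := lt_min hε (by positivity)
  have hε'le : ε' ≤ ε := min_le_left _ _
  have hsmall : ∀ c : ℝ, 0 ≤ c → c ≤ ε' → ‖H c - H 0‖ < r₀ / 2 := by
    intro c hc0 hcε'
    have h1 : c ∈ Set.Icc 0 ε := ⟨hc0, hcε'.trans hε'le⟩
    have h2 : dist c 0 < δ := by
      rw [Real.dist_eq, sub_zero, _root_.abs_of_nonneg hc0]
      exact lt_of_le_of_lt (hcε'.trans (min_le_right _ _)) (by linarith)
    simpa [Complex.dist_eq] using hδ h1 h2
  set u : ℕ → ℝ := fun k => Real.exp ((-α - 2 * Real.pi * k) / ν) with hudef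
  set v : ℕ → ℝ := fun k => Real.exp ((-α + Real.pi - 2 * Real.pi * k) / ν) with hvdef
  have hupos : ∀ k, 0 < u k := fun k => Real.exp_pos _
  have hvpos : ∀ k, 0 < v k := fun k => Real.exp_pos _
  have huv : ∀ k, u k ≤ v k := by
    intro k
    apply Real.exp_le_exp.mpr
    apply div_le_div_of_nonneg_right (c := ν) ?_ hν.le
    linarith [Real.pi_pos]
  have hlogu : ∀ k, ν * Real.log (u k) = -α - 2 * Real.pi * k := by
    intro k; rw [hudef]; simp only []; rw [Real.log_exp, mul_div_cancel₀ _ (ne_of_gt hν)]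
  have hlogv : ∀ k, ν * Real.log (v k) = -α + Real.pi - 2 * Real.pi * k := by
    intro k; rw [hvdef]; simp only []; rw [Real.log_exp, mul_div_cancel₀ _ (ne_of_gt hν)]
  have hvtend : Tendsto v atTop (nhds (0:ℝ)) := by
    have h1 : Tendsto (fun k : ℕ => (-α + Real.pi - 2 * Real.pi * k) / ν) atTop atBot := by
      apply Tendsto.atBot_div_const hν
      have h2 : Tendsto (fun k : ℕ => -(2 * Real.pi) * (k:ℝ)) atTop atBot :=
        Tendsto.const_mul_atTop_of_neg (by linarith [Real.pi_pos])
          tendsto_natCast_atTop_atTop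
      have h3 := tendsto_atBot_add_const_left atTop (-α + Real.pi) h2
      convert h3 using 2 with k
      ring
    exact Real.tendsto_exp_atBot.comp h1
  have hvalu : ∀ k, Complex.exp (Complex.I * ((ν : ℂ) * (Real.log (u k) : ℂ))) * H 0
      = (r₀ : ℂ) := by
    intro k
    have harg : Complex.I * ((ν : ℂ) * (Real.log (u k) : ℂ)) + (α : ℂ) * Complex.I
        = ((-(k:ℤ) : ℤ) : ℂ) * (2 * (Real.pi : ℂ) * Complex.I) := by
      rw [show (ν : ℂ) * (Real.log (u k) : ℂ) = ((ν * Real.log (u k) : ℝ) : ℂ) by push_cast; ring,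
        hlogu k]
      push_cast; ring
    rw [hkey, show Complex.exp (Complex.I * ((ν : ℂ) * (Real.log (u k) : ℂ))) *
        ((r₀ : ℂ) * Complex.exp ((α : ℂ) * Complex.I)) = (r₀ : ℂ) *
        Complex.exp (Complex.I * ((ν : ℂ) * (Real.log (u k) : ℂ)) + (α : ℂ) * Complex.I) by
        rw [Complex.exp_add]; ring,
      harg, Complex.exp_int_mul_two_pi_mul_I, mul_one]
  have hvalv : ∀ k, Complex.exp (Complex.I * ((ν : ℂ) * (Real.log (v k) : ℂ))) * H 0
      = -(r₀ : ℂ) := by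
    intro k
    have harg : Complex.I * ((ν : ℂ) * (Real.log (v k) : ℂ)) + (α : ℂ) * Complex.I
        = (Real.pi : ℂ) * Complex.I + ((-(k:ℤ) : ℤ) : ℂ) * (2 * (Real.pi : ℂ) * Complex.I) := by
      rw [show (ν : ℂ) * (Real.log (v k) : ℂ) = ((ν * Real.log (v k) : ℝ) : ℂ) by push_cast; ring,
        hlogv k]
      push_cast; ring
    rw [hkey, show Complex.exp (Complex.I * ((ν : ℂ) * (Real.log (v k) : ℂ))) *
        ((r₀ : ℂ) * Complex.exp ((α : ℂ) * Complex.I)) = (r₀ : ℂ) *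
        Complex.exp (Complex.I * ((ν : ℂ) * (Real.log (v k) : ℂ)) + (α : ℂ) * Complex.I) by
        rw [Complex.exp_add]; ring,
      harg, Complex.exp_add, Complex.exp_int_mul_two_pi_mul_I, mul_one, Complex.exp_pi_mul_I]
    ring
  set F : ℝ → ℝ := fun c => (Complex.exp (Complex.I * ((ν : ℂ) * (Real.log c : ℂ))) * H c).re
    with hFdef
  have habs : ∀ c : ℝ, 0 ≤ c → c ≤ ε' →
      ‖Complex.exp (Complex.I * ((ν : ℂ) * (Real.log c : ℂ))) * H c -
        Complex.exp (Complex.I * ((ν : ℂ) * (Real.log c : ℂ))) * H 0‖ < r₀ / 2 := by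
    intro c h1 h2
    rw [← mul_sub, norm_mul]
    have : ‖Complex.exp (Complex.I * ((ν : ℂ) * (Real.log c : ℂ)))‖ = 1 := by
      simp [Complex.norm_exp]
    rw [this, one_mul]
    exact hsmall c h1 h2
  have hFu : ∀ k, v k ≤ ε' → 0 < F (u k) := by
    intro k hvk
    have h1 := habs (u k) (hupos k).le ((huv k).trans hvk)
    rw [hvalu k] at h1
    have h2 := Complex.abs_re_le_norm
      (Complex.exp (Complex.I * ((ν : ℂ) * (Real.log (u k) : ℂ))) * H (u k) - (r₀ : ℂ))
    rw [Complex.sub_re, Complex.ofReal_re] at h2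
    have h3 := abs_le.mp (h2.trans h1.le)
    rw [hFdef]; simp only []
    linarith [h3.1]
  have hFv : ∀ k, v k ≤ ε' → F (v k) < 0 := by
    intro k hvk
    have h1 := habs (v k) (hvpos k).le hvk
    rw [hvalv k] at h1
    have h2 := Complex.abs_re_le_norm
      (Complex.exp (Complex.I * ((ν : ℂ) * (Real.log (v k) : ℂ))) * H (v k) - (-(r₀ : ℂ)))
    rw [Complex.sub_re, Complex.neg_re, Complex.ofReal_re] at h2
    have h3 := abs_le.mp (h2.trans h1.le)
    rw [hFdef]; simp only []
    linarith [h3.2]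
  obtain ⟨K₀, hK₀⟩ := (hvtend.eventually_lt_const hε'pos).exists_forall_of_atTop
  have hex : ∀ k : ℕ, ∃ x, x ∈ Set.Icc (u (k + K₀)) (v (k + K₀)) ∧ F x = 0 := by
    intro k
    set n := k + K₀ with hndef
    have hvk : v n ≤ ε' := (hK₀ n (by omega)).le
    have hsub : Set.Icc (u n) (v n) ⊆ Set.Icc 0 ε := fun x hx =>
      ⟨(hupos n).le.trans hx.1, hx.2.trans (hvk.trans hε'le)⟩
    have hFcont : ContinuousOn F (Set.Icc (u n) (v n)) := by
      intro c hc
      have hcpos : 0 < c := lt_of_lt_of_le (hupos n) hc.1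
      have hc1 : ContinuousWithinAt
          (fun c : ℝ => Complex.exp (Complex.I * ((ν : ℂ) * (Real.log c : ℂ))))
          (Set.Icc (u n) (v n)) c := by
        apply ContinuousAt.continuousWithinAt
        apply Complex.continuous_exp.continuousAt.comp
        apply ContinuousAt.mul continuousAt_const
        apply ContinuousAt.mul continuousAt_const
        exact Complex.continuous_ofReal.continuousAt.comp (Real.continuousAt_log (ne_of_gt hcpos))
      have hc2 : ContinuousWithinAt H (Set.Icc (u n) (v n)) c :=
        (hH c (hsub hc)).mono hsub
      exact (Complex.continuous_re.continuousAt).comp_continuousWithinAt (hc1.mul hc2)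
    have h0mem : (0:ℝ) ∈ Set.Icc (F (v n)) (F (u n)) := ⟨(hFv n hvk).le, (hFu n hvk).le⟩
    obtain ⟨x, hx, hFx⟩ := intermediate_value_Icc' (huv n) hFcont h0mem
    exact ⟨x, hx, hFx⟩
  choose p hp1 hp2 using hex
  refine ⟨p, ?_, ?_, fun k => hp2 k⟩
  · intro k
    refine ⟨lt_of_lt_of_le (hupos _) (hp1 k).1, ?_⟩
    exact (hp1 k).2.trans (((hK₀ _ (by omega)).le).trans hε'le)
  · have hvt : Tendsto (fun k => v (k + K₀)) atTop (nhds 0) :=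
      hvtend.comp (tendsto_add_atTop_nat K₀)
    apply squeeze_zero (fun k => (lt_of_lt_of_le (hupos _) (hp1 k).1).le)
      (fun k => (hp1 k).2) hvt

/-- Structure lemma: on a small interval, `M₊(c) conj(M₊(1+c))` factors as a positive real
function times the phase `e^{iν log c}` times a continuous function nonvanishing at `0`. -/
lemma main_aux (ν : ℝ) (hν : 0 < ν) (m : ℕ) (hm : 1 ≤ m) :
    ∃ ε : ℝ, 0 < ε ∧ ∃ (H : ℝ → ℂ) (r : ℝ → ℝ),
      ContinuousOn H (Set.Icc 0 ε) ∧ H 0 ≠ 0 ∧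
      ∀ c ∈ Set.Ioc (0:ℝ) ε, 0 < r c ∧
        whittakerM (Complex.I * (ν:ℂ)) (2 * (m:ℂ) * (c:ℂ)) *
          (starRingEnd ℂ) (whittakerM (Complex.I * (ν:ℂ)) (2 * (m:ℂ) * (1 + (c:ℂ)))) =
        ((r c : ℝ) : ℂ) * Complex.exp (Complex.I * ((ν:ℂ) * ((Real.log c : ℝ) : ℂ))) * H c := by
  have hm' : (0:ℝ) < m := by exact_mod_cast hm
  set a : ℂ := 1 / 2 + Complex.I * (ν:ℂ) with hadef
  set b : ℂ := 1 + 2 * (Complex.I * (ν:ℂ)) with hbdef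
  have hb : ∀ j : ℕ, 1 ≤ ‖b + j‖ := by
    intro j
    have h1 : (b + j).re = 1 + j := by simp [hbdef]
    calc (1:ℝ) ≤ 1 + j := by linarith [Nat.cast_nonneg (α := ℝ) j]
      _ = (b + j).re := h1.symm
      _ ≤ ‖b + j‖ := Complex.re_le_norm _
  have hKan : ∀ z, AnalyticAt ℂ (kummerM a b) z := kummerM_analyticAt hb
  set z₀ : ℂ := 2 * (m:ℂ) with hz₀def
  have hne : ¬ (∀ᶠ z in nhds z₀, kummerM a b z = 0) := by
    intro h
    have h1 : AnalyticOnNhd ℂ (kummerM a b) Set.univ := fun z _ => hKan z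
    have h2 := h1.eqOn_zero_of_preconnected_of_eventuallyEq_zero
      isPreconnected_univ (Set.mem_univ z₀) h
    have h3 := h2 (Set.mem_univ 0)
    rw [kummerM_zero] at h3
    exact one_ne_zero h3
  obtain ⟨n, g, hg_an, hg0, hgeq⟩ :=
    ((hKan z₀).exists_eventuallyEq_pow_smul_nonzero_iff).mpr hne
  have hg_ev : ∀ᶠ z in nhds z₀, AnalyticAt ℂ g z := hg_an.eventually_analyticAt
  obtain ⟨δ, hδpos, hδ⟩ := Metric.eventually_nhds_iff.mp (hgeq.and hg_ev)
  set ε : ℝ := δ / (4 * m) with hεdef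
  have hε : 0 < ε := by positivity
  have hmem : ∀ c : ℝ, 0 ≤ c → c ≤ ε → dist (2 * (m:ℂ) * (1 + (c:ℂ))) z₀ < δ := by
    intro c h1 h2
    rw [Complex.dist_eq, show 2 * (m:ℂ) * (1 + (c:ℂ)) - z₀ = ((2 * m * c : ℝ) : ℂ) by
      rw [hz₀def]; push_cast; ring, Complex.norm_of_nonneg (by positivity)]
    have : 2 * (m:ℝ) * c ≤ 2 * m * ε := by nlinarith
    rw [hεdef] at this
    calc 2 * (m:ℝ) * c ≤ 2 * m * (δ / (4 * m)) := this
      _ = δ / 2 := by field_simp; ring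
      _ < δ := by linarith
  refine ⟨ε, hε,
    fun c => Complex.exp (-(2 * (m:ℂ) * (c:ℂ)) / 2) *
      Complex.exp (Complex.I * ((ν:ℂ) * ((Real.log (2 * m) : ℝ) : ℂ))) *
      kummerM a b (2 * (m:ℂ) * (c:ℂ)) *
      (starRingEnd ℂ) (Complex.exp (-(2 * (m:ℂ) * (1 + (c:ℂ))) / 2) *
        (2 * (m:ℂ) * (1 + (c:ℂ))) ^ ((1:ℂ) / 2 + Complex.I * (ν:ℂ)) *
        g (2 * (m:ℂ) * (1 + (c:ℂ)))),
    fun c => Real.exp (Real.log (2 * m * c) / 2) * (2 * m * c) ^ n, ?_, ?_, ?_⟩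
  · -- continuity
    intro c hc
    have hb1 : ContinuousAt (fun c : ℝ => Complex.exp (-(2 * (m:ℂ) * (c:ℂ)) / 2)) c := by
      fun_prop
    have hb3 : ContinuousAt (fun c : ℝ => kummerM a b (2 * (m:ℂ) * (c:ℂ))) c := by
      apply (hKan _).continuousAt.comp
      fun_prop
    have hinner : ContinuousAt (fun c : ℝ =>
        Complex.exp (-(2 * (m:ℂ) * (1 + (c:ℂ))) / 2) *
        (2 * (m:ℂ) * (1 + (c:ℂ))) ^ ((1:ℂ) / 2 + Complex.I * (ν:ℂ)) *
        g (2 * (m:ℂ) * (1 + (c:ℂ)))) c := by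
      have i1 : ContinuousAt (fun c : ℝ => Complex.exp (-(2 * (m:ℂ) * (1 + (c:ℂ))) / 2)) c := by
        fun_prop
      have i2 : ContinuousAt
          (fun c : ℝ => (2 * (m:ℂ) * (1 + (c:ℂ))) ^ ((1:ℂ) / 2 + Complex.I * (ν:ℂ))) c := by
        apply ContinuousAt.cpow (by fun_prop) continuousAt_const
        left
        have : (2 * (m:ℂ) * (1 + (c:ℂ))) = ((2 * m * (1 + c) : ℝ) : ℂ) := by push_cast; ring
        rw [this, Complex.ofReal_re]
        have := hc.1
        nlinarith
      have i3 : ContinuousAt (fun c : ℝ => g (2 * (m:ℂ) * (1 + (c:ℂ)))) c := by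
        have if3 : ContinuousAt (fun c : ℝ => 2 * (m:ℂ) * (1 + (c:ℂ))) c := by fun_prop
        exact ContinuousAt.comp (x := c) (g := g)
          (f := fun c : ℝ => 2 * (m:ℂ) * (1 + (c:ℂ)))
          ((hδ (hmem c hc.1 hc.2)).2.continuousAt) if3
      exact (i1.mul i2).mul i3
    have hb4 : ContinuousAt (fun c : ℝ => (starRingEnd ℂ)
        (Complex.exp (-(2 * (m:ℂ) * (1 + (c:ℂ))) / 2) *
        (2 * (m:ℂ) * (1 + (c:ℂ))) ^ ((1:ℂ) / 2 + Complex.I * (ν:ℂ)) *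
        g (2 * (m:ℂ) * (1 + (c:ℂ))))) c :=
      (Complex.continuous_conj.continuousAt).comp hinner
    exact (((hb1.mul continuousAt_const).mul hb3).mul hb4).continuousWithinAt
  · -- H 0 ≠ 0
    have e0 : 2 * (m:ℂ) * (((0:ℝ)):ℂ) = 0 := by push_cast; ring
    have e1 : 2 * (m:ℂ) * (1 + (((0:ℝ)):ℂ)) = z₀ := by rw [hz₀def]; push_cast; ring
    have hz₀ne : z₀ ≠ 0 := by
      rw [hz₀def]
      simp only [ne_eq, mul_eq_zero, not_or]
      exact ⟨two_ne_zero, Nat.cast_ne_zero.mpr (by omega)⟩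
    apply mul_ne_zero
    apply mul_ne_zero
    apply mul_ne_zero
    · exact Complex.exp_ne_zero _
    · exact Complex.exp_ne_zero _
    · rw [e0, kummerM_zero]; exact one_ne_zero
    · rw [show ∀ z : ℂ, (starRingEnd ℂ) z = star z from fun _ => rfl, star_ne_zero]
      apply mul_ne_zero
      apply mul_ne_zero
      · exact Complex.exp_ne_zero _
      · rw [e1]
        intro h
        rcases (Complex.cpow_eq_zero_iff _ _).mp h with ⟨h1, _⟩
        exact hz₀ne h1
      · rw [e1]; exact hg0
  · -- main identity
    intro c hc
    have hcpos : 0 < c := hc.1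
    have hRpos : (0:ℝ) < 2 * m * c := by positivity
    constructor
    · positivity
    · have h1 : (2 * (m:ℂ) * (c:ℂ)) ^ ((1:ℂ) / 2 + Complex.I * (ν:ℂ)) =
          ((Real.exp (Real.log (2 * m * c) / 2) : ℝ) : ℂ) *
            (Complex.exp (Complex.I * ((ν:ℂ) * ((Real.log (2 * m) : ℝ) : ℂ))) *
             Complex.exp (Complex.I * ((ν:ℂ) * ((Real.log c : ℝ) : ℂ)))) := by
        have hbase : (2 * (m:ℂ) * (c:ℂ)) = ((2 * m * c : ℝ) : ℂ) := by push_cast; ring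
        have hne0 : ((2 * m * c : ℝ) : ℂ) ≠ 0 := by
          exact_mod_cast ne_of_gt hRpos
        rw [hbase, Complex.cpow_def_of_ne_zero hne0, ← Complex.ofReal_log hRpos.le,
          Complex.ofReal_exp, ← Complex.exp_add, ← Complex.exp_add]
        congr 1
        rw [Real.log_mul (by positivity) (ne_of_gt hcpos)]
        push_cast
        ring
      have h2 : kummerM a b (2 * (m:ℂ) * (1 + (c:ℂ))) =
          ((2 * m * c : ℝ) : ℂ) ^ n * g (2 * (m:ℂ) * (1 + (c:ℂ))) := by
        have h3 := (hδ (hmem c hcpos.le hc.2)).1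
        rw [h3, smul_eq_mul,
          show (2 * (m:ℂ) * (1 + (c:ℂ)) - z₀) = ((2 * m * c : ℝ) : ℂ) by
            rw [hz₀def]; push_cast; ring]
      rw [whittakerM, whittakerM, ← hadef, ← hbdef, h2, h1]
      simp only [map_mul, map_pow, Complex.conj_ofReal]
      push_cast
      ring

/-- For `β² > 1/4` and `m ≥ 1` there are sequences `p_k, q_k > 0` tending to `0` with
`|W_m(p_k)| = 2 |M₊(p_k)| |M₊(1+p_k)|` and `W_m(q_k) = 0`. -/
theorem stmt13 (β : ℝ) (hβ0 : 0 < β) (hβ : 1 / 4 < β ^ 2) (m : ℕ) (hm : 1 ≤ m) :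
    ∃ p q : ℕ → ℝ,
      (∀ k, 0 < p k) ∧ (∀ k, 0 < q k) ∧
      Tendsto p atTop (nhds 0) ∧ Tendsto q atTop (nhds 0) ∧
      (∀ k, ‖Wm β m (p k)‖ =
        2 * ‖Mp β m ((p k : ℝ) : ℂ)‖ *
          ‖Mp β m ((1 : ℂ) + ((p k : ℝ) : ℂ))‖) ∧
      (∀ k, Wm β m (q k) = 0) := by
  set ν : ℝ := Real.sqrt (β ^ 2 - 1 / 4) with hνdef
  have hν : 0 < ν := Real.sqrt_pos.mpr (by linarith)
  have hm' : (0:ℝ) < m := by exact_mod_cast hm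
  obtain ⟨ε, hε, H, r, hHcont, hH0, hmain⟩ := main_aux ν hν m hm
  -- conjugation relation
  have hconj : ∀ x : ℝ, 0 < x → Mm β m (x:ℂ) = (starRingEnd ℂ) (Mp β m (x:ℂ)) := by
    intro x hx
    have hpos : 0 < 2 * (m:ℝ) * x := by positivity
    have h2 : (2 * (m:ℂ) * (x:ℂ)) = ((2 * m * x : ℝ):ℂ) := by push_cast; ring
    rw [Mp, Mm, h2, whittakerM_conj _ hpos]
    congr 1
    simp
  -- the central function f
  set f : ℝ → ℂ := fun c => Mp β m (c:ℂ) * (starRingEnd ℂ) (Mp β m ((1 + c : ℝ):ℂ)) with hfdef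
  have hW : ∀ c : ℝ, 0 < c → Wm β m c = f c - (starRingEnd ℂ) (f c) := by
    intro c hc
    rw [Wm, show ((1:ℂ) + (c:ℂ)) = ((1 + c : ℝ):ℂ) by push_cast; ring,
      hconj c hc, hconj (1 + c) (by linarith)]
    rw [hfdef]
    simp only [map_mul, Complex.conj_conj]
  have hfeq : ∀ c, c ∈ Set.Ioc (0:ℝ) ε → f c =
      ((r c : ℝ) : ℂ) * Complex.exp (Complex.I * ((ν:ℂ) * ((Real.log c : ℝ) : ℂ))) * H c := by
    intro c hc
    have h1 := (hmain c hc).2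
    rw [hfdef]
    simp only []
    rw [Mp, Mp, show ((1 + c : ℝ):ℂ) = 1 + (c:ℂ) by push_cast; ring]
    exact h1
  -- the q-sequence (zeros of Im f): apply the engine to -I * H
  obtain ⟨q, hq1, hq2, hq3⟩ := engine hν hε (fun c => -Complex.I * H c)
    (continuousOn_const.mul hHcont)
    (by simpa using mul_ne_zero (neg_ne_zero.mpr Complex.I_ne_zero) hH0)
  -- the p-sequence (zeros of Re f): apply the engine to H
  obtain ⟨p, hp1, hp2, hp3⟩ := engine hν hε H hHcont hH0
  refine ⟨p, q, fun k => (hp1 k).1, fun k => (hq1 k).1, hp2, hq2, ?_, ?_⟩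
  · -- |W(p k)| = 2 |M₊(p k)| |M₊(1+p k)|
    intro k
    set c := p k with hcdef
    have hc : c ∈ Set.Ioc (0:ℝ) ε := hp1 k
    have hre : (f c).re = 0 := by
      rw [hfeq c hc, mul_assoc, Complex.re_ofReal_mul, hp3 k, mul_zero]
    have habs_im : ‖f c‖ = |(f c).im| := by
      rw [Complex.norm_def, Complex.normSq_apply, hre]
      simp [Real.sqrt_mul_self_eq_abs]
    have habsf : ‖f c‖ =
        ‖Mp β m (c:ℂ)‖ * ‖Mp β m ((1 + c : ℝ):ℂ)‖ := by
      rw [hfdef]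
      simp only [norm_mul, Complex.norm_conj]
    calc ‖Wm β m c‖
        = ‖((2 * (f c).im : ℝ) : ℂ) * Complex.I‖ := by
          rw [hW c hc.1, Complex.sub_conj]
      _ = |2 * (f c).im| := by
          rw [norm_mul, Complex.norm_I, Complex.norm_real, Real.norm_eq_abs, mul_one]
      _ = 2 * |(f c).im| := by rw [abs_mul]; norm_num
      _ = 2 * ‖f c‖ := by rw [habs_im]
      _ = 2 * ‖Mp β m (c:ℂ)‖ * ‖Mp β m ((1 + c : ℝ):ℂ)‖ := by
          rw [habsf]; ring
      _ = 2 * ‖Mp β m (c:ℂ)‖ * ‖Mp β m ((1:ℂ) + (c:ℂ))‖ := by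
          rw [show ((1 + c : ℝ):ℂ) = (1:ℂ) + (c:ℂ) by push_cast; ring]
  · -- W(q k) = 0
    intro k
    set c := q k with hcdef
    have hc : c ∈ Set.Ioc (0:ℝ) ε := hq1 k
    have him : (f c).im = 0 := by
      have h1 := hq3 k
      have h2 : Complex.exp (Complex.I * ((ν : ℂ) * (Real.log c : ℂ))) * (-Complex.I * H c)
          = -Complex.I * (Complex.exp (Complex.I * ((ν : ℂ) * (Real.log c : ℂ))) * H c) := by
        ring
      rw [h2] at h1
      have h3 : (Complex.exp (Complex.I * ((ν : ℂ) * (Real.log c : ℂ))) * H c).im = 0 := by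
        simpa using h1
      rw [hfeq c hc, mul_assoc, Complex.im_ofReal_mul, h3, mul_zero]
    rw [hW c hc.1, Complex.sub_conj, him]
    simp
end

section
/- Assume β² > 1/4 and let m ≥ 1 be an integer. There exists a sequence (c_k)_{k≥1} of strictly negative real numbers with c_k → 0 such that for each k the boundary value problem ψ''(y) − m²ψ(y) + β²ψ(y)/(y−c_k)² = 0 on (0,1), ψ(0) = ψ(1) = 0, admits a nontrivial C² solution; in particular, there are infinitely many negative real eigenvalues of this problem, accumulating at 0. -/
open Filter Complex
noncomputable section
namespace TG14

/-- Series coefficients. -/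
def b (μ : ℂ) (ν : ℝ) : ℕ → ℂ
  | 0 => 1
  | k + 1 => b μ ν k * μ / ((2 * (k:ℂ) + 2) * (2 * (k:ℂ) + 2 + 2 * ν * I))

variable {μ : ℂ} {ν : ℝ}

lemma denom_ne_zero (hν : ν ≠ 0) (k : ℕ) :
    ((2 * (k:ℂ) + 2) * (2 * (k:ℂ) + 2 + 2 * ν * I)) ≠ 0 := by
  apply mul_ne_zero
  · have : (2 * (k:ℂ) + 2) = ((2 * (k:ℝ) + 2 : ℝ) : ℂ) := by push_cast; ring
    rw [this]
    simp only [ne_eq, ofReal_eq_zero]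
    positivity
  · intro h
    have := congrArg Complex.im h
    simp [Complex.add_im, Complex.mul_im] at this
    exact hν this

lemma b_ne_zero (hμ : μ ≠ 0) (hν : ν ≠ 0) (k : ℕ) : b μ ν k ≠ 0 := by
  induction k with
  | zero => simp [b]
  | succ k ih =>
    rw [b]
    exact div_ne_zero (mul_ne_zero ih hμ) (denom_ne_zero hν k)

lemma norm_b_succ_mul (hν : ν ≠ 0) (k : ℕ) :
    ‖b μ ν (k + 1)‖ * (2 * k + 2) ^ 2 ≤ ‖b μ ν k‖ * ‖μ‖ := by
  have h1 : ‖(2 * (k:ℂ) + 2)‖ = 2 * (k:ℝ) + 2 := by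
    have : (2 * (k:ℂ) + 2) = ((2 * (k:ℝ) + 2 : ℝ) : ℂ) := by push_cast; ring
    rw [this, Complex.norm_real, Real.norm_of_nonneg (by positivity)]
  have h2 : 2 * (k:ℝ) + 2 ≤ ‖(2 * (k:ℂ) + 2 + 2 * ν * I)‖ := by
    have hre : (2 * (k:ℂ) + 2 + 2 * ν * I).re = 2 * (k:ℝ) + 2 := by
      simp [Complex.add_re, Complex.mul_re]
    calc 2 * (k:ℝ) + 2 = (2 * (k:ℂ) + 2 + 2 * ν * I).re := hre.symm
      _ ≤ |(2 * (k:ℂ) + 2 + 2 * ν * I).re| := le_abs_self _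
      _ ≤ ‖(2 * (k:ℂ) + 2 + 2 * ν * I)‖ := Complex.abs_re_le_norm _
  have hE : ‖b μ ν (k+1)‖ = ‖b μ ν k‖ * ‖μ‖ / ((2 * (k:ℝ) + 2) * ‖(2 * (k:ℂ) + 2 + 2 * ν * I)‖) := by
    rw [b, norm_div, norm_mul, norm_mul, h1]
  have hD : (2 * (k:ℝ) + 2) ^ 2 ≤ (2 * (k:ℝ) + 2) * ‖(2 * (k:ℂ) + 2 + 2 * ν * I)‖ := by
    calc (2 * (k:ℝ) + 2) ^ 2 = (2 * (k:ℝ) + 2) * (2 * (k:ℝ) + 2) := sq (2 * (k:ℝ) + 2) ▸ rfl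
      _ ≤ _ := by apply mul_le_mul_of_nonneg_left h2 (by positivity)
  have hX : (0:ℝ) < ‖(2 * (k:ℂ) + 2 + 2 * ν * I)‖ := lt_of_lt_of_le (by positivity) h2
  rw [hE]
  rw [div_mul_eq_mul_div, div_le_iff₀ (mul_pos (by positivity) hX)]
  push_cast
  calc ‖b μ ν k‖ * ‖μ‖ * (2 * (k:ℝ) + 2) ^ 2
      ≤ ‖b μ ν k‖ * ‖μ‖ * ((2 * (k:ℝ) + 2) * ‖(2 * (k:ℂ) + 2 + 2 * ν * I)‖) := by
        apply mul_le_mul_of_nonneg_left hD (by positivity)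
    _ = _ := by ring

def u (μ : ℂ) (ν : ℝ) (k : ℕ) : ℝ := (‖μ‖ + 1) * (2 * k + 2) ^ 2 * ‖b μ ν k‖ * 9 ^ (k + 1)

lemma u_nonneg (k : ℕ) : 0 ≤ u μ ν k := by unfold u; positivity

lemma summable_u (hν : ν ≠ 0) : Summable (u μ ν) := by
  apply summable_of_ratio_norm_eventually_le (r := 1/2) (by norm_num)
  rw [eventually_atTop]
  refine ⟨⌈72 * ‖μ‖⌉₊, fun k hk => ?_⟩
  have hQ : 72 * ‖μ‖ ≤ (2 * (k:ℝ) + 2) ^ 2 := by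
    have h1 : 72 * ‖μ‖ ≤ (k : ℝ) := le_trans (Nat.le_ceil _) (by exact_mod_cast hk)
    nlinarith [Nat.cast_nonneg (α := ℝ) k, sq_nonneg ((k:ℝ))]
  have hb := norm_b_succ_mul (μ := μ) hν k
  have hQpos : (0:ℝ) < (2 * (k:ℝ) + 2) ^ 2 := by positivity
  rw [Real.norm_of_nonneg (u_nonneg _), Real.norm_of_nonneg (u_nonneg _)]
  rw [← mul_le_mul_iff_of_pos_right hQpos]
  have e1 : u μ ν (k+1) = (‖μ‖ + 1) * (2 * (k:ℝ) + 4) ^ 2 * ‖b μ ν (k+1)‖ * (9 * 9 ^ (k + 1)) := by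
    unfold u; push_cast; ring
  rw [e1]
  have e2 : (‖μ‖ + 1) * (2 * (k:ℝ) + 4) ^ 2 * ‖b μ ν (k+1)‖ * (9 * 9 ^ (k + 1)) * (2 * (k:ℝ) + 2)^2
      = (‖b μ ν (k+1)‖ * (2 * (k:ℝ) + 2)^2) * ((‖μ‖ + 1) * (2 * (k:ℝ) + 4) ^ 2 * (9 * 9 ^ (k + 1))) := by
    ring
  rw [e2]
  calc (‖b μ ν (k+1)‖ * (2 * (k:ℝ) + 2)^2) * ((‖μ‖ + 1) * (2 * (k:ℝ) + 4) ^ 2 * (9 * 9 ^ (k + 1)))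
      ≤ (‖b μ ν k‖ * ‖μ‖) * ((‖μ‖ + 1) * (2 * (k:ℝ) + 4) ^ 2 * (9 * 9 ^ (k + 1))) := by
        apply mul_le_mul_of_nonneg_right hb (by positivity)
    _ ≤ (‖b μ ν k‖ * ‖μ‖) * ((‖μ‖ + 1) * (4 * (2 * (k:ℝ) + 2) ^ 2) * (9 * 9 ^ (k + 1))) := by
        gcongr
        nlinarith [Nat.cast_nonneg (α := ℝ) k]
    _ = (1/2) * ((‖μ‖ + 1) * (2 * (k:ℝ) + 2) ^ 2 * ‖b μ ν k‖ * 9 ^ (k+1)) * (72 * ‖μ‖) := by ring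
    _ ≤ (1/2) * ((‖μ‖ + 1) * (2 * (k:ℝ) + 2) ^ 2 * ‖b μ ν k‖ * 9 ^ (k+1)) * ((2 * (k:ℝ) + 2) ^ 2) := by
        gcongr
    _ = 1/2 * u μ ν k * (2 * (k:ℝ) + 2)^2 := by unfold u; ring



def F (μ : ℂ) (ν : ℝ) (z : ℂ) : ℂ := ∑' k, b μ ν k * z ^ (2 * k)
def F1 (μ : ℂ) (ν : ℝ) (z : ℂ) : ℂ := ∑' k, b μ ν k * ((2 * k : ℕ) * z ^ (2 * k - 1))
def F2 (μ : ℂ) (ν : ℝ) (z : ℂ) : ℂ :=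
  ∑' k, b μ ν k * (2 * k : ℕ) * ((2 * k - 1 : ℕ) * z ^ (2 * k - 1 - 1))

lemma le_u (k : ℕ) {x : ℝ} (hxle : x ≤ (2 * k + 2) ^ 2 * 9 ^ (k + 1)) :
    ‖b μ ν k‖ * x ≤ u μ ν k := by
  calc ‖b μ ν k‖ * x ≤ ‖b μ ν k‖ * ((2 * k + 2) ^ 2 * 9 ^ (k + 1)) :=
        mul_le_mul_of_nonneg_left hxle (norm_nonneg _)
    _ = 1 * ((2 * (k:ℝ) + 2) ^ 2 * ‖b μ ν k‖ * 9 ^ (k + 1)) := by push_cast; ring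
    _ ≤ (‖μ‖ + 1) * ((2 * (k:ℝ) + 2) ^ 2 * ‖b μ ν k‖ * 9 ^ (k + 1)) :=
        mul_le_mul_of_nonneg_right (by linarith [norm_nonneg μ]) (by positivity)
    _ = u μ ν k := by unfold u; push_cast; ring

lemma pow_le_nine {z : ℂ} (hz : ‖z‖ ≤ 3) {j k : ℕ} (hj : j ≤ 2 * k + 2) :
    ‖z ^ j‖ ≤ 9 ^ (k + 1) := by
  rw [norm_pow]
  calc ‖z‖ ^ j ≤ 3 ^ j := pow_le_pow_left₀ (norm_nonneg z) hz j
    _ ≤ 3 ^ (2 * (k + 1)) := pow_le_pow_right₀ (by norm_num) (by omega)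
    _ = 9 ^ (k + 1) := by rw [pow_mul]; norm_num

lemma bound0 {z : ℂ} (hz : ‖z‖ ≤ 3) (k : ℕ) : ‖b μ ν k * z ^ (2 * k)‖ ≤ u μ ν k := by
  rw [norm_mul]
  exact le_u k (le_trans (pow_le_nine hz (by omega)) (le_mul_of_one_le_left (by positivity) (by nlinarith [Nat.cast_nonneg (α := ℝ) k])))

lemma bound1 {z : ℂ} (hz : ‖z‖ ≤ 3) (k : ℕ) :
    ‖b μ ν k * ((2 * k : ℕ) * z ^ (2 * k - 1))‖ ≤ u μ ν k := by
  rw [norm_mul]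
  apply le_u
  rw [norm_mul, Complex.norm_natCast]
  have h1 : ((2 * k : ℕ) : ℝ) ≤ (2 * (k:ℝ) + 2) ^ 2 := by push_cast; nlinarith [Nat.cast_nonneg (α := ℝ) k]
  have h2 := pow_le_nine hz (j := 2 * k - 1) (k := k) (by omega)
  calc ((2 * k : ℕ) : ℝ) * ‖z ^ (2 * k - 1)‖ ≤ (2 * (k:ℝ) + 2) ^ 2 * 9 ^ (k + 1) :=
    mul_le_mul h1 h2 (norm_nonneg _) (by positivity)
  _ = _ := by push_cast; ring

lemma bound2 {z : ℂ} (hz : ‖z‖ ≤ 3) (k : ℕ) :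
    ‖b μ ν k * (2 * k : ℕ) * ((2 * k - 1 : ℕ) * z ^ (2 * k - 1 - 1))‖ ≤ u μ ν k := by
  rw [mul_assoc, norm_mul]
  apply le_u
  rw [norm_mul, norm_mul, Complex.norm_natCast, Complex.norm_natCast, ← mul_assoc]
  have h1 : ((2 * k : ℕ) : ℝ) * ((2 * k - 1 : ℕ) : ℝ) ≤ (2 * (k:ℝ) + 2) ^ 2 := by
    have : ((2 * k - 1 : ℕ) : ℝ) ≤ 2 * (k:ℝ) + 2 := by
      have : (2 * k - 1 : ℕ) ≤ 2 * k + 2 := by omega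
      calc ((2 * k - 1 : ℕ) : ℝ) ≤ ((2 * k + 2 : ℕ) : ℝ) := by exact_mod_cast this
        _ = 2 * (k:ℝ) + 2 := by push_cast; ring
    have h2k : ((2 * k : ℕ) : ℝ) ≤ 2 * (k:ℝ) + 2 := by push_cast; linarith
    calc ((2 * k : ℕ) : ℝ) * ((2 * k - 1 : ℕ) : ℝ)
        ≤ (2 * (k:ℝ) + 2) * (2 * (k:ℝ) + 2) :=
          mul_le_mul h2k this (Nat.cast_nonneg _) (by positivity)
      _ = (2 * (k:ℝ) + 2) ^ 2 := (sq _).symm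
  have h2 := pow_le_nine hz (j := 2 * k - 1 - 1) (k := k) (by omega)
  calc ((2 * k : ℕ) : ℝ) * ((2 * k - 1 : ℕ) : ℝ) * ‖z ^ (2 * k - 1 - 1)‖
      ≤ (2 * (k:ℝ) + 2) ^ 2 * 9 ^ (k + 1) :=
        mul_le_mul h1 h2 (norm_nonneg _) (by positivity)
    _ = _ := by push_cast; ring

lemma norm_le_three {z : ℂ} (hz : z ∈ Metric.ball (0:ℂ) 3) : ‖z‖ ≤ 3 := by
  rw [Metric.mem_ball, dist_zero_right] at hz; exact hz.le

lemma zero_mem_ball : (0:ℂ) ∈ Metric.ball (0:ℂ) 3 := by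
  rw [Metric.mem_ball, dist_self]; norm_num

lemma summable0 {z : ℂ} (hν : ν ≠ 0) (hz : ‖z‖ ≤ 3) :
    Summable (fun k => b μ ν k * z ^ (2 * k)) :=
  Summable.of_norm_bounded (summable_u hν) (bound0 hz)

lemma summable1 {z : ℂ} (hν : ν ≠ 0) (hz : ‖z‖ ≤ 3) :
    Summable (fun k => b μ ν k * ((2 * k : ℕ) * z ^ (2 * k - 1))) :=
  Summable.of_norm_bounded (summable_u hν) (bound1 hz)

lemma summable2 {z : ℂ} (hν : ν ≠ 0) (hz : ‖z‖ ≤ 3) :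
    Summable (fun k => b μ ν k * (2 * k : ℕ) * ((2 * k - 1 : ℕ) * z ^ (2 * k - 1 - 1))) :=
  Summable.of_norm_bounded (summable_u hν) (bound2 hz)

lemma hasDerivAt_F (hν : ν ≠ 0) {z : ℂ} (hz : z ∈ Metric.ball (0:ℂ) 3) :
    HasDerivAt (F μ ν) (F1 μ ν z) z := by
  unfold F F1
  refine hasDerivAt_tsum_of_isPreconnected (summable_u hν) Metric.isOpen_ball
    (convex_ball (0:ℂ) 3).isPreconnected
    (fun k y _ => (hasDerivAt_pow (2 * k) y).const_mul (b μ ν k))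
    (fun k y hy => bound1 (norm_le_three hy) k) zero_mem_ball ?_ hz
  · apply summable_of_ne_finset_zero (s := {0})
    intro k hk
    simp only [Finset.mem_singleton] at hk
    rw [zero_pow (by omega), mul_zero]

lemma hasDerivAt_F1 (hν : ν ≠ 0) {z : ℂ} (hz : z ∈ Metric.ball (0:ℂ) 3) :
    HasDerivAt (F1 μ ν) (F2 μ ν z) z := by
  unfold F1 F2
  refine hasDerivAt_tsum_of_isPreconnected (summable_u hν) Metric.isOpen_ball
    (convex_ball (0:ℂ) 3).isPreconnected
    (fun k y _ => ?_)
    (fun k y hy => bound2 (norm_le_three hy) k) zero_mem_ball ?_ hz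
  · have := (hasDerivAt_pow (2 * k - 1) y).const_mul (b μ ν k * (2 * k : ℕ))
    simpa [mul_assoc] using this
  · apply summable_of_ne_finset_zero (s := {0, 1})
    intro k hk
    simp only [Finset.mem_insert, Finset.mem_singleton] at hk
    push_neg at hk
    rw [zero_pow (by omega), mul_zero, mul_zero]

lemma F_ode (hν : ν ≠ 0) {z : ℂ} (hz : ‖z‖ ≤ 3) :
    z * F2 μ ν z + (1 + 2 * ν * I) * F1 μ ν z = μ * z * F μ ν z := by
  unfold F F1 F2
  rw [← tsum_mul_left, ← tsum_mul_left,
    ← Summable.tsum_add ((summable2 hν hz).mul_left z) ((summable1 hν hz).mul_left (1 + 2 * ν * I))]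
  rw [Summable.tsum_eq_zero_add (((summable2 hν hz).mul_left z).add ((summable1 hν hz).mul_left (1 + 2 * ν * I)))]
  have h0 : z * (b μ ν 0 * (2 * 0 : ℕ) * ((2 * 0 - 1 : ℕ) * z ^ (2 * 0 - 1 - 1)))
      + (1 + 2 * ν * I) * (b μ ν 0 * ((2 * 0 : ℕ) * z ^ (2 * 0 - 1))) = 0 := by
    norm_num
  rw [h0, zero_add, ← tsum_mul_left]
  apply tsum_congr
  intro k
  have hbk : b μ ν (k+1) * ((2 * (k:ℂ) + 2) * (2 * (k:ℂ) + 2 + 2 * ν * I)) = b μ ν k * μ := by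
    rw [b]; exact div_mul_cancel₀ _ (denom_ne_zero hν k)
  have e1 : 2 * (k+1) - 1 - 1 = 2 * k := by omega
  have e2 : 2 * (k+1) - 1 = 2 * k + 1 := by omega
  rw [e1, e2]
  push_cast
  linear_combination (z ^ (2 * k) * z) * hbk

lemma F_zero : F μ ν 0 = 1 := by
  unfold F
  rw [tsum_eq_single 0 (fun k hk => by rw [zero_pow (by omega), mul_zero])]
  simp [b]

lemma F1_zero : F1 μ ν 0 = 0 := by
  unfold F1
  rw [tsum_eq_single 0 (fun k hk => by rw [zero_pow (by omega), mul_zero, mul_zero])]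
  simp

/-- helper: conj of derivative -/
lemma hasDerivAt_conj {f : ℝ → ℂ} {f' : ℂ} {x : ℝ} (h : HasDerivAt f f' x) :
    HasDerivAt (fun y => (starRingEnd ℂ) (f y)) ((starRingEnd ℂ) f') x := by
  have := (Complex.conjCLE.toContinuousLinearMap.hasFDerivAt.comp x h.hasFDerivAt).hasDerivAt
  simpa [Function.comp_def] using this

lemma hasDerivAt_im {f : ℝ → ℂ} {f' : ℂ} {x : ℝ} (h : HasDerivAt f f' x) :
    HasDerivAt (fun y => (f y).im) f'.im x := by
  have := (Complex.imCLM.hasFDerivAt.comp x h.hasFDerivAt).hasDerivAt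
  simpa [Function.comp_def] using this

open ComplexConjugate

def aC (ν : ℝ) : ℂ := 1/2 + ν * I

def psip (μ : ℂ) (ν : ℝ) (t : ℝ) : ℂ := (t:ℂ) ^ (aC ν) * F μ ν t
def dpsip (μ : ℂ) (ν : ℝ) (t : ℝ) : ℂ :=
  aC ν * (t:ℂ) ^ (aC ν - 1) * F μ ν t + (t:ℂ) ^ (aC ν) * F1 μ ν t

lemma mem_ball3 {t : ℝ} (h0 : 0 < t) (h3 : t < 3) : ((t:ℂ)) ∈ Metric.ball (0:ℂ) 3 := by
  rw [Metric.mem_ball, dist_zero_right, Complex.norm_real, Real.norm_of_nonneg h0.le]; exact h3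

lemma slit {t : ℝ} (h0 : 0 < t) : ((t:ℂ)) ∈ Complex.slitPlane := Or.inl (by simpa using h0)

lemma ofReal_ne_zero' {t : ℝ} (h0 : 0 < t) : (t:ℂ) ≠ 0 := by
  simpa using h0.ne'

lemma hasDerivAt_cpow_ofReal {t : ℝ} (h0 : 0 < t) (c : ℂ) :
    HasDerivAt (fun s : ℝ => (s:ℂ) ^ c) (c * (t:ℂ) ^ (c - 1)) t := by
  have h1 : HasDerivAt (fun z : ℂ => z ^ c) (c * (t:ℂ) ^ (c - 1)) ((t:ℝ):ℂ) := by
    simpa using (hasDerivAt_id ((t:ℝ):ℂ)).cpow_const (slit h0)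
  exact h1.comp_ofReal

lemma hasDerivAt_psip (hν : ν ≠ 0) {t : ℝ} (h0 : 0 < t) (h3 : t < 3) :
    HasDerivAt (psip μ ν) (dpsip μ ν t) t := by
  have hF : HasDerivAt (fun s : ℝ => F μ ν (s:ℂ)) (F1 μ ν ((t:ℝ):ℂ)) t :=
    (hasDerivAt_F hν (mem_ball3 h0 h3)).comp_ofReal
  have hc := hasDerivAt_cpow_ofReal h0 (aC ν)
  have := hc.mul hF
  exact this

lemma aC_mul_aC_sub_one : aC ν * (aC ν - 1) = -(((ν^2 + 1/4 : ℝ)):ℂ) := by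
  unfold aC
  push_cast
  linear_combination (ν:ℂ)^2 * Complex.I_sq

lemma hasDerivAt_dpsip (hν : ν ≠ 0) {t : ℝ} (h0 : 0 < t) (h3 : t < 3)
    {μr : ℝ} (hμ : μ = ((μr:ℝ):ℂ)) :
    HasDerivAt (dpsip μ ν) (((μr - (ν^2 + 1/4) / t^2 : ℝ) : ℂ) * psip μ ν t) t := by
  subst hμ
  set μ : ℂ := ((μr:ℝ):ℂ) with hμdef
  have hF : HasDerivAt (fun s : ℝ => F μ ν (s:ℂ)) (F1 μ ν ((t:ℝ):ℂ)) t :=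
    (hasDerivAt_F hν (mem_ball3 h0 h3)).comp_ofReal
  have hF1 : HasDerivAt (fun s : ℝ => F1 μ ν (s:ℂ)) (F2 μ ν ((t:ℝ):ℂ)) t :=
    (hasDerivAt_F1 hν (mem_ball3 h0 h3)).comp_ofReal
  have hc1 := hasDerivAt_cpow_ofReal h0 (aC ν - 1)
  have hc := hasDerivAt_cpow_ofReal h0 (aC ν)
  have key := ((hc1.const_mul (aC ν)).mul hF).add (hc.mul hF1)
  have key2 : HasDerivAt (dpsip μ ν)
      ((aC ν * ((aC ν - 1) * (t:ℂ) ^ (aC ν - 1 - 1))) * F μ ν t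
        + (aC ν * (t:ℂ) ^ (aC ν - 1)) * F1 μ ν t
        + ((aC ν * (t:ℂ) ^ (aC ν - 1)) * F1 μ ν t + (t:ℂ) ^ (aC ν) * F2 μ ν t)) t := by
    unfold dpsip
    exact key
  convert key2 using 1
  have ht0 : (t:ℂ) ≠ 0 := ofReal_ne_zero' h0
  have h1 : (t:ℂ) ^ (aC ν - 1) = (t:ℂ) ^ (aC ν - 1 - 1) * (t:ℂ) := by
    have e := Complex.cpow_add (aC ν - 1 - 1) 1 ht0
    rw [show aC ν - 1 - 1 + 1 = aC ν - 1 by ring, Complex.cpow_one] at e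
    exact e
  have h2 : (t:ℂ) ^ (aC ν) = (t:ℂ) ^ (aC ν - 1 - 1) * (t:ℂ) ^ (2:ℕ) := by
    have e := Complex.cpow_add (aC ν - 1 - 1) 2 ht0
    rw [show aC ν - 1 - 1 + 2 = aC ν by ring,
      show ((2:ℂ)) = ((2:ℕ):ℂ) by norm_num, Complex.cpow_natCast] at e
    exact e
  have hode := F_ode (μ := μ) hν (z := (t:ℂ))
    (by rw [Complex.norm_real, Real.norm_of_nonneg h0.le]; exact h3.le)
  have haa := aC_mul_aC_sub_one (ν := ν)
  have h2a : (1 : ℂ) + 2 * ν * I = 2 * aC ν := by unfold aC; ring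
  rw [h2a] at hode
  have hc2 : ((μr - (ν^2 + 1/4) / t^2 : ℝ):ℂ) * ((t:ℂ))^(2:ℕ)
      = (μr:ℂ) * ((t:ℂ))^(2:ℕ) - (((ν^2 + 1/4 : ℝ)):ℂ) := by
    have ht0r : (t:ℝ) ≠ 0 := h0.ne'
    push_cast
    field_simp
  unfold psip
  rw [h1, h2]
  linear_combination ((t:ℂ) ^ (aC ν - 1 - 1) * F μ ν (t:ℂ)) * hc2
    - ((t:ℂ) ^ (aC ν - 1 - 1) * F μ ν (t:ℂ)) * haa
    - ((t:ℂ) ^ (aC ν - 1 - 1) * (t:ℂ)) * hode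

def Gfun (μ : ℂ) (ν : ℝ) (t : ℝ) : ℂ :=
  conj (aC ν) * (F μ ν t * conj (F μ ν t)) + (t:ℂ) * (F μ ν t * conj (F1 μ ν t))

lemma conj_aC : conj (aC ν) = 1 - aC ν := by
  unfold aC
  apply Complex.ext <;> simp <;> norm_num

lemma conj_cpow_ofReal {t : ℝ} (h0 : 0 < t) (c : ℂ) :
    conj ((t:ℂ) ^ c) = (t:ℂ) ^ (conj c) := by
  rw [Complex.cpow_def_of_ne_zero (ofReal_ne_zero' h0),
    Complex.cpow_def_of_ne_zero (ofReal_ne_zero' h0), ← Complex.exp_conj, map_mul]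
  congr 1
  rw [← Complex.ofReal_log h0.le, Complex.conj_ofReal]

lemma psip_mul_conj_dpsip (hν : ν ≠ 0) {t : ℝ} (h0 : 0 < t) (h3 : t < 3) :
    psip μ ν t * conj (dpsip μ ν t) = Gfun μ ν t := by
  unfold psip dpsip Gfun
  rw [map_add, map_mul, map_mul, map_mul, conj_cpow_ofReal h0 (aC ν - 1),
    conj_cpow_ofReal h0 (aC ν)]
  have e1 : (t:ℂ)^(aC ν) * (t:ℂ)^(conj (aC ν - 1)) = 1 := by
    rw [← Complex.cpow_add _ _ (ofReal_ne_zero' h0), map_sub, map_one, conj_aC,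
      show aC ν + (1 - aC ν - 1) = 0 by ring, Complex.cpow_zero]
  have e2 : (t:ℂ)^(aC ν) * (t:ℂ)^(conj (aC ν)) = (t:ℂ) := by
    rw [← Complex.cpow_add _ _ (ofReal_ne_zero' h0), conj_aC,
      show aC ν + (1 - aC ν) = 1 by ring, Complex.cpow_one]
  linear_combination (conj (aC ν) * (F μ ν t * conj (F μ ν t))) * e1
    + (F μ ν t * conj (F1 μ ν t)) * e2

lemma wronskian_is (hν : ν ≠ 0) {μr : ℝ} (hμ : μ = ((μr:ℝ):ℂ)) {t : ℝ}
    (h0 : 0 < t) (h3 : t < 3) :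
    (psip μ ν t * conj (dpsip μ ν t)).im = -ν := by
  set W : ℝ → ℝ := fun s => (Gfun μ ν s).im with hWdef
  have hWd : ∀ s, 0 < s → s < 3 → HasDerivAt W 0 s := by
    intro s hs0 hs3
    have hp : HasDerivAt (psip μ ν) (dpsip μ ν s) s := hasDerivAt_psip hν hs0 hs3
    have hd := hasDerivAt_conj (hasDerivAt_dpsip hν hs0 hs3 hμ)
    have hprod := hasDerivAt_im (hp.mul hd)
    have hval : (dpsip μ ν s * conj (dpsip μ ν s)
        + psip μ ν s * conj (((μr - (ν^2+1/4)/s^2 : ℝ):ℂ) * psip μ ν s)).im = 0 := by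
      rw [Complex.mul_conj, map_mul, Complex.conj_ofReal,
        show psip μ ν s * (((μr - (ν^2+1/4)/s^2 : ℝ):ℂ) * conj (psip μ ν s))
          = ((μr - (ν^2+1/4)/s^2 : ℝ):ℂ) * (psip μ ν s * conj (psip μ ν s)) by ring,
        Complex.mul_conj]
      rw [← Complex.ofReal_mul, ← Complex.ofReal_add, Complex.ofReal_im]
    rw [hval] at hprod
    apply hprod.congr_of_eventuallyEq
    filter_upwards [Ioo_mem_nhds hs0 hs3] with y hy
    rw [hWdef]
    simp only
    simp only [Pi.mul_apply]; rw [psip_mul_conj_dpsip hν hy.1 hy.2]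
  have hconst : ∀ s₁ s₂ : ℝ, 0 < s₁ → s₁ ≤ s₂ → s₂ < 3 → W s₂ = W s₁ := by
    intro s₁ s₂ h1 h12 h23
    have := constant_of_has_deriv_right_zero (f := W) (a := s₁) (b := s₂)
      (fun x hx => (hWd x (lt_of_lt_of_le h1 hx.1) (lt_of_le_of_lt hx.2 h23)).continuousAt.continuousWithinAt)
      (fun x hx => ((hWd x (lt_of_lt_of_le h1 hx.1) (lt_trans hx.2 h23)).hasDerivWithinAt))
    exact this s₂ ⟨h12, le_refl _⟩
  have hF0 : HasDerivAt (fun s : ℝ => F μ ν (s:ℂ)) (F1 μ ν ((0:ℝ):ℂ)) 0 :=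
    (hasDerivAt_F hν (by simpa using zero_mem_ball)).comp_ofReal
  have hF10 : HasDerivAt (fun s : ℝ => F1 μ ν (s:ℂ)) (F2 μ ν ((0:ℝ):ℂ)) 0 :=
    (hasDerivAt_F1 hν (by simpa using zero_mem_ball)).comp_ofReal
  have hcont0 : ContinuousAt W 0 := by
    apply Complex.continuous_im.continuousAt.comp
    apply ContinuousAt.add
    · exact continuousAt_const.mul (hF0.continuousAt.mul
        (Complex.continuous_conj.continuousAt.comp hF0.continuousAt))
    · exact (Complex.continuous_ofReal.continuousAt).mul (hF0.continuousAt.mul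
        (Complex.continuous_conj.continuousAt.comp hF10.continuousAt))
  have hW0 : W 0 = -ν := by
    rw [hWdef]
    simp only [Gfun]
    rw [show ((0:ℝ):ℂ) = (0:ℂ) by norm_num, F_zero]
    simp [conj_aC, aC]
  have hty : Tendsto W (nhdsWithin 0 (Set.Ioi 0)) (nhds (W 0)) :=
    hcont0.continuousWithinAt.tendsto
  have htc : Tendsto W (nhdsWithin 0 (Set.Ioi 0)) (nhds (W t)) := by
    apply Tendsto.congr' _ tendsto_const_nhds
    filter_upwards [Ioo_mem_nhdsGT_of_mem (Set.left_mem_Ico.mpr h0)] with y hy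
    exact hconst y t hy.1 (le_of_lt hy.2) h3
  have : W t = W 0 := tendsto_nhds_unique htc hty
  rw [psip_mul_conj_dpsip hν h0 h3]
  rw [hWdef] at this hW0
  simp only at this hW0
  rw [this, hW0]

lemma psip_ne_zero (hν : ν ≠ 0) {μr : ℝ} (hμ : μ = ((μr:ℝ):ℂ)) {t : ℝ}
    (h0 : 0 < t) (h3 : t < 3) : psip μ ν t ≠ 0 := by
  intro h
  have hw := wronskian_is hν hμ h0 h3
  rw [h, zero_mul] at hw
  simp at hw
  exact hν hw

lemma cpow_aC_eq {s : ℝ} (h0 : 0 < s) :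
    (s:ℂ)^(aC ν) = (Real.exp (Real.log s / 2) : ℝ) *
      Complex.exp (((ν * Real.log s : ℝ)) * I) := by
  rw [Complex.cpow_def_of_ne_zero (ofReal_ne_zero' h0), ← Complex.ofReal_log h0.le,
    Complex.ofReal_exp, ← Complex.exp_add]
  congr 1
  unfold aC
  push_cast
  ring

lemma g_decomp (hν : ν ≠ 0) {s : ℝ} (h0 : 0 < s) :
    (psip μ ν s * conj (psip μ ν (1+s))).im
      = Real.exp (Real.log s / 2) *
        (Complex.exp (((ν * Real.log s : ℝ)) * I) * (F μ ν s * conj (psip μ ν (1+s)))).im := by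
  conv_lhs => rw [psip, cpow_aC_eq h0]
  rw [show (Real.exp (Real.log s / 2) : ℂ) * Complex.exp (((ν * Real.log s : ℝ)) * I)
        * F μ ν s * conj (psip μ ν (1+s))
      = (Real.exp (Real.log s / 2) : ℂ) * (Complex.exp (((ν * Real.log s : ℝ)) * I)
        * (F μ ν s * conj (psip μ ν (1+s)))) by ring]
  rw [Complex.im_ofReal_mul]

lemma mem_ball3' {t : ℝ} (h0 : 0 ≤ t) (h3 : t < 3) : ((t:ℂ)) ∈ Metric.ball (0:ℂ) 3 := by
  rw [Metric.mem_ball, dist_zero_right, Complex.norm_real, Real.norm_of_nonneg h0]; exact h3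

lemma exists_gzero (hν0 : 0 < ν) {μr : ℝ} (hμ : μ = ((μr:ℝ):ℂ)) {ε : ℝ}
    (hε : 0 < ε) :
    ∃ s : ℝ, 0 < s ∧ s < ε ∧ (psip μ ν s * conj (psip μ ν (1+s))).im = 0 := by
  have hν : ν ≠ 0 := hν0.ne'
  set h : ℝ → ℂ := fun s => F μ ν s * conj (psip μ ν (1+s)) with hhdef
  have hw1 : psip μ ν 1 ≠ 0 := psip_ne_zero hν hμ one_pos (by norm_num)
  set w0 : ℂ := F μ ν ((0:ℝ):ℂ) * conj (psip μ ν (1+0)) with hw0def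
  have hw0 : w0 ≠ 0 := by
    rw [hw0def, show ((0:ℝ):ℂ) = (0:ℂ) by norm_num, F_zero]
    simpa using hw1
  set r0 : ℝ := ‖w0‖ with hr0def
  have hr0 : 0 < r0 := by simpa [hr0def] using hw0
  -- continuity of h at points of [0, 1/2]
  have hconth : ∀ s : ℝ, 0 ≤ s → s ≤ 1 → ContinuousAt h s := by
    intro s hs0 hs1
    have cF : ContinuousAt (fun x : ℝ => F μ ν (x:ℂ)) s :=
      ((hasDerivAt_F hν (mem_ball3' hs0 (by linarith))).comp_ofReal).continuousAt
    have cP : ContinuousAt (fun x : ℝ => psip μ ν (1+x)) s := by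
      have h1 : ContinuousAt (psip μ ν) (1+s) :=
        (hasDerivAt_psip hν (by linarith) (by linarith)).continuousAt
      exact h1.comp ((continuous_const.add continuous_id).continuousAt)
    exact cF.mul (Complex.continuous_conj.continuousAt.comp cP)
  have hcont0 : ContinuousAt h 0 := hconth 0 le_rfl (by norm_num)
  obtain ⟨δ', hδ'pos, hδ'⟩ := Metric.continuousAt_iff.mp hcont0 (r0/2) (by positivity)
  set δ : ℝ := min (min δ' ε) (1/2) with hδdef
  have hδpos : 0 < δ := by
    apply lt_min (lt_min hδ'pos hε) (by norm_num)
  have hδle : ∀ s : ℝ, 0 < s → s < δ → ‖h s - w0‖ < r0 / 2 := by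
    intro s hs hsδ
    have : dist s 0 < δ' := by
      rw [Real.dist_eq, sub_zero, abs_of_pos hs]
      exact lt_of_lt_of_le hsδ (le_trans (min_le_left _ _) (min_le_left _ _))
    have := hδ' this
    rwa [dist_eq_norm] at this
  -- choose the angles
  set φ : ℝ := Complex.arg w0 with hφdef
  set T : ℝ := ν * Real.log δ with hTdef
  set k : ℕ := ⌈(Real.pi/2 - φ - T)/(2*Real.pi)⌉₊ with hkdef
  have hπ : (0:ℝ) < Real.pi := Real.pi_pos
  have hkge : (Real.pi/2 - φ - T)/(2*Real.pi) ≤ (k:ℝ) := Nat.le_ceil _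
  have hθp : Real.pi/2 - φ - 2*Real.pi*((k:ℝ)+1) < T := by
    have h1 : Real.pi/2 - φ - T ≤ 2*Real.pi*(k:ℝ) := by
      rw [div_le_iff₀ (by positivity)] at hkge
      linarith [hkge]
    nlinarith
  set θp : ℝ := Real.pi/2 - φ - 2*Real.pi*((k:ℝ)+1) with hθpdef
  set θm : ℝ := -(Real.pi/2) - φ - 2*Real.pi*((k:ℝ)+1) with hθmdef
  have hθm : θm < T := by rw [hθmdef]; rw [hθpdef] at hθp; linarith
  set sp : ℝ := Real.exp (θp / ν) with hspdef
  set sm : ℝ := Real.exp (θm / ν) with hsmdef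
  have hsp0 : 0 < sp := Real.exp_pos _
  have hsm0 : 0 < sm := Real.exp_pos _
  have hspδ : sp < δ := by
    rw [hspdef, show δ = Real.exp (Real.log δ) from (Real.exp_log hδpos).symm]
    apply Real.exp_lt_exp.mpr
    rw [div_lt_iff₀ hν0]
    rw [hTdef] at hθp
    linarith [hθp]
  have hsmδ : sm < δ := by
    rw [hsmdef, show δ = Real.exp (Real.log δ) from (Real.exp_log hδpos).symm]
    apply Real.exp_lt_exp.mpr
    rw [div_lt_iff₀ hν0]
    rw [hTdef] at hθm
    linarith [hθm]
  have hsmsp : sm ≤ sp := by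
    apply Real.exp_le_exp.mpr
    apply (div_le_div_iff_of_pos_right hν0).mpr
    rw [hθmdef, hθpdef]
    linarith [hπ]
  set Gf : ℝ → ℝ := fun s => (Complex.exp (((ν * Real.log s : ℝ)) * I) * h s).im with hGdef
  have heval : ∀ s θ : ℝ, 0 < s → s < δ → ν * Real.log s = θ →
      |Gf s - r0 * Real.sin (θ + φ)| < r0/2 := by
    intro s hsθ hs hsδ hθ
    have hsplit : Gf s = r0 * Real.sin (hsθ + φ) + (Complex.exp ((hsθ:ℝ) * I) * (h s - w0)).im := by
      rw [hGdef]
      simp only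
      rw [hθ]
      have e0 : (Complex.exp ((hsθ:ℝ) * I) * w0).im = r0 * Real.sin (hsθ + φ) := by
        conv_lhs => rw [← Complex.norm_mul_exp_arg_mul_I w0]
        rw [show Complex.exp ((hsθ:ℝ) * I) * ((‖w0‖ : ℂ) * Complex.exp ((Complex.arg w0 : ℝ) * I))
            = (‖w0‖ : ℂ) * (Complex.exp ((hsθ:ℝ) * I) * Complex.exp ((Complex.arg w0 : ℝ) * I)) by ring,
          ← Complex.exp_add, Complex.im_ofReal_mul,
          show ((hsθ:ℝ) : ℂ) * I + ((Complex.arg w0 : ℝ) : ℂ) * I = ((hsθ + Complex.arg w0 : ℝ) : ℂ) * I by push_cast; ring,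
          Complex.exp_ofReal_mul_I_im]
      rw [show Complex.exp ((hsθ:ℝ) * I) * h s
          = Complex.exp ((hsθ:ℝ) * I) * w0 + Complex.exp ((hsθ:ℝ) * I) * (h s - w0) by ring,
        Complex.add_im, e0]
    rw [hsplit, add_sub_cancel_left]
    calc |(Complex.exp ((hsθ:ℝ) * I) * (h s - w0)).im|
        ≤ ‖Complex.exp ((hsθ:ℝ) * I) * (h s - w0)‖ := Complex.abs_im_le_norm _
      _ = ‖h s - w0‖ := by rw [norm_mul, Complex.norm_exp_ofReal_mul_I, one_mul]
      _ < r0/2 := hδle s hs hsδ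
  have hlogp : ν * Real.log sp = θp := by
    rw [hspdef, Real.log_exp, mul_div_cancel₀ _ hν]
  have hlogm : ν * Real.log sm = θm := by
    rw [hsmdef, Real.log_exp, mul_div_cancel₀ _ hν]
  have hsinp : Real.sin (θp + φ) = 1 := by
    rw [show θp + φ = Real.pi/2 + ((-((k:ℤ)+1) : ℤ) : ℝ) * (2*Real.pi) by rw [hθpdef]; push_cast; ring,
      Real.sin_add_int_mul_two_pi, Real.sin_pi_div_two]
  have hsinm : Real.sin (θm + φ) = -1 := by
    rw [show θm + φ = -(Real.pi/2) + ((-((k:ℤ)+1) : ℤ) : ℝ) * (2*Real.pi) by rw [hθmdef]; push_cast; ring,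
      Real.sin_add_int_mul_two_pi, Real.sin_neg, Real.sin_pi_div_two]
  have hGp : 0 < Gf sp := by
    have := heval sp θp hsp0 hspδ hlogp
    rw [hsinp] at this
    have := abs_lt.mp this
    linarith [this.1]
  have hGm : Gf sm < 0 := by
    have := heval sm θm hsm0 hsmδ hlogm
    rw [hsinm] at this
    have := abs_lt.mp this
    linarith [this.2]
  have hδhalf : δ ≤ 1/2 := min_le_right _ _
  have hcontG : ContinuousOn Gf (Set.Icc sm sp) := by
    intro x hx
    have hx0 : 0 < x := lt_of_lt_of_le hsm0 hx.1
    have hx1 : x ≤ 1 := by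
      have : x ≤ sp := hx.2
      linarith [hspδ, hδhalf]
    apply ContinuousAt.continuousWithinAt
    apply Complex.continuous_im.continuousAt.comp
    apply ContinuousAt.mul
    · exact Complex.continuous_exp.continuousAt.comp
        (((Complex.continuous_ofReal.continuousAt).comp
          ((continuousAt_const.mul (Real.continuousAt_log hx0.ne')))).mul continuousAt_const)
    · exact hconth x hx0.le hx1
  have hmem : (0:ℝ) ∈ Set.Icc (Gf sm) (Gf sp) := ⟨hGm.le, hGp.le⟩
  obtain ⟨s0, hs0mem, hGs0⟩ := intermediate_value_Icc hsmsp hcontG hmem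
  refine ⟨s0, lt_of_lt_of_le hsm0 hs0mem.1, ?_, ?_⟩
  · have : s0 ≤ sp := hs0mem.2
    have hδε : δ ≤ ε := le_trans (min_le_left _ _) (min_le_right _ _)
    linarith [hspδ]
  · rw [g_decomp hν (lt_of_lt_of_le hsm0 hs0mem.1)]
    rw [hGdef] at hGs0
    simp only at hGs0
    rw [hhdef] at hGs0
    simp only at hGs0
    rw [hGs0, mul_zero]


lemma eigen_package (hν0 : 0 < ν) {μr βr : ℝ} (hμ : μ = ((μr:ℝ):ℂ)) (hβ : βr^2 = ν^2 + 1/4)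
    {c : ℝ} (hc1 : -1 < c) (hc0 : c < 0)
    (hzero : (psip μ ν (-c) * conj (psip μ ν (1 + -c))).im = 0) :
    ∃ ψ ψ' ψ'' : ℝ → ℂ,
        ContinuousOn ψ (Set.Icc 0 1) ∧ ContinuousOn ψ' (Set.Icc 0 1) ∧
        ContinuousOn ψ'' (Set.Icc 0 1) ∧
        (∀ y ∈ Set.Ioo (0 : ℝ) 1, HasDerivAt ψ (ψ' y) y) ∧
        (∀ y ∈ Set.Ioo (0 : ℝ) 1, HasDerivAt ψ' (ψ'' y) y) ∧
        ψ 0 = 0 ∧ ψ 1 = 0 ∧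
        (∀ y ∈ Set.Ioo (0 : ℝ) 1,
          ψ'' y - ((μr:ℝ):ℂ) * ψ y + ((βr:ℝ):ℂ)^2 * ψ y / ((y:ℂ) - ((c:ℝ):ℂ))^2 = 0) ∧
        ∃ y ∈ Set.Icc (0 : ℝ) 1, ψ y ≠ 0 := by
  have hν : ν ≠ 0 := hν0.ne'
  set α : ℂ := psip μ ν (-c) with hαdef
  set ψ : ℝ → ℂ := fun y => conj α * psip μ ν (y - c) - α * conj (psip μ ν (y - c)) with hψdef
  set ψ' : ℝ → ℂ := fun y => conj α * dpsip μ ν (y - c) - α * conj (dpsip μ ν (y - c)) with hψ'def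
  set ψ'' : ℝ → ℂ := fun y => ((μr - (ν^2+1/4)/(y - c)^2 : ℝ):ℂ) * ψ y with hψ''def
  have hpos : ∀ y : ℝ, 0 ≤ y → 0 < y - c := fun y hy => by linarith
  have hlt3 : ∀ y : ℝ, y ≤ 1 → y - c < 3 := fun y hy => by linarith
  have hcomp : ∀ y : ℝ, 0 ≤ y → y ≤ 1 →
      HasDerivAt (fun x : ℝ => psip μ ν (x - c)) (dpsip μ ν (y - c)) y := by
    intro y hy0 hy1
    have hp : HasDerivAt (psip μ ν) (dpsip μ ν (y - c)) (y - c) :=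
      hasDerivAt_psip hν (hpos y hy0) (hlt3 y hy1)
    have hshift : HasDerivAt (fun x : ℝ => x - c) 1 y := (hasDerivAt_id y).sub_const c
    have := HasDerivAt.scomp y hp hshift
    simpa [Function.comp_def] using this
  have hcompd : ∀ y : ℝ, 0 ≤ y → y ≤ 1 →
      HasDerivAt (fun x : ℝ => dpsip μ ν (x - c))
        (((μr - (ν^2+1/4)/(y - c)^2 : ℝ):ℂ) * psip μ ν (y - c)) y := by
    intro y hy0 hy1
    have hp := hasDerivAt_dpsip hν (hpos y hy0) (hlt3 y hy1) hμ
    have hshift : HasDerivAt (fun x : ℝ => x - c) 1 y := (hasDerivAt_id y).sub_const c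
    have := HasDerivAt.scomp y hp hshift
    simpa [Function.comp_def] using this
  have hDψ : ∀ y : ℝ, 0 ≤ y → y ≤ 1 → HasDerivAt ψ (ψ' y) y := by
    intro y hy0 hy1
    exact ((hcomp y hy0 hy1).const_mul (conj α)).sub
      ((hasDerivAt_conj (hcomp y hy0 hy1)).const_mul α)
  have hDψ' : ∀ y : ℝ, 0 ≤ y → y ≤ 1 → HasDerivAt ψ' (ψ'' y) y := by
    intro y hy0 hy1
    have key := ((hcompd y hy0 hy1).const_mul (conj α)).sub
      ((hasDerivAt_conj (hcompd y hy0 hy1)).const_mul α)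
    refine key.congr_deriv ?_
    rw [hψ''def, hψdef]
    simp only
    rw [map_mul, Complex.conj_ofReal]
    ring
  have hψ0 : ψ 0 = 0 := by rw [hψdef]; simp only; rw [zero_sub]; ring
  have hψ1 : ψ 1 = 0 := by
    rw [hψdef]
    simp only
    have h1c : (1:ℝ) + -c = 1 - c := by ring
    rw [h1c] at hzero
    have hconj : conj (α * conj (psip μ ν (1 - c))) = α * conj (psip μ ν (1 - c)) :=
      Complex.conj_eq_iff_im.mpr hzero
    rw [map_mul, Complex.conj_conj] at hconj
    rw [← hconj]
    ring
  refine ⟨ψ, ψ', ψ'', ?_, ?_, ?_, ?_, ?_, hψ0, hψ1, ?_, ?_⟩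
  · exact fun y hy => (hDψ y hy.1 hy.2).continuousAt.continuousWithinAt
  · exact fun y hy => (hDψ' y hy.1 hy.2).continuousAt.continuousWithinAt
  · intro y hy
    apply ContinuousWithinAt.mul ?_ ((hDψ y hy.1 hy.2).continuousAt.continuousWithinAt)
    apply ContinuousAt.continuousWithinAt
    apply Complex.continuous_ofReal.continuousAt.comp
    exact continuousAt_const.sub (continuousAt_const.div
      ((continuousAt_id.sub continuousAt_const).pow 2)
      (pow_ne_zero 2 (hpos y hy.1).ne'))
  · exact fun y hy => hDψ y hy.1.le hy.2.le
  · exact fun y hy => hDψ' y hy.1.le hy.2.le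
  · intro y hy
    rw [hψ''def]
    simp only
    have hyc : ((y:ℂ) - (c:ℂ)) = (((y - c : ℝ)):ℂ) := by push_cast; ring
    have hne : (((y - c : ℝ)):ℂ) ≠ 0 := ofReal_ne_zero' (hpos y hy.1.le)
    have hβc : ((βr:ℝ):ℂ)^2 = ((ν^2 + 1/4 : ℝ):ℂ) := by
      rw [show ((ν^2 + 1/4 : ℝ)) = βr^2 from hβ.symm]
      push_cast
      ring
    rw [hyc, hβc]
    have hexp : ((μr - (ν^2+1/4)/(y - c)^2 : ℝ):ℂ)
        = (μr:ℂ) - ((ν^2 + 1/4 : ℝ):ℂ)/(((y - c : ℝ)):ℂ)^2 := by push_cast; ring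
    rw [hexp]
    field_simp
    ring
  · -- nontriviality
    by_contra hcon
    push_neg at hcon
    have hnc0 : (0:ℝ) < -c := by linarith
    have hnc3 : -c < 3 := by linarith
    have hw : (psip μ ν (-c) * conj (dpsip μ ν (-c))).im = -ν := wronskian_is hν hμ hnc0 hnc3
    have hψ'0 : ψ' 0 = 2 * (ν:ℂ) * I := by
      rw [hψ'def]
      simp only
      rw [zero_sub]
      set v : ℂ := α * conj (dpsip μ ν (-c)) with hvdef
      have hvim : v.im = -ν := by rw [hvdef, hαdef]; exact hw
      have hconjv : conj v = conj α * dpsip μ ν (-c) := by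
        rw [hvdef, map_mul, Complex.conj_conj]
      rw [← hconjv]
      have h2 : conj v - v = -((2 * v.im : ℝ) * I) := by
        rw [← Complex.sub_conj]; ring
      rw [h2, hvim]
      push_cast
      ring
    have hD0 : HasDerivAt ψ (ψ' 0) 0 := hDψ 0 le_rfl zero_le_one
    have hslope := hasDerivAt_iff_tendsto_slope.mp hD0
    have hmono : nhdsWithin (0:ℝ) (Set.Ioo 0 1) ≤ nhdsWithin (0:ℝ) {(0:ℝ)}ᶜ :=
      nhdsWithin_mono 0 (fun x hx => hx.1.ne')
    have h2 : Tendsto (slope ψ 0) (nhdsWithin (0:ℝ) (Set.Ioo 0 1)) (nhds (ψ' 0)) :=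
      hslope.mono_left hmono
    have h3 : Tendsto (slope ψ 0) (nhdsWithin (0:ℝ) (Set.Ioo 0 1)) (nhds 0) := by
      apply Tendsto.congr' _ tendsto_const_nhds
      filter_upwards [self_mem_nhdsWithin] with y hy
      have e1 : ψ y = 0 := hcon y ⟨hy.1.le, hy.2.le⟩
      have e2 : ψ 0 = 0 := hcon 0 ⟨le_rfl, zero_le_one⟩
      simp [slope, e1, e2]
    haveI : (nhdsWithin (0:ℝ) (Set.Ioo 0 1)).NeBot := by
      apply mem_closure_iff_nhdsWithin_neBot.mp
      rw [closure_Ioo (zero_ne_one)]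
      exact ⟨le_rfl, zero_le_one⟩
    have hcontra : ψ' 0 = 0 := tendsto_nhds_unique h2 h3
    rw [hψ'0] at hcontra
    have := congrArg Complex.im hcontra
    simp at this
    exact hν this

end TG14

open TG14 ComplexConjugate

/-- For `β² > 1/4` and `m ≥ 1`, there are infinitely many negative real eigenvalues of the
Taylor–Goldstein Dirichlet problem accumulating at `0`: there is an injective sequence
`c_k < 0` with `c_k → 0` such that, for each `k`, the problem
`ψ'' - m²ψ + β²ψ/(y-c_k)² = 0` on `(0,1)`, `ψ(0) = ψ(1) = 0`, has a nontrivial `C²` solution. -/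
theorem stmt14 (β : ℝ) (hβ0 : 0 < β) (hβ : 1 / 4 < β ^ 2) (m : ℕ) (hm : 1 ≤ m) :
    ∃ c : ℕ → ℝ, (∀ k, c k < 0) ∧ Function.Injective c ∧ Tendsto c atTop (nhds 0) ∧
      ∀ k, ∃ ψ ψ' ψ'' : ℝ → ℂ,
        ContinuousOn ψ (Set.Icc 0 1) ∧
        ContinuousOn ψ' (Set.Icc 0 1) ∧
        ContinuousOn ψ'' (Set.Icc 0 1) ∧
        (∀ y ∈ Set.Ioo (0 : ℝ) 1, HasDerivAt ψ (ψ' y) y) ∧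
        (∀ y ∈ Set.Ioo (0 : ℝ) 1, HasDerivAt ψ' (ψ'' y) y) ∧
        ψ 0 = 0 ∧ ψ 1 = 0 ∧
        (∀ y ∈ Set.Ioo (0 : ℝ) 1,
          ψ'' y - (m : ℂ) ^ 2 * ψ y +
            (β : ℂ) ^ 2 * ψ y / ((y : ℂ) - ((c k : ℝ) : ℂ)) ^ 2 = 0) ∧
        ∃ y ∈ Set.Icc (0 : ℝ) 1, ψ y ≠ 0 := by
  set ν : ℝ := Real.sqrt (β^2 - 1/4) with hνdef
  have hν2 : ν^2 = β^2 - 1/4 := Real.sq_sqrt (by linarith)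
  have hν0 : 0 < ν := Real.sqrt_pos.mpr (by linarith)
  set μr : ℝ := ((m:ℝ))^2 with hμrdef
  set μ : ℂ := ((μr:ℝ):ℂ) with hμdef
  have hμ : μ = ((μr:ℝ):ℂ) := rfl
  have hβν : β^2 = ν^2 + 1/4 := by rw [hν2]; ring
  set Z : ℝ → Prop := fun x => (psip μ ν (-x) * conj (psip μ ν (1 + -x))).im = 0 with hZdef
  have key : ∀ ε : ℝ, 0 < ε → ∃ x : ℝ, -ε < x ∧ -1 < x ∧ x < 0 ∧ Z x := by
    intro ε hε
    obtain ⟨s, hs0, hsε, him⟩ := exists_gzero hν0 hμ (ε := min ε 1) (lt_min hε one_pos)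
    refine ⟨-s, ?_, ?_, by linarith, ?_⟩
    · have : s < ε := lt_of_lt_of_le hsε (min_le_left _ _)
      linarith
    · have : s < 1 := lt_of_lt_of_le hsε (min_le_right _ _)
      linarith
    · rw [hZdef]
      simpa using him
  set S := {x : ℝ // -1 < x ∧ x < 0 ∧ Z x} with hSdef
  have key' : ∀ (n : ℕ) (p : S), ∃ q : S, p.1 < q.1 ∧ -(1/((n:ℝ)+2)) < q.1 := by
    intro n p
    have hp0 : p.1 < 0 := p.2.2.1
    have hεpos : 0 < min (-p.1) (1/((n:ℝ)+2)) := lt_min (by linarith) (by positivity)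
    obtain ⟨x, hx1, hx2, hx3, hx4⟩ := key _ hεpos
    refine ⟨⟨x, hx2, hx3, hx4⟩, ?_, ?_⟩
    · have := min_le_left (-p.1) (1/((n:ℝ)+2))
      simp only
      linarith
    · have := min_le_right (-p.1) (1/((n:ℝ)+2))
      simp only
      linarith
  obtain ⟨x0, hx01, hx02, hx03, hx04⟩ := key 1 one_pos
  set base : S := ⟨x0, hx02, hx03, hx04⟩ with hbasedef
  set f : ℕ → S := fun n => Nat.rec base (fun k p => (key' k p).choose) n with hfdef
  have hfsucc : ∀ n : ℕ, f (n+1) = (key' n (f n)).choose := fun n => rfl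
  have hmono : ∀ n : ℕ, (f n).1 < (f (n+1)).1 := by
    intro n
    rw [hfsucc n]
    exact (key' n (f n)).choose_spec.1
  have hbound : ∀ n : ℕ, -(1/((n:ℝ)+2)) < (f (n+1)).1 := by
    intro n
    rw [hfsucc n]
    exact (key' n (f n)).choose_spec.2
  set c : ℕ → ℝ := fun k => (f k).1 with hcdef
  have hcneg : ∀ k : ℕ, c k < 0 := fun k => (f k).2.2.1
  have hcsm : StrictMono c := strictMono_nat_of_lt_succ hmono
  have hlow : ∀ k : ℕ, -(1/((k:ℝ)+1)) ≤ c k := by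
    intro k
    cases k with
    | zero =>
      have : (-1:ℝ) < c 0 := (f 0).2.1
      norm_num
      linarith
    | succ n =>
      have := hbound n
      have hcast : ((n+1:ℕ):ℝ) + 1 = (n:ℝ) + 2 := by push_cast; ring
      rw [hcast]
      exact this.le
  have htend : Tendsto c atTop (nhds 0) := by
    have hl : Tendsto (fun k : ℕ => -(1/((k:ℝ)+1))) atTop (nhds 0) := by
      have := tendsto_one_div_add_atTop_nhds_zero_nat (𝕜 := ℝ)
      have h2 := this.neg
      rwa [neg_zero] at h2
    have hu : Tendsto (fun _ : ℕ => (0:ℝ)) atTop (nhds 0) := tendsto_const_nhds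
    exact tendsto_of_tendsto_of_tendsto_of_le_of_le hl hu hlow (fun k => (hcneg k).le)
  refine ⟨c, hcneg, hcsm.injective, htend, ?_⟩
  intro k
  have hZk : (psip μ ν (-(c k)) * conj (psip μ ν (1 + -(c k)))).im = 0 := (f k).2.2.2
  obtain ⟨ψ, ψ', ψ'', hc1, hc2, hc3, hd1, hd2, he0, he1, hode, hnt⟩ :=
    eigen_package hν0 hμ (βr := β) hβν ((f k).2.1) (hcneg k) hZk
  refine ⟨ψ, ψ', ψ'', hc1, hc2, hc3, hd1, hd2, he0, he1, ?_, hnt⟩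
  intro y hy
  have hres := hode y hy
  rw [show ((m:ℂ))^2 = ((μr:ℝ):ℂ) by rw [hμrdef]; push_cast; ring]
  exact hres
end
end
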